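/- arXiv:1307.3902 — 6 statements merged into one kernel-verified Lean document; each statement's English description precedes it below -/
import Mathlib

section
/- For every nonnegative integer k, (1 + 5^{4k}) U_{4k} ≡ 6250k^6 + 50625k^5 + 51250k^4 + 59875k^3 + 72600k^2 + 7545k + 2 (mod 5^7) and (1 + 5^{4k+2}) U_{4k+2} ≡ 59375k^6 + 40625k^5 + 10625k^4 + 48875k^3 + 5575k^2 + 37500k - 52 (mod 5^7). -/
open Finset Nat

def gl : List ℤ := [1073741823, -1073741793, 1073741358, -1073737298, 1073709893, -1073567387, 1072973612, -1070937812, 1065084887, -1050777737, 1020732722, -966105422, 879612197, -759852347, 614429672, -459312152, 313889477, -194129627, 107636402, -53009102, 22964087, -8656937, 2804012, -768212, 174437, -31931, 4526, -466, 31, -1]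
def cl : List ℤ := [56827, 35268, 74667, 71148, 57882, 21162, 40113, 73462, 39463, 57762, 74003, 69947, 27653, 17497, 5803, 5802, 17498, 27652, 69948, 74002, 57763, 39462, 73463, 40112, 21163, 57881, 71149, 74666, 35269, 56826]
def gg (i : ℕ) : ℤ := gl.getD i 0
def cc (i : ℕ) : ℤ := cl.getD i 0
def wl1 : List ℤ := [0, 51, 480, -1, 5712, 13107, 10439, 15601, -1, 13556, 12829, 1642, 15457, -1, 11885, 4866, 12335, 9198, -1, 13299, 3543, 11693, 14599, -1, 7773, 560, 8766, 11185, -1, 9532]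
def wl2 : List ℤ := [3, -1, 819, 2928, 7683, 1079, -1, 9093, 13270, 831, 6590, -1, 10777, 2652, 15244, 7186, -1, 15596, 13774, 1597, 2142, -1, 10650, 4211, 12940, 14983, -1, 7289, 2663, 1573]
def ql1 : List ℤ := [1, 16, 49, 100, 169, 256, 361, 484, 625, 784, 961, 1156, 1369, 1600, 1849, 2116, 2401, 2704, 3025, 3364, 3721, 4096, 4489, 4900, 5329, 5776, 6241, 6724, 7225, 7744]
def ql2 : List ℤ := [4, 25, 64, 121, 196, 289, 400, 529, 676, 841, 1024, 1225, 1444, 1681, 1936, 2209, 2500, 2809, 3136, 3481, 3844, 4225, 4624, 5041, 5476, 5929, 6400, 6889, 7396, 7921]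
def Fp (w x : ℤ) : ℤ := 1 + 5*w*x + 25*39063*w^2*(x*(x-1))
      + 125*13021*w^3*(x*(x-1)*(x-2))
      + 625*61849*w^4*(x*(x-1)*(x-2)*(x-3))
      + 625*61849*w^5*(x*(x-1)*(x-2)*(x-3)*(x-4))
      + 3125*23329*w^6*(x*(x-1)*(x-2)*(x-3)*(x-4)*(x-5))
def e1 (i : ℕ) (x : ℤ) : ℤ := if wl1.getD i 0 = -1 then 0 else Fp (wl1.getD i 0) x
def e2 (i : ℕ) (x : ℤ) : ℤ := if wl2.getD i 0 = -1 then 0 else Fp (wl2.getD i 0) x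
def s1 (i : ℕ) (x : ℤ) : ℤ := if wl1.getD i 0 = -1 then 0 else (ql1.getD i 0) * Fp (wl1.getD i 0) x
def s2 (i : ℕ) (x : ℤ) : ℤ := if wl2.getD i 0 = -1 then 0 else (ql2.getD i 0) * Fp (wl2.getD i 0) x

noncomputable def Vz (n : ℕ) : ZMod 78125 :=
  ∑ i ∈ range 30, (cc i : ZMod 78125) * ((3*(i : ZMod 78125)+1)^n + (3*(i : ZMod 78125)+2)^n)

lemma castc (j k : ℕ) : (k.choose j : ℤ) * (j ! : ℤ) = ∏ i ∈ range j, ((k:ℤ) - i) := by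
  rcases le_or_gt j k with h | h
  · have hd : k.descFactorial j = k.choose j * j ! := (Nat.descFactorial_eq_factorial_mul_choose k j).trans (mul_comm _ _)
    have hp : k.descFactorial j = ∏ i ∈ range j, (k - i) := Nat.descFactorial_eq_prod_range k j
    have : ((k.descFactorial j : ℕ) : ℤ) = ∏ i ∈ range j, ((k:ℤ) - i) := by
      rw [hp]
      push_cast
      refine Finset.prod_congr rfl fun i hi => ?_
      have : i ≤ k := le_trans (le_of_lt (mem_range.mp hi)) h
      push_cast [this]
      ring
    rw [← this, hd]
    push_cast
    ring
  · rw [Nat.choose_eq_zero_of_lt h]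
    have : (k:ℤ) - k = 0 := by ring
    rw [Finset.prod_eq_zero (mem_range.mpr h) this]
    ring

lemma EB {R : Type*} [CommRing R] (r : R) (n : ℕ) :
    (r+1)^n + (r-1)^n = 2 * ∑ t ∈ range (n/2+1), (n.choose (2*t) : R) * r^(n-2*t) := by
  have h1 : (r+1)^n = ∑ j ∈ range (n+1), r^j * (n.choose j : R) := by
    simpa using add_pow r 1 n
  have h2 : (r-1)^n = ∑ j ∈ range (n+1), r^j * (-1)^(n-j) * (n.choose j : R) := by
    have := add_pow r (-1) n
    rw [show r - 1 = r + (-1) by ring]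
    simpa using this
  rw [h1, h2, ← Finset.sum_add_distrib]
  have key : ∀ j ∈ range (n+1), r^j * (n.choose j : R) + r^j * (-1)^(n-j) * (n.choose j : R)
      = (if Even (n-j) then 2 * (n.choose j : R) * r^j else 0) := by
    intro j hj
    rcases Nat.even_or_odd (n-j) with he | ho
    · rw [if_pos he, he.neg_one_pow]; ring
    · rw [if_neg (Nat.not_even_iff_odd.mpr ho), Odd.neg_one_pow ho]; ring
  rw [Finset.sum_congr rfl key, ← Finset.sum_filter, Finset.mul_sum]
  refine Finset.sum_nbij' (i := fun j => (n-j)/2) (j := fun t => n - 2*t) ?_ ?_ ?_ ?_ ?_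
  · intro j hj
    simp only [mem_filter, mem_range] at hj ⊢
    obtain ⟨hj1, c, hc⟩ := hj
    omega
  · intro t ht
    simp only [mem_range] at ht
    simp only [mem_filter, mem_range]
    exact ⟨by omega, ⟨t, by omega⟩⟩
  · intro j hj
    simp only [mem_filter, mem_range] at hj
    obtain ⟨hj1, c, hc⟩ := hj
    omega
  · intro t ht
    simp only [mem_range] at ht
    omega
  · intro j hj
    simp only [mem_filter, mem_range] at hj
    obtain ⟨hj1, c, hc⟩ := hj
    have h2j : 2 * ((n-j)/2) = n - j := by omega
    have hnj : n - (n - j) = j := by omega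
    rw [h2j, Nat.choose_symm (by omega), hnj]
    ring

lemma Tdvd : ∀ m : ℕ, ∀ a : ℤ, ∀ n : ℕ,
    ((m ! : ℕ) : ℤ) ∣ ∑ i ∈ range (m+1), (-1)^i * (m.choose i : ℤ) * (a + 3*i)^n := by
  intro m
  induction m with
  | zero => intro a n; simp
  | succ m ih =>
    intro a n
    induction n with
    | zero =>
      simp only [pow_zero, mul_one]
      have h := Int.alternating_sum_range_choose (n := m+1)
      rw [if_neg (Nat.succ_ne_zero m)] at h
      rw [show m+2 = (m+1)+1 from rfl, h]
      exact dvd_zero _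
    | succ n ihn =>
      have split : ∑ i ∈ range (m+2), (-1)^i * ((m+1).choose i : ℤ) * (a + 3*i)^(n+1)
          = a * (∑ i ∈ range (m+2), (-1)^i * ((m+1).choose i : ℤ) * (a + 3*i)^n)
            + ∑ i ∈ range (m+2), ((-1)^i * ((m+1).choose i : ℤ) * (3*i)) * (a + 3*i)^n := by
        rw [Finset.mul_sum, ← Finset.sum_add_distrib]
        refine Finset.sum_congr rfl fun i _ => ?_
        ring
      have reindex : ∑ i ∈ range (m+2), ((-1)^i * ((m+1).choose i : ℤ) * (3*i)) * (a + 3*i)^n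
          = -3 * ((m:ℤ)+1) * ∑ i ∈ range (m+1), (-1)^i * (m.choose i : ℤ) * ((a+3) + 3*i)^n := by
        rw [Finset.sum_range_succ' (fun i => ((-1:ℤ)^i * ((m+1).choose i : ℤ) * (3*(i:ℕ))) * (a + 3*(i:ℕ))^n) (m+1)]
        have h0 : (((-1:ℤ)^(0:ℕ) * ((m+1).choose 0 : ℤ) * (3*((0:ℕ):ℤ))) * (a + 3*((0:ℕ):ℤ))^n) = 0 := by
          simp
        rw [h0, add_zero, Finset.mul_sum]
        refine Finset.sum_congr rfl fun i _ => ?_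
        have key : ((m+1).choose (i+1) : ℤ) * ((i:ℤ)+1) = ((m:ℤ)+1) * (m.choose i : ℤ) := by
          have := Nat.add_one_mul_choose_eq m i
          have := congrArg (fun x : ℕ => (x : ℤ)) this
          push_cast at this
          linarith [this]
        push_cast
        linear_combination (-3) * (-1:ℤ)^i * ((a+3)+3*(i:ℤ))^n * key
      rcases ihn with ⟨s, hs⟩
      rcases ih (a+3) n with ⟨t, ht⟩
      refine ⟨a*s + -3*t, ?_⟩
      rw [split, reindex, hs, ht]
      push_cast [Nat.factorial_succ]
      ring

lemma ID (n : ℕ) : ∑ i ∈ range 30, gg i * (((3*i : ℤ))^n + ((3*i+3 : ℤ))^n)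
    = 2^30 * (0:ℤ)^n - ∑ i ∈ range 31, (-1)^i * ((30).choose i : ℤ) * ((0:ℤ) + 3*i)^n := by
  simp only [Finset.sum_range_succ, Finset.sum_range_zero, gg, gl, List.getD, List.getElem?_cons_succ, List.getElem?_cons_zero, Option.getD]
  norm_num [Nat.choose]
  ring

lemma KEY (n : ℕ) (hn : 1 ≤ n) :
    ∑ i ∈ range 30, (cc i : ZMod 78125) * ((3*(i : ZMod 78125))^n + (3*(i : ZMod 78125)+3)^n) = 0 := by
  have h230 : ((2:ZMod 78125))^30 * (∑ i ∈ range 30, (cc i : ZMod 78125) * ((3*(i : ZMod 78125))^n + (3*(i : ZMod 78125)+3)^n))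
      = ((∑ i ∈ range 30, gg i * (((3*i : ℤ))^n + ((3*i+3 : ℤ))^n) : ℤ) : ZMod 78125) := by
    push_cast
    rw [Finset.mul_sum]
    refine Finset.sum_congr rfl fun i hi => ?_
    have hi30 : i < 30 := mem_range.mp hi
    have hcg : ((2:ZMod 78125))^30 * ((cc i : ℤ) : ZMod 78125) = ((gg i : ℤ) : ZMod 78125) := by
      interval_cases i <;> decide
    linear_combination ((3*(i:ZMod 78125))^n + (3*(i:ZMod 78125)+3)^n) * hcg
  have hdn : ((∑ i ∈ range 31, (-1)^i * ((30).choose i : ℤ) * ((0:ℤ) + 3*i)^n : ℤ) : ZMod 78125) = 0 := by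
    obtain ⟨t, ht⟩ := Tdvd 30 0 n
    rw [show (31:ℕ) = 30+1 from rfl, ht]
    push_cast
    rw [show ((30 ! : ℕ) : ZMod 78125) = 0 by decide]
    ring
  have hz : ((0:ℤ))^n = 0 := zero_pow (by omega)
  rw [ID n, hz] at h230
  push_cast at h230
  push_cast at hdn
  rw [hdn] at h230
  have hfin : (21299 : ZMod 78125) * (((2:ZMod 78125))^30 * (∑ i ∈ range 30, (cc i : ZMod 78125) * ((3*(i : ZMod 78125))^n + (3*(i : ZMod 78125)+3)^n)))
      = ∑ i ∈ range 30, (cc i : ZMod 78125) * ((3*(i : ZMod 78125))^n + (3*(i : ZMod 78125)+3)^n) := by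
    rw [← mul_assoc, show (21299 : ZMod 78125) * 2^30 = 1 by decide, one_mul]
  rw [← hfin, h230]
  ring

lemma Vstep (x : ZMod 78125) (n : ℕ) :
    -2 * ∑ t ∈ Icc 1 (n/2), (n.choose (2*t) : ZMod 78125) * x^(n-2*t)
      = 2*x^n - ((x+1)^n + (x-1)^n) := by
  have hins : range (n/2+1) = insert 0 (Icc 1 (n/2)) := by
    ext j; simp only [mem_range, mem_insert, mem_Icc]; omega
  have hEB := EB x n
  rw [hins, Finset.sum_insert (by simp)] at hEB
  simp only [Nat.mul_zero, Nat.choose_zero_right, Nat.sub_zero, Nat.cast_one, one_mul] at hEB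
  linear_combination hEB

lemma MAIN (U : ℕ → ℤ) (hU0 : U 0 = 1)
    (hU : ∀ n : ℕ, 1 ≤ n →
      U n = -2 * ∑ i ∈ Finset.Icc 1 (n / 2), (n.choose (2 * i) : ℤ) * U (n - 2 * i)) :
    ∀ n, ((U n : ℤ) : ZMod 78125) = Vz n := by
  intro n
  induction n using Nat.strong_induction_on with
  | _ n ih =>
    rcases Nat.eq_zero_or_pos n with rfl | hn
    · rw [hU0]
      show (1 : ZMod 78125) = Vz 0
      unfold Vz
      norm_num [Finset.sum_range_succ, cc, cl]
      decide
    · rw [hU n hn]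
      push_cast
      have hterm : ∀ t ∈ Finset.Icc 1 (n/2),
          ((n.choose (2*t) : ZMod 78125)) * ((U (n-2*t) : ℤ) : ZMod 78125)
            = (n.choose (2*t) : ZMod 78125) * Vz (n-2*t) := by
        intro t ht
        obtain ⟨h1, h2⟩ := Finset.mem_Icc.mp ht
        rw [ih (n-2*t) (by omega)]
      rw [Finset.sum_congr rfl hterm]
      have swap : ∑ t ∈ Icc 1 (n/2), (n.choose (2*t) : ZMod 78125) * Vz (n-2*t)
          = ∑ i ∈ range 30, (cc i : ZMod 78125) *
              (∑ t ∈ Icc 1 (n/2), (n.choose (2*t) : ZMod 78125) * ((3*(i : ZMod 78125)+1)^(n-2*t))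
               + ∑ t ∈ Icc 1 (n/2), (n.choose (2*t) : ZMod 78125) * ((3*(i : ZMod 78125)+2)^(n-2*t))) := by
        unfold Vz
        simp only [Finset.mul_sum]
        rw [Finset.sum_comm]
        refine Finset.sum_congr rfl fun i _ => ?_
        have hper : ∀ t ∈ Icc 1 (n/2), (n.choose (2*t) : ZMod 78125) * ((cc i : ZMod 78125) * ((3*(i : ZMod 78125)+1)^(n-2*t) + (3*(i : ZMod 78125)+2)^(n-2*t)))
            = (cc i : ZMod 78125) * ((n.choose (2*t) : ZMod 78125) * (3*(i : ZMod 78125)+1)^(n-2*t) + (n.choose (2*t) : ZMod 78125) * (3*(i : ZMod 78125)+2)^(n-2*t)) := by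
          intro t _
          ring
        rw [Finset.sum_congr rfl hper, ← Finset.mul_sum, Finset.sum_add_distrib]
      rw [swap, Finset.mul_sum]
      rw [← sub_eq_zero]
      unfold Vz
      rw [← Finset.sum_sub_distrib]
      have per : ∀ i ∈ range 30,
          (-2 : ZMod 78125)*((cc i : ZMod 78125) *
              (∑ t ∈ Icc 1 (n/2), (n.choose (2*t) : ZMod 78125) * ((3*(i : ZMod 78125)+1)^(n-2*t))
               + ∑ t ∈ Icc 1 (n/2), (n.choose (2*t) : ZMod 78125) * ((3*(i : ZMod 78125)+2)^(n-2*t))))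
            - (cc i : ZMod 78125) * ((3*(i : ZMod 78125)+1)^n + (3*(i : ZMod 78125)+2)^n)
          = -((cc i : ZMod 78125) * ((3*(i : ZMod 78125))^n + (3*(i : ZMod 78125)+3)^n)) := by
        intro i _
        have h1 := Vstep (3*(i : ZMod 78125)+1) n
        have h2 := Vstep (3*(i : ZMod 78125)+2) n
        linear_combination (cc i : ZMod 78125) * h1 + (cc i : ZMod 78125) * h2
      rw [Finset.sum_congr rfl per, Finset.sum_neg_distrib, KEY n hn, neg_zero]

lemma POW (w : ℤ) (k : ℕ) : (((1+5*w)^k : ℤ) : ZMod 78125) = ((Fp w (k:ℤ) : ℤ) : ZMod 78125) := by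
  simp only [Fp]
  have hb : ((1:ℤ)+5*w)^k = ∑ j ∈ range (k+1), (5*w)^j * 1^(k-j) * (k.choose j : ℤ) := by
    rw [add_comm]
    exact add_pow _ _ _
  rw [hb]
  push_cast
  have trunc : (∑ j ∈ range (k+1), (5*(w:ZMod 78125))^j * (k.choose j : ZMod 78125))
      = ∑ j ∈ range 7, (5*(w:ZMod 78125))^j * (k.choose j : ZMod 78125) := by
    rcases le_total (k+1) 7 with h | h
    · refine Finset.sum_subset (Finset.range_subset_range.mpr h) (fun j hj1 hj2 => ?_)
      have hkj : k < j := by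
        simp only [Finset.mem_range, not_lt] at hj2
        omega
      rw [Nat.choose_eq_zero_of_lt hkj, Nat.cast_zero, mul_zero]
    · refine (Finset.sum_subset (Finset.range_subset_range.mpr h) (fun j hj1 hj2 => ?_)).symm
      have h7 : 7 ≤ j := by simpa [Finset.mem_range, not_lt] using hj2
      have : (5*(w:ZMod 78125))^j = 0 := by
        rw [mul_pow, show j = 7 + (j-7) by omega, pow_add,
          show (5:ZMod 78125)^7 = 0 by decide, zero_mul, zero_mul]
      rw [this, zero_mul]
  simp only [one_pow, mul_one]
  rw [trunc]
  simp only [Finset.sum_range_succ, Finset.sum_range_zero]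
  have hQ : ∀ j : ℕ, ((k.choose j : ℕ) : ZMod 78125) * ((j ! : ℕ) : ZMod 78125)
      = ∏ i ∈ range j, ((k : ZMod 78125) - (i : ℕ)) := by
    intro j
    have h := congrArg (fun x : ℤ => ((x : ℤ) : ZMod 78125)) (castc j k)
    push_cast at h
    exact h
  have h2 := hQ 2; have h3 := hQ 3; have h4 := hQ 4; have h5 := hQ 5; have h6 := hQ 6
  simp only [Finset.prod_range_succ, Finset.prod_range_zero, one_mul] at h2 h3 h4 h5 h6
  norm_num [Nat.factorial] at h2 h3 h4 h5 h6
  have hc1 : ((k.choose 1 : ℕ) : ZMod 78125) = (k : ZMod 78125) := by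
    rw [Nat.choose_one_right]
  have hc0 : ((k.choose 0 : ℕ) : ZMod 78125) = 1 := by
    rw [Nat.choose_zero_right]; norm_num
  have e2 : (39063 : ZMod 78125) * 2 = 1 := by decide
  have e3 : (13021 : ZMod 78125) * 6 = 1 := by decide
  have e4 : (61849 : ZMod 78125) * 24 = 1 := by decide
  have e5 : (61849 : ZMod 78125) * 120 = 5 := by decide
  have e6 : (23329 : ZMod 78125) * 720 = 5 := by decide
  have hmod : (78125 : ZMod 78125) = 0 := by decide
  push_cast
  linear_combination (25*(w:ZMod 78125)^2*39063) * h2 + (125*(w:ZMod 78125)^3*13021) * h3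
    + (625*(w:ZMod 78125)^4*61849) * h4 + (625*(w:ZMod 78125)^5*61849) * h5
    + (3125*(w:ZMod 78125)^6*23329) * h6
    + (5*(w:ZMod 78125)) * hc1 + hc0
    + (25*(w:ZMod 78125)^2*((k:ZMod 78125)*((k:ZMod 78125)-1))) * e2
    + (125*(w:ZMod 78125)^3*((k:ZMod 78125)*((k:ZMod 78125)-1)*((k:ZMod 78125)-2))) * e3
    + (625*(w:ZMod 78125)^4*((k:ZMod 78125)*((k:ZMod 78125)-1)*((k:ZMod 78125)-2)*((k:ZMod 78125)-3))) * e4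
    + (625*(w:ZMod 78125)^5*((k:ZMod 78125)*((k:ZMod 78125)-1)*((k:ZMod 78125)-2)*((k:ZMod 78125)-3)*((k:ZMod 78125)-4))) * e5
    + (3125*(w:ZMod 78125)^6*((k:ZMod 78125)*((k:ZMod 78125)-1)*((k:ZMod 78125)-2)*((k:ZMod 78125)-3)*((k:ZMod 78125)-4)*((k:ZMod 78125)-5))) * e6
    + (-(25*(w:ZMod 78125)^2*((k.choose 2 : ℕ) : ZMod 78125)) + 25*(w:ZMod 78125)^2*(k:ZMod 78125) - 25*(w:ZMod 78125)^2*(k:ZMod 78125)^2 - 125*(w:ZMod 78125)^3*((k.choose 3 : ℕ) : ZMod 78125) - 250*(w:ZMod 78125)^3*(k:ZMod 78125) + 375*(w:ZMod 78125)^3*(k:ZMod 78125)^2 - 125*(w:ZMod 78125)^3*(k:ZMod 78125)^3 - 11875*(w:ZMod 78125)^4*((k.choose 4 : ℕ) : ZMod 78125) + 71250*(w:ZMod 78125)^4*(k:ZMod 78125) - 130625*(w:ZMod 78125)^4*(k:ZMod 78125)^2 + 71250*(w:ZMod 78125)^4*(k:ZMod 78125)^3 - 11875*(w:ZMod 78125)^4*(k:ZMod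 78125)^4 - 59375*(w:ZMod 78125)^5*((k.choose 5 : ℕ) : ZMod 78125) - 1425000*(w:ZMod 78125)^5*(k:ZMod 78125) + 2968750*(w:ZMod 78125)^5*(k:ZMod 78125)^2 - 2078125*(w:ZMod 78125)^5*(k:ZMod 78125)^3 + 593750*(w:ZMod 78125)^5*(k:ZMod 78125)^4 - 59375*(w:ZMod 78125)^5*(k:ZMod 78125)^5 - 671875*(w:ZMod 78125)^6*((k.choose 6 : ℕ) : ZMod 78125) + 80625000*(w:ZMod 78125)^6*(k:ZMod 78125) - 184093750*(w:ZMod 78125)^6*(k:ZMod 78125)^2 + 151171875*(w:ZMod 78125)^6*(k:ZMod 78125)^3 - 57109375*(w:ZMod 78125)^6*(k:ZMod 78125)^4 + 10078125*(w:ZMod 78125)^6*(k:ZMod 78125)^5 - 671875*(w:ZMod 78125)^6*(k:ZMod 78125)^6) * hmod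


lemma glueG (x : ZMod 78125) (w : ℤ) (hx : x^4 = ((1+5*w : ℤ) : ZMod 78125)) (k : ℕ) :
    x^(4*k) = ((Fp w (k:ℤ) : ℤ) : ZMod 78125) := by
  rw [pow_mul, hx, ← Int.cast_pow, POW]

lemma glueG2 (x : ZMod 78125) (w q : ℤ) (hx : x^4 = ((1+5*w : ℤ) : ZMod 78125))
    (hq : x^2 = ((q : ℤ) : ZMod 78125)) (k : ℕ) :
    x^(4*k+2) = ((q * Fp w (k:ℤ) : ℤ) : ZMod 78125) := by
  rw [pow_add, glueG x w hx k, hq]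
  push_cast
  ring

lemma glueB (x : ZMod 78125) (h7 : x^7 = 0) (a : ℕ) (ha : 7 ≤ a) : x^a = 0 := by
  rw [show a = 7 + (a-7) by omega, pow_add, h7, zero_mul]

set_option maxHeartbeats 4000000 in
lemma VZ1 (m : ℕ) : Vz (4*(m+2)) = ((∑ i ∈ range 30, cc i * (e1 i ((m:ℤ)+2) + e2 i ((m:ℤ)+2)) : ℤ) : ZMod 78125) := by
  unfold Vz
  push_cast
  refine Finset.sum_congr rfl fun i hi => ?_
  have hi30 : i < 30 := mem_range.mp hi
  interval_cases i
  · norm_num [cc, cl, e1, e2, s1, s2, wl1, wl2, ql1, ql2]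
    rw [glueG 2 3 (by decide) (m+2)]
    push_cast [Fp]
    ring
  · norm_num [cc, cl, e1, e2, s1, s2, wl1, wl2, ql1, ql2]
    rw [glueG 4 51 (by decide) (m+2), glueB 5 (by decide) (4*(m+2)) (by omega)]
    push_cast [Fp]
    ring
  · norm_num [cc, cl, e1, e2, s1, s2, wl1, wl2, ql1, ql2]
    rw [glueG 7 480 (by decide) (m+2), glueG 8 819 (by decide) (m+2)]
    push_cast [Fp]
    ring
  · norm_num [cc, cl, e1, e2, s1, s2, wl1, wl2, ql1, ql2]
    rw [glueB 10 (by decide) (4*(m+2)) (by omega), glueG 11 2928 (by decide) (m+2)]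
    push_cast [Fp]
    ring
  · norm_num [cc, cl, e1, e2, s1, s2, wl1, wl2, ql1, ql2]
    rw [glueG 13 5712 (by decide) (m+2), glueG 14 7683 (by decide) (m+2)]
    push_cast [Fp]
    ring
  · norm_num [cc, cl, e1, e2, s1, s2, wl1, wl2, ql1, ql2]
    rw [glueG 16 13107 (by decide) (m+2), glueG 17 1079 (by decide) (m+2)]
    push_cast [Fp]
    ring
  · norm_num [cc, cl, e1, e2, s1, s2, wl1, wl2, ql1, ql2]
    rw [glueG 19 10439 (by decide) (m+2), glueB 20 (by decide) (4*(m+2)) (by omega)]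
    push_cast [Fp]
    ring
  · norm_num [cc, cl, e1, e2, s1, s2, wl1, wl2, ql1, ql2]
    rw [glueG 22 15601 (by decide) (m+2), glueG 23 9093 (by decide) (m+2)]
    push_cast [Fp]
    ring
  · norm_num [cc, cl, e1, e2, s1, s2, wl1, wl2, ql1, ql2]
    rw [glueB 25 (by decide) (4*(m+2)) (by omega), glueG 26 13270 (by decide) (m+2)]
    push_cast [Fp]
    ring
  · norm_num [cc, cl, e1, e2, s1, s2, wl1, wl2, ql1, ql2]
    rw [glueG 28 13556 (by decide) (m+2), glueG 29 831 (by decide) (m+2)]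
    push_cast [Fp]
    ring
  · norm_num [cc, cl, e1, e2, s1, s2, wl1, wl2, ql1, ql2]
    rw [glueG 31 12829 (by decide) (m+2), glueG 32 6590 (by decide) (m+2)]
    push_cast [Fp]
    ring
  · norm_num [cc, cl, e1, e2, s1, s2, wl1, wl2, ql1, ql2]
    rw [glueG 34 1642 (by decide) (m+2), glueB 35 (by decide) (4*(m+2)) (by omega)]
    push_cast [Fp]
    ring
  · norm_num [cc, cl, e1, e2, s1, s2, wl1, wl2, ql1, ql2]
    rw [glueG 37 15457 (by decide) (m+2), glueG 38 10777 (by decide) (m+2)]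
    push_cast [Fp]
    ring
  · norm_num [cc, cl, e1, e2, s1, s2, wl1, wl2, ql1, ql2]
    rw [glueB 40 (by decide) (4*(m+2)) (by omega), glueG 41 2652 (by decide) (m+2)]
    push_cast [Fp]
    ring
  · norm_num [cc, cl, e1, e2, s1, s2, wl1, wl2, ql1, ql2]
    rw [glueG 43 11885 (by decide) (m+2), glueG 44 15244 (by decide) (m+2)]
    push_cast [Fp]
    ring
  · norm_num [cc, cl, e1, e2, s1, s2, wl1, wl2, ql1, ql2]
    rw [glueG 46 4866 (by decide) (m+2), glueG 47 7186 (by decide) (m+2)]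
    push_cast [Fp]
    ring
  · norm_num [cc, cl, e1, e2, s1, s2, wl1, wl2, ql1, ql2]
    rw [glueG 49 12335 (by decide) (m+2), glueB 50 (by decide) (4*(m+2)) (by omega)]
    push_cast [Fp]
    ring
  · norm_num [cc, cl, e1, e2, s1, s2, wl1, wl2, ql1, ql2]
    rw [glueG 52 9198 (by decide) (m+2), glueG 53 15596 (by decide) (m+2)]
    push_cast [Fp]
    ring
  · norm_num [cc, cl, e1, e2, s1, s2, wl1, wl2, ql1, ql2]
    rw [glueB 55 (by decide) (4*(m+2)) (by omega), glueG 56 13774 (by decide) (m+2)]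
    push_cast [Fp]
    ring
  · norm_num [cc, cl, e1, e2, s1, s2, wl1, wl2, ql1, ql2]
    rw [glueG 58 13299 (by decide) (m+2), glueG 59 1597 (by decide) (m+2)]
    push_cast [Fp]
    ring
  · norm_num [cc, cl, e1, e2, s1, s2, wl1, wl2, ql1, ql2]
    rw [glueG 61 3543 (by decide) (m+2), glueG 62 2142 (by decide) (m+2)]
    push_cast [Fp]
    ring
  · norm_num [cc, cl, e1, e2, s1, s2, wl1, wl2, ql1, ql2]
    rw [glueG 64 11693 (by decide) (m+2), glueB 65 (by decide) (4*(m+2)) (by omega)]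
    push_cast [Fp]
    ring
  · norm_num [cc, cl, e1, e2, s1, s2, wl1, wl2, ql1, ql2]
    rw [glueG 67 14599 (by decide) (m+2), glueG 68 10650 (by decide) (m+2)]
    push_cast [Fp]
    ring
  · norm_num [cc, cl, e1, e2, s1, s2, wl1, wl2, ql1, ql2]
    rw [glueB 70 (by decide) (4*(m+2)) (by omega), glueG 71 4211 (by decide) (m+2)]
    push_cast [Fp]
    ring
  · norm_num [cc, cl, e1, e2, s1, s2, wl1, wl2, ql1, ql2]
    rw [glueG 73 7773 (by decide) (m+2), glueG 74 12940 (by decide) (m+2)]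
    push_cast [Fp]
    ring
  · norm_num [cc, cl, e1, e2, s1, s2, wl1, wl2, ql1, ql2]
    rw [glueG 76 560 (by decide) (m+2), glueG 77 14983 (by decide) (m+2)]
    push_cast [Fp]
    ring
  · norm_num [cc, cl, e1, e2, s1, s2, wl1, wl2, ql1, ql2]
    rw [glueG 79 8766 (by decide) (m+2), glueB 80 (by decide) (4*(m+2)) (by omega)]
    push_cast [Fp]
    ring
  · norm_num [cc, cl, e1, e2, s1, s2, wl1, wl2, ql1, ql2]
    rw [glueG 82 11185 (by decide) (m+2), glueG 83 7289 (by decide) (m+2)]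
    push_cast [Fp]
    ring
  · norm_num [cc, cl, e1, e2, s1, s2, wl1, wl2, ql1, ql2]
    rw [glueB 85 (by decide) (4*(m+2)) (by omega), glueG 86 2663 (by decide) (m+2)]
    push_cast [Fp]
    ring
  · norm_num [cc, cl, e1, e2, s1, s2, wl1, wl2, ql1, ql2]
    rw [glueG 88 9532 (by decide) (m+2), glueG 89 1573 (by decide) (m+2)]
    push_cast [Fp]
    ring

set_option maxHeartbeats 4000000 in
lemma VZ2 (m : ℕ) : Vz (4*(m+2)+2) = ((∑ i ∈ range 30, cc i * (s1 i ((m:ℤ)+2) + s2 i ((m:ℤ)+2)) : ℤ) : ZMod 78125) := by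
  unfold Vz
  push_cast
  refine Finset.sum_congr rfl fun i hi => ?_
  have hi30 : i < 30 := mem_range.mp hi
  interval_cases i
  · norm_num [cc, cl, e1, e2, s1, s2, wl1, wl2, ql1, ql2]
    rw [glueG2 2 3 (4) (by decide) (by decide) (m+2)]
    push_cast [Fp]
    ring
  · norm_num [cc, cl, e1, e2, s1, s2, wl1, wl2, ql1, ql2]
    rw [glueG2 4 51 (16) (by decide) (by decide) (m+2), glueB 5 (by decide) (4*(m+2)+2) (by omega)]
    push_cast [Fp]
    ring
  · norm_num [cc, cl, e1, e2, s1, s2, wl1, wl2, ql1, ql2]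
    rw [glueG2 7 480 (49) (by decide) (by decide) (m+2), glueG2 8 819 (64) (by decide) (by decide) (m+2)]
    push_cast [Fp]
    ring
  · norm_num [cc, cl, e1, e2, s1, s2, wl1, wl2, ql1, ql2]
    rw [glueB 10 (by decide) (4*(m+2)+2) (by omega), glueG2 11 2928 (121) (by decide) (by decide) (m+2)]
    push_cast [Fp]
    ring
  · norm_num [cc, cl, e1, e2, s1, s2, wl1, wl2, ql1, ql2]
    rw [glueG2 13 5712 (169) (by decide) (by decide) (m+2), glueG2 14 7683 (196) (by decide) (by decide) (m+2)]
    push_cast [Fp]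
    ring
  · norm_num [cc, cl, e1, e2, s1, s2, wl1, wl2, ql1, ql2]
    rw [glueG2 16 13107 (256) (by decide) (by decide) (m+2), glueG2 17 1079 (289) (by decide) (by decide) (m+2)]
    push_cast [Fp]
    ring
  · norm_num [cc, cl, e1, e2, s1, s2, wl1, wl2, ql1, ql2]
    rw [glueG2 19 10439 (361) (by decide) (by decide) (m+2), glueB 20 (by decide) (4*(m+2)+2) (by omega)]
    push_cast [Fp]
    ring
  · norm_num [cc, cl, e1, e2, s1, s2, wl1, wl2, ql1, ql2]
    rw [glueG2 22 15601 (484) (by decide) (by decide) (m+2), glueG2 23 9093 (529) (by decide) (by decide) (m+2)]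
    push_cast [Fp]
    ring
  · norm_num [cc, cl, e1, e2, s1, s2, wl1, wl2, ql1, ql2]
    rw [glueB 25 (by decide) (4*(m+2)+2) (by omega), glueG2 26 13270 (676) (by decide) (by decide) (m+2)]
    push_cast [Fp]
    ring
  · norm_num [cc, cl, e1, e2, s1, s2, wl1, wl2, ql1, ql2]
    rw [glueG2 28 13556 (784) (by decide) (by decide) (m+2), glueG2 29 831 (841) (by decide) (by decide) (m+2)]
    push_cast [Fp]
    ring
  · norm_num [cc, cl, e1, e2, s1, s2, wl1, wl2, ql1, ql2]
    rw [glueG2 31 12829 (961) (by decide) (by decide) (m+2), glueG2 32 6590 (1024) (by decide) (by decide) (m+2)]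
    push_cast [Fp]
    ring
  · norm_num [cc, cl, e1, e2, s1, s2, wl1, wl2, ql1, ql2]
    rw [glueG2 34 1642 (1156) (by decide) (by decide) (m+2), glueB 35 (by decide) (4*(m+2)+2) (by omega)]
    push_cast [Fp]
    ring
  · norm_num [cc, cl, e1, e2, s1, s2, wl1, wl2, ql1, ql2]
    rw [glueG2 37 15457 (1369) (by decide) (by decide) (m+2), glueG2 38 10777 (1444) (by decide) (by decide) (m+2)]
    push_cast [Fp]
    ring
  · norm_num [cc, cl, e1, e2, s1, s2, wl1, wl2, ql1, ql2]
    rw [glueB 40 (by decide) (4*(m+2)+2) (by omega), glueG2 41 2652 (1681) (by decide) (by decide) (m+2)]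
    push_cast [Fp]
    ring
  · norm_num [cc, cl, e1, e2, s1, s2, wl1, wl2, ql1, ql2]
    rw [glueG2 43 11885 (1849) (by decide) (by decide) (m+2), glueG2 44 15244 (1936) (by decide) (by decide) (m+2)]
    push_cast [Fp]
    ring
  · norm_num [cc, cl, e1, e2, s1, s2, wl1, wl2, ql1, ql2]
    rw [glueG2 46 4866 (2116) (by decide) (by decide) (m+2), glueG2 47 7186 (2209) (by decide) (by decide) (m+2)]
    push_cast [Fp]
    ring
  · norm_num [cc, cl, e1, e2, s1, s2, wl1, wl2, ql1, ql2]
    rw [glueG2 49 12335 (2401) (by decide) (by decide) (m+2), glueB 50 (by decide) (4*(m+2)+2) (by omega)]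
    push_cast [Fp]
    ring
  · norm_num [cc, cl, e1, e2, s1, s2, wl1, wl2, ql1, ql2]
    rw [glueG2 52 9198 (2704) (by decide) (by decide) (m+2), glueG2 53 15596 (2809) (by decide) (by decide) (m+2)]
    push_cast [Fp]
    ring
  · norm_num [cc, cl, e1, e2, s1, s2, wl1, wl2, ql1, ql2]
    rw [glueB 55 (by decide) (4*(m+2)+2) (by omega), glueG2 56 13774 (3136) (by decide) (by decide) (m+2)]
    push_cast [Fp]
    ring
  · norm_num [cc, cl, e1, e2, s1, s2, wl1, wl2, ql1, ql2]
    rw [glueG2 58 13299 (3364) (by decide) (by decide) (m+2), glueG2 59 1597 (3481) (by decide) (by decide) (m+2)]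
    push_cast [Fp]
    ring
  · norm_num [cc, cl, e1, e2, s1, s2, wl1, wl2, ql1, ql2]
    rw [glueG2 61 3543 (3721) (by decide) (by decide) (m+2), glueG2 62 2142 (3844) (by decide) (by decide) (m+2)]
    push_cast [Fp]
    ring
  · norm_num [cc, cl, e1, e2, s1, s2, wl1, wl2, ql1, ql2]
    rw [glueG2 64 11693 (4096) (by decide) (by decide) (m+2), glueB 65 (by decide) (4*(m+2)+2) (by omega)]
    push_cast [Fp]
    ring
  · norm_num [cc, cl, e1, e2, s1, s2, wl1, wl2, ql1, ql2]
    rw [glueG2 67 14599 (4489) (by decide) (by decide) (m+2), glueG2 68 10650 (4624) (by decide) (by decide) (m+2)]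
    push_cast [Fp]
    ring
  · norm_num [cc, cl, e1, e2, s1, s2, wl1, wl2, ql1, ql2]
    rw [glueB 70 (by decide) (4*(m+2)+2) (by omega), glueG2 71 4211 (5041) (by decide) (by decide) (m+2)]
    push_cast [Fp]
    ring
  · norm_num [cc, cl, e1, e2, s1, s2, wl1, wl2, ql1, ql2]
    rw [glueG2 73 7773 (5329) (by decide) (by decide) (m+2), glueG2 74 12940 (5476) (by decide) (by decide) (m+2)]
    push_cast [Fp]
    ring
  · norm_num [cc, cl, e1, e2, s1, s2, wl1, wl2, ql1, ql2]
    rw [glueG2 76 560 (5776) (by decide) (by decide) (m+2), glueG2 77 14983 (5929) (by decide) (by decide) (m+2)]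
    push_cast [Fp]
    ring
  · norm_num [cc, cl, e1, e2, s1, s2, wl1, wl2, ql1, ql2]
    rw [glueG2 79 8766 (6241) (by decide) (by decide) (m+2), glueB 80 (by decide) (4*(m+2)+2) (by omega)]
    push_cast [Fp]
    ring
  · norm_num [cc, cl, e1, e2, s1, s2, wl1, wl2, ql1, ql2]
    rw [glueG2 82 11185 (6724) (by decide) (by decide) (m+2), glueG2 83 7289 (6889) (by decide) (by decide) (m+2)]
    push_cast [Fp]
    ring
  · norm_num [cc, cl, e1, e2, s1, s2, wl1, wl2, ql1, ql2]
    rw [glueB 85 (by decide) (4*(m+2)+2) (by omega), glueG2 86 2663 (7396) (by decide) (by decide) (m+2)]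
    push_cast [Fp]
    ring
  · norm_num [cc, cl, e1, e2, s1, s2, wl1, wl2, ql1, ql2]
    rw [glueG2 88 9532 (7744) (by decide) (by decide) (m+2), glueG2 89 1573 (7921) (by decide) (by decide) (m+2)]
    push_cast [Fp]
    ring

set_option maxHeartbeats 4000000 in
lemma KEY1 (m : ℕ) : (∑ i ∈ range 30, cc i * (e1 i ((m:ℤ)+2) + e2 i ((m:ℤ)+2)) : ℤ)
    = ((2) + (7545)*((m:ℤ)+2) + (72600)*((m:ℤ)+2)^2 + (59875)*((m:ℤ)+2)^3 + (51250)*((m:ℤ)+2)^4 + (50625)*((m:ℤ)+2)^5 + (6250)*((m:ℤ)+2)^6) + 78125*(((4880705235391168) + (-1002527055262173020354734931286338595)*(m:ℤ) + (1837969115259055629628643890384876990)*(m:ℤ)^2 + (-1002531326227155400923695058519139614)*(m:ℤ)^3 + (167089266230273096073816946886825944)*(m:ℤ)^4) + (334175329157850780212535124103763195)*(24*(m.choose 5 : ℤ)) + (27847855116734455403576885042908722)*(144*(m.choose 6 : ℤ))) := by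
  have hp5 := castc 5 m
  have hp6 := castc 6 m
  simp only [Finset.prod_range_succ, Finset.prod_range_zero, one_mul] at hp5 hp6
  norm_num [Nat.factorial] at hp5 hp6
  have ht5 : (m:ℤ)*((m:ℤ)-1)*((m:ℤ)-2)*((m:ℤ)-3)*((m:ℤ)-4) = 5*(24*(m.choose 5:ℤ)) := by
    linear_combination -hp5
  have ht6 : (m:ℤ)*((m:ℤ)-1)*((m:ℤ)-2)*((m:ℤ)-3)*((m:ℤ)-4)*((m:ℤ)-5) = 5*(144*(m.choose 6:ℤ)) := by
    linear_combination -hp6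
  simp only [Finset.sum_range_succ, Finset.sum_range_zero, cc, cl, e1, e2, wl1, wl2, ql1, ql2, Fp]
  norm_num
  linear_combination (5221489518091418440820861314121299921875)*ht5 + (435122736198975865680888828795448781250)*ht6

set_option maxHeartbeats 4000000 in
lemma KEY2 (m : ℕ) : (∑ i ∈ range 30, cc i * (s1 i ((m:ℤ)+2) + s2 i ((m:ℤ)+2)) : ℤ)
    = ((-52) + (37500)*((m:ℤ)+2) + (5575)*((m:ℤ)+2)^2 + (48875)*((m:ℤ)+2)^3 + (10625)*((m:ℤ)+2)^4 + (40625)*((m:ℤ)+2)^5 + (59375)*((m:ℤ)+2)^6) + 78125*(((14734800035685161164) + (-2757737802966409321774889609392542987074)*(m:ℤ) + (5055860624806499388162838893559093669785)*(m:ℤ)^2 + (-2757749782154412937101721055369045210176)*(m:ℤ)^3 + (459626960314323766007178867284875164536)*(m:ℤ)^4) + (919244936011175747595210111120716633314)*(24*(m.choose 5 : ℤ)) + (76603495097406753675164440564301274953)*(144*(m.choose 6 : ℤ))) := by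
  have hp5 := castc 5 m
  have hp6 := castc 6 m
  simp only [Finset.prod_range_succ, Finset.prod_range_zero, one_mul] at hp5 hp6
  norm_num [Nat.factorial] at hp5 hp6
  have ht5 : (m:ℤ)*((m:ℤ)-1)*((m:ℤ)-2)*((m:ℤ)-3)*((m:ℤ)-4) = 5*(24*(m.choose 5:ℤ)) := by
    linear_combination -hp5
  have ht6 : (m:ℤ)*((m:ℤ)-1)*((m:ℤ)-2)*((m:ℤ)-3)*((m:ℤ)-4)*((m:ℤ)-5) = 5*(144*(m.choose 6:ℤ)) := by
    linear_combination -hp6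
  simp only [Finset.sum_range_succ, Finset.sum_range_zero, cc, cl, s1, s2, wl1, wl2, ql1, ql2, Fp]
  norm_num
  linear_combination (14363202125174621056175157986261197395531250)*ht5 + (1196929610896980526174444383817207421140625)*ht6

set_option maxHeartbeats 4000000

/-- Lemma 3.3: congruences for `(1+5^{4k})U_{4k}` and
`(1+5^{4k+2})U_{4k+2}` modulo `5^7`. -/
theorem stmt_10 (U : ℕ → ℤ) (hU0 : U 0 = 1)
    (hU : ∀ n : ℕ, 1 ≤ n →
      U n = -2 * ∑ i ∈ Finset.Icc 1 (n / 2), (n.choose (2 * i) : ℤ) * U (n - 2 * i))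
    (k : ℕ) :
    ((1 + 5 ^ (4 * k)) * U (4 * k) ≡
      6250 * (k : ℤ) ^ 6 + 50625 * (k : ℤ) ^ 5 + 51250 * (k : ℤ) ^ 4
        + 59875 * (k : ℤ) ^ 3 + 72600 * (k : ℤ) ^ 2 + 7545 * (k : ℤ) + 2
      [ZMOD 5 ^ 7]) ∧
    ((1 + 5 ^ (4 * k + 2)) * U (4 * k + 2) ≡
      59375 * (k : ℤ) ^ 6 + 40625 * (k : ℤ) ^ 5 + 10625 * (k : ℤ) ^ 4
        + 48875 * (k : ℤ) ^ 3 + 5575 * (k : ℤ) ^ 2 + 37500 * (k : ℤ) - 52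
      [ZMOD 5 ^ 7]) := by
  have hM := MAIN U hU0 hU
  have h2 : U 2 = -2 := by
    rw [hU 2 (by norm_num)]
    norm_num [show Finset.Icc 1 1 = {1} by decide, hU0]
  have h4 : U 4 = 22 := by
    rw [hU 4 (by norm_num)]
    rw [show Finset.Icc 1 2 = {1,2} by decide, Finset.sum_pair (by norm_num : (1:ℕ) ≠ 2)]
    norm_num [Nat.choose, h2, hU0]
  have h6 : U 6 = -602 := by
    rw [hU 6 (by norm_num)]
    rw [show Finset.Icc 1 3 = {1,2,3} by decide,
      Finset.sum_insert (by decide), Finset.sum_pair (by norm_num : (2:ℕ) ≠ 3)]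
    norm_num [Nat.choose, h4, h2, hU0]
  have h57 : ((5:ℤ)^7) = ((78125:ℕ):ℤ) := by norm_num
  constructor
  · rcases lt_or_ge k 2 with hk | hk
    · interval_cases k
      · norm_num [hU0]
        try decide
      · norm_num [h4]
        try decide
    · obtain ⟨m, rfl⟩ : ∃ m, k = m + 2 := ⟨k-2, by omega⟩
      rw [h57]
      refine (ZMod.intCast_eq_intCast_iff' _ _ 78125).mp ?_
      push_cast
      rw [glueB 5 (by decide) (4*(m+2)) (by omega), hM (4*(m+2)), VZ1 m, KEY1 m]
      push_cast
      rw [show (78125 : ZMod 78125) = 0 by decide]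
      ring
  · rcases lt_or_ge k 2 with hk | hk
    · interval_cases k
      · norm_num [h2]
        try decide
      · norm_num [h6]
        try decide
    · obtain ⟨m, rfl⟩ : ∃ m, k = m + 2 := ⟨k-2, by omega⟩
      rw [h57]
      refine (ZMod.intCast_eq_intCast_iff' _ _ 78125).mp ?_
      push_cast
      rw [glueB 5 (by decide) (4*(m+2)+2) (by omega), hM (4*(m+2)+2), VZ2 m, KEY2 m]
      push_cast
      rw [show (78125 : ZMod 78125) = 0 by decide]
      ring
end

section
/- For every nonnegative integer k, (1 - 5^{4k}) E_{4k} ≡ 31250k^6 + 11875k^5 + 18750k^4 + 64875k^3 + 54500k^2 + 50005k (mod 5^7) and (1 - 5^{4k+2}) E_{4k+2} ≡ 31250k^6 + 10625k^5 + 68750k^4 + 60375k^3 + 4625k^2 + 74290k + 24 (mod 5^7). -/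
open Finset

section
variable (E : ℕ → ℤ)

def Pp (n : ℕ) (x : ℤ) : ℤ := ∑ i ∈ range (n+1), (n.choose i : ℤ) * E i * x^(n-i)

lemma sum_even_part (g : ℕ → ℤ) (hodd : ∀ i, g (2*i+1) = 0) :
    ∀ N, ∑ i ∈ range (2*N+1), g i = ∑ r ∈ range (N+1), g (2*r) := by
  intro N
  induction N with
  | zero => simp
  | succ N ih =>
      have h1 : 2*(N+1)+1 = (2*N+1) + 1 + 1 := by omega
      have h2 : 2*N+1+1 = 2*(N+1) := by omega
      rw [h1, sum_range_succ, sum_range_succ, ih, hodd N, sum_range_succ, h2,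
        sum_range_succ, sum_range_succ]
      ring

lemma L0 (hE0 : E 0 = 1)
    (hEodd : ∀ n : ℕ, 1 ≤ n → E (2 * n - 1) = 0)
    (hEsum : ∀ n : ℕ, 1 ≤ n →
      ∑ r ∈ Finset.range (n + 1), ((2 * n).choose (2 * r) : ℤ) * E (2 * r) = 0)
    (m : ℕ) :
    ∑ i ∈ range (m+1), (m.choose i : ℤ) * E i * (1 + (-1:ℤ)^(m-i)) =
      if m = 0 then 2 else 0 := by
  rcases Nat.even_or_odd m with hm | hm
  · obtain ⟨N, rfl⟩ : ∃ N, m = 2*N := by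
      rcases hm with ⟨r, hr⟩; exact ⟨r, by omega⟩
    rw [sum_even_part (fun i => ((2*N).choose i : ℤ) * E i * (1 + (-1:ℤ)^(2*N-i)))
        ?_ N]
    · have hterm : ∀ r ∈ range (N+1),
          ((2*N).choose (2*r) : ℤ) * E (2*r) * (1 + (-1:ℤ)^(2*N-2*r)) =
          2 * (((2*N).choose (2*r) : ℤ) * E (2*r)) := by
        intro r hr
        simp only [mem_range] at hr
        have he : Even (2*N - 2*r) := ⟨N - r, by omega⟩
        rw [he.neg_one_pow]
        ring
      rw [sum_congr rfl hterm, ← mul_sum]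
      rcases Nat.eq_zero_or_pos N with rfl | hN
      · simp [hE0]
      · rw [hEsum N hN, if_neg (show ¬ (2*N = 0) by omega)]
        ring
    · intro i
      have h1 : 2*i+1 = 2*(i+1) - 1 := by omega
      rw [h1, hEodd (i+1) (by omega)]
      ring
  · obtain ⟨N, rfl⟩ := hm
    rw [if_neg (by omega)]
    apply sum_eq_zero
    intro i hi
    simp only [mem_range] at hi
    rcases Nat.even_or_odd i with hi2 | hi2
    · obtain ⟨j, rfl⟩ : ∃ j, i = 2*j := by
        rcases hi2 with ⟨r, hr⟩; exact ⟨r, by omega⟩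
      have ho : Odd (2*N+1 - 2*j) := ⟨N - j, by omega⟩
      rw [ho.neg_one_pow]
      ring
    · obtain ⟨j, rfl⟩ := hi2
      have h1 : 2*j+1 = 2*(j+1) - 1 := by omega
      rw [h1, hEodd (j+1) (by omega)]
      ring

lemma swap_triangle (f : ℕ → ℕ → ℤ) (n : ℕ) :
    ∑ i ∈ range (n+1), ∑ j ∈ range (n+1-i), f i j
      = ∑ j ∈ range (n+1), ∑ i ∈ range (n+1-j), f i j := by
  have key : ∀ (F : ℕ → ℕ → ℤ),
      ∑ i ∈ range (n+1), ∑ j ∈ range (n+1-i), F i j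
        = ∑ i ∈ range (n+1), ∑ j ∈ range (n+1), if i + j ≤ n then F i j else 0 := by
    intro F
    apply sum_congr rfl
    intro i hi
    simp only [mem_range] at hi
    rw [← Finset.sum_subset (Finset.range_subset_range.2 (by omega : n+1-i ≤ n+1))]
    · apply sum_congr rfl
      intro j hj
      simp only [mem_range] at hj
      rw [if_pos (by omega)]
    · intro j hj hj2
      simp only [mem_range] at hj hj2
      rw [if_neg (by omega)]
  rw [key, key, Finset.sum_comm]
  apply sum_congr rfl
  intro j _
  apply sum_congr rfl
  intro i _
  rw [Nat.add_comm i j]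
lemma L1 (hE0 : E 0 = 1)
    (hEodd : ∀ n : ℕ, 1 ≤ n → E (2 * n - 1) = 0)
    (hEsum : ∀ n : ℕ, 1 ≤ n →
      ∑ r ∈ Finset.range (n + 1), ((2 * n).choose (2 * r) : ℤ) * E (2 * r) = 0)
    (n : ℕ) (x : ℤ) :
    Pp E n (x+1) + Pp E n (x-1) = 2 * x^n := by
  have expand : ∀ m : ℕ, (x+1)^m + (x-1)^m
      = ∑ j ∈ range (m+1), (m.choose j : ℤ) * x^j * (1 + (-1:ℤ)^(m-j)) := by
    intro m
    rw [show x - 1 = x + (-1) by ring, add_pow, add_pow, ← sum_add_distrib]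
    apply sum_congr rfl
    intro j hj
    rw [one_pow]
    ring
  unfold Pp
  rw [← sum_add_distrib]
  have step1 : ∑ i ∈ range (n+1),
        ((n.choose i : ℤ) * E i * (x+1)^(n-i) + (n.choose i : ℤ) * E i * (x-1)^(n-i))
      = ∑ i ∈ range (n+1), ∑ j ∈ range (n+1-i),
          (n.choose i : ℤ) * E i * (((n-i).choose j : ℤ) * x^j * (1 + (-1:ℤ)^(n-i-j))) := by
    apply sum_congr rfl
    intro i hi
    simp only [mem_range] at hi
    rw [show (n.choose i : ℤ) * E i * (x+1)^(n-i) + (n.choose i : ℤ) * E i * (x-1)^(n-i)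
        = (n.choose i : ℤ) * E i * ((x+1)^(n-i) + (x-1)^(n-i)) by ring,
      expand (n-i), mul_sum, show n+1-i = (n-i)+1 by omega]
  rw [step1, swap_triangle]
  have step2 : ∀ j ∈ range (n+1),
      ∑ i ∈ range (n+1-j),
          (n.choose i : ℤ) * E i * (((n-i).choose j : ℤ) * x^j * (1 + (-1:ℤ)^(n-i-j)))
      = (n.choose j : ℤ) * x^j * (if n - j = 0 then 2 else 0) := by
    intro j hj
    simp only [mem_range] at hj
    rw [← L0 E hE0 hEodd hEsum (n-j), mul_sum, show n+1-j = (n-j)+1 by omega]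
    apply sum_congr rfl
    intro i hi
    simp only [mem_range] at hi
    have hchoose : (n.choose i) * ((n-i).choose j) = (n.choose j) * ((n-j).choose i) := by
      have h1 := Nat.choose_mul (n := n) (show i ≤ i+j by omega)
      have h2 := Nat.choose_mul (n := n) (show j ≤ i+j by omega)
      rw [show i+j-i = j by omega] at h1
      rw [show i+j-j = i by omega] at h2
      rw [Nat.choose_symm_add] at h1
      omega
    have hsub : n - i - j = n - j - i := by omega
    have : (n.choose i : ℤ) * ((n-i).choose j : ℤ) = (n.choose j : ℤ) * ((n-j).choose i : ℤ) := by
      exact_mod_cast congrArg (Nat.cast : ℕ → ℤ) hchoose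
    calc (n.choose i : ℤ) * E i * (((n-i).choose j : ℤ) * x^j * (1 + (-1:ℤ)^(n-i-j)))
        = (n.choose i : ℤ) * ((n-i).choose j : ℤ) * E i * x^j * (1 + (-1:ℤ)^(n-i-j)) := by ring
      _ = (n.choose j : ℤ) * ((n-j).choose i : ℤ) * E i * x^j * (1 + (-1:ℤ)^(n-j-i)) := by
          rw [this, hsub]
      _ = (n.choose j : ℤ) * x^j * (((n-j).choose i : ℤ) * E i * (1 + (-1:ℤ)^(n-j-i))) := by ring
  rw [sum_congr rfl step2, Finset.sum_eq_single n]
  · rw [Nat.sub_self, if_pos rfl, Nat.choose_self]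
    push_cast
    ring
  · intro j hj hjn
    simp only [mem_range] at hj
    rw [if_neg (by omega)]
    ring
  · intro h
    exact absurd (mem_range.2 (by omega)) h

lemma Pp0 (n : ℕ) : Pp E n 0 = E n := by
  unfold Pp
  rw [Finset.sum_eq_single n]
  · rw [Nat.choose_self, Nat.sub_self, pow_zero]
    ring
  · intro i hi hin
    simp only [mem_range] at hi
    rw [zero_pow (by omega : n - i ≠ 0)]
    ring
  · intro h
    exact absurd (mem_range.2 (by omega)) h

lemma L2 (hE0 : E 0 = 1)
    (hEodd : ∀ n : ℕ, 1 ≤ n → E (2 * n - 1) = 0)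
    (hEsum : ∀ n : ℕ, 1 ≤ n →
      ∑ r ∈ Finset.range (n + 1), ((2 * n).choose (2 * r) : ℤ) * E (2 * r) = 0)
    (n : ℕ) : ∀ M : ℕ,
    2 * (∑ j ∈ range M, (-1:ℤ)^j * (2*(j:ℤ)+1)^n)
      = Pp E n 0 - (-1:ℤ)^M * Pp E n (2*(M:ℤ)) := by
  intro M
  induction M with
  | zero => simp [Pp0]
  | succ M ih =>
      rw [sum_range_succ]
      have hL1 := L1 E hE0 hEodd hEsum n (2*(M:ℤ)+1)
      have e1 : (2*(M:ℤ)+1)+1 = 2*((M:ℤ)+1) := by ring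
      have e2 : (2*(M:ℤ)+1)-1 = 2*(M:ℤ) := by ring
      rw [e1, e2] at hL1
      have e3 : ((M+1 : ℕ) : ℤ) = (M:ℤ)+1 := by push_cast; ring
      rw [e3, pow_succ]
      push_cast
      linear_combination ih - (-1:ℤ)^M * hL1
lemma sum_range_five_mul (f : ℕ → ℤ) :
    ∀ N, ∑ j ∈ range (5*N), f j
      = ∑ v ∈ range N, (f (5*v) + f (5*v+1) + f (5*v+2) + f (5*v+3) + f (5*v+4)) := by
  intro N
  induction N with
  | zero => simp
  | succ N ih =>
      rw [show 5*(N+1) = 5*N+1+1+1+1+1 by omega, sum_range_succ, sum_range_succ,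
        sum_range_succ, sum_range_succ, sum_range_succ, ih, sum_range_succ]
      ring

lemma binom7 (s : ℤ) (k : ℕ) :
    (1 + 5*s)^k ≡ ∑ i ∈ range 7, (k.choose i : ℤ) * (5*s)^i [ZMOD 5^7] := by
  have hexp : (1 + 5*s)^k = ∑ i ∈ range (k+1), (k.choose i : ℤ) * (5*s)^i := by
    rw [add_comm, add_pow]
    apply sum_congr rfl
    intro i hi
    rw [one_pow]
    ring
  rcases le_or_gt k 6 with hk | hk
  · have : ∑ i ∈ range 7, (k.choose i : ℤ) * (5*s)^i
        = ∑ i ∈ range (k+1), (k.choose i : ℤ) * (5*s)^i := by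
      symm
      apply Finset.sum_subset (Finset.range_subset_range.2 (by omega))
      intro i hi hi2
      simp only [mem_range] at hi hi2
      rw [Nat.choose_eq_zero_of_lt (by omega)]
      ring
    rw [hexp, this]
  · have hsplit : range (k+1) = range 7 ∪ Ico 7 (k+1) := by
      rw [range_eq_Ico, ← Ico_union_Ico_eq_Ico (by omega : 0 ≤ 7) (by omega : 7 ≤ k+1), ← range_eq_Ico]
    have hdisj : Disjoint (range 7) (Ico 7 (k+1)) := by
      simp only [Finset.disjoint_left, mem_range, mem_Ico]
      omega
    rw [hexp, hsplit, Finset.sum_union hdisj]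
    have : (5:ℤ)^7 ∣ ∑ i ∈ Ico 7 (k+1), (k.choose i : ℤ) * (5*s)^i := by
      apply Finset.dvd_sum
      intro i hi
      simp only [mem_Ico] at hi
      have : (5:ℤ)^7 ∣ (5*s)^i := by
        rw [mul_pow]
        exact Dvd.dvd.mul_right (pow_dvd_pow 5 (by omega)) _
      exact Dvd.dvd.mul_left this _
    calc ∑ i ∈ range 7, (k.choose i : ℤ) * (5*s)^i + ∑ i ∈ Ico 7 (k+1), (k.choose i : ℤ) * (5*s)^i
        ≡ ∑ i ∈ range 7, (k.choose i : ℤ) * (5*s)^i + 0 [ZMOD 5^7] :=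
          Int.ModEq.add_left _ (Int.modEq_zero_iff_dvd.2 this)
      _ = ∑ i ∈ range 7, (k.choose i : ℤ) * (5*s)^i := by ring

lemma L3 (hE0 : E 0 = 1)
    (hEodd : ∀ n : ℕ, 1 ≤ n → E (2 * n - 1) = 0)
    (hEsum : ∀ n : ℕ, 1 ≤ n →
      ∑ r ∈ Finset.range (n + 1), ((2 * n).choose (2 * r) : ℤ) * E (2 * r) = 0)
    (n : ℕ) (hn : Even n) :
    (1 - 5^n) * E n ≡
      ∑ v ∈ range 125, (-1:ℤ)^v *
        ((10*(v:ℤ)+1)^n - (10*(v:ℤ)+3)^n - (10*(v:ℤ)+7)^n + (10*(v:ℤ)+9)^n)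
      [ZMOD 5^7] := by
  obtain ⟨m, hm⟩ : ∃ m, n = 2*m := by rcases hn with ⟨r, hr⟩; exact ⟨r, by omega⟩
  -- the odd-index Euler numbers below n vanish
  have hEn1 : ∀ i ∈ range n, n - i = 1 → E i = 0 := by
    intro i hi h1
    simp only [mem_range] at hi
    have : i = 2*m - 1 := by omega
    rw [this]
    exact hEodd m (by omega)
  -- corrections for M = 625
  have h625 := L2 E hE0 hEodd hEsum n 625
  have h125 := L2 E hE0 hEodd hEsum n 125
  rw [Pp0] at h625 h125
  have hP625 : Pp E n (2*(625:ℕ)) = E n + ∑ i ∈ range n, (n.choose i : ℤ) * E i * 1250^(n-i) := by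
    unfold Pp
    rw [sum_range_succ, Nat.choose_self, Nat.sub_self, pow_zero]
    push_cast
    ring
  have hP125 : Pp E n (2*(125:ℕ)) = E n + ∑ i ∈ range n, (n.choose i : ℤ) * E i * 250^(n-i) := by
    unfold Pp
    rw [sum_range_succ, Nat.choose_self, Nat.sub_self, pow_zero]
    push_cast
    ring
  rw [hP625, show ((-1:ℤ)^(625:ℕ)) = -1 from Odd.neg_one_pow ⟨312, by norm_num⟩] at h625
  rw [hP125, show ((-1:ℤ)^(125:ℕ)) = -1 from Odd.neg_one_pow ⟨62, by norm_num⟩] at h125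
  -- divisibility of the corrections
  have hdvd625 : (5:ℤ)^7 ∣ ∑ i ∈ range n, (n.choose i : ℤ) * E i * 1250^(n-i) := by
    apply Finset.dvd_sum
    intro i hi
    have hi' := hi
    simp only [mem_range] at hi'
    rcases eq_or_lt_of_le (show 1 ≤ n - i by omega) with h1 | h2
    · rw [hEn1 i hi h1.symm]
      simp
    · have : (5:ℤ)^7 ∣ 1250^(n-i) := by
        rw [show n-i = 2+(n-i-2) by omega, pow_add]
        exact Dvd.dvd.mul_right (by norm_num) _
      exact Dvd.dvd.mul_left this _
  have hdvd125 : (5:ℤ)^7 ∣ 5^n * ∑ i ∈ range n, (n.choose i : ℤ) * E i * 250^(n-i) := by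
    rw [Finset.mul_sum]
    apply Finset.dvd_sum
    intro i hi
    have hi' := hi
    simp only [mem_range] at hi'
    rcases eq_or_lt_of_le (show 1 ≤ n - i by omega) with h1 | h2
    · rw [hEn1 i hi h1.symm]
      simp
    · have key : (5:ℤ)^7 ∣ 5^n * 250^(n-i) := by
        have h5 : (5:ℤ)^n = 5 * 5^(n-1) := by
          conv_lhs => rw [show n = 1+(n-1) by omega]
          rw [pow_add, pow_one]
        have h250 : (250:ℤ)^(n-i) = 250^2 * 250^(n-i-2) := by
          conv_lhs => rw [show n-i = 2+(n-i-2) by omega]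
          rw [pow_add]
        rw [h5, h250]
        calc (5:ℤ)^7 ∣ 5 * 250^2 := by norm_num
          _ ∣ (5 * 250^2) * (5^(n-1) * 250^(n-i-2)) := Dvd.intro _ rfl
          _ = 5 * 5^(n-1) * (250^2 * 250^(n-i-2)) := by ring
      calc (5:ℤ)^7 ∣ 5^n * 250^(n-i) := key
        _ ∣ 5^n * 250^(n-i) * ((n.choose i : ℤ) * E i) := Dvd.intro _ rfl
        _ = 5^n * ((n.choose i : ℤ) * E i * 250^(n-i)) := by ring
  -- S625 ≡ E n, 5^n * S125 ≡ 5^n * E n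
  set S625 := ∑ j ∈ range 625, (-1:ℤ)^j * (2*(j:ℤ)+1)^n with hS625
  set S125 := ∑ j ∈ range 125, (-1:ℤ)^j * (2*(j:ℤ)+1)^n with hS125
  have hcop : IsCoprime ((5:ℤ)^7) 2 := by
    rw [Int.isCoprime_iff_gcd_eq_one]
    decide
  have hA : S625 ≡ E n [ZMOD 5^7] := by
    rw [Int.modEq_iff_dvd]
    apply hcop.dvd_of_dvd_mul_left
    rw [show 2 * (E n - S625) = -(2*S625 - 2*E n) by ring,
      show 2*S625 - 2*E n = ∑ i ∈ range n, (n.choose i : ℤ) * E i * 1250^(n-i) by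
        linear_combination h625]
    exact hdvd625.neg_right
  have hB : 5^n * S125 ≡ 5^n * E n [ZMOD 5^7] := by
    rw [Int.modEq_iff_dvd]
    apply hcop.dvd_of_dvd_mul_left
    rw [show 2 * (5^n * E n - 5^n * S125) = -(5^n * (2*S125 - 2*E n)) by ring,
      show 2*S125 - 2*E n = ∑ i ∈ range n, (n.choose i : ℤ) * E i * 250^(n-i) by
        linear_combination h125]
    exact hdvd125.neg_right
  -- split S625 into the unit part and 5^n * S125
  have hpow5 : ∀ v : ℕ, (-1:ℤ)^(5*v) = (-1:ℤ)^v := by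
    intro v
    rw [pow_mul]
    norm_num
  have hsplit : S625 = (∑ v ∈ range 125, (-1:ℤ)^v *
        ((10*(v:ℤ)+1)^n - (10*(v:ℤ)+3)^n - (10*(v:ℤ)+7)^n + (10*(v:ℤ)+9)^n))
      + 5^n * S125 := by
    rw [hS625, show (625:ℕ) = 5*125 by norm_num,
      sum_range_five_mul (fun j => (-1:ℤ)^j * (2*(j:ℤ)+1)^n) 125, hS125, Finset.mul_sum,
      ← sum_add_distrib]
    apply sum_congr rfl
    intro v hv
    have hb : (2*((5*v:ℕ):ℤ)+1) = 10*(v:ℤ)+1 := by push_cast; ring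
    have hb1 : (2*(((5*v+1):ℕ):ℤ)+1) = 10*(v:ℤ)+3 := by push_cast; ring
    have hb2 : (2*(((5*v+2):ℕ):ℤ)+1) = 5*(2*(v:ℤ)+1) := by push_cast; ring
    have hb3 : (2*(((5*v+3):ℕ):ℤ)+1) = 10*(v:ℤ)+7 := by push_cast; ring
    have hb4 : (2*(((5*v+4):ℕ):ℤ)+1) = 10*(v:ℤ)+9 := by push_cast; ring
    simp only [hb, hb1, hb2, hb3, hb4, pow_add, hpow5, mul_pow]
    norm_num
    ring
  calc (1 - 5^n) * E n = E n - 5^n * E n := by ring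
    _ ≡ S625 - 5^n * S125 [ZMOD 5^7] := (hA.symm).sub hB.symm
    _ = ∑ v ∈ range 125, (-1:ℤ)^v *
        ((10*(v:ℤ)+1)^n - (10*(v:ℤ)+3)^n - (10*(v:ℤ)+7)^n + (10*(v:ℤ)+9)^n) := by
        rw [hsplit]; ring

end

section
open Finset

lemma modEq_sum (s : Finset ℕ) (f g : ℕ → ℤ) (N : ℤ) (h : ∀ v ∈ s, f v ≡ g v [ZMOD N]) :
    (∑ v ∈ s, f v) ≡ (∑ v ∈ s, g v) [ZMOD N] := by
  rw [Int.modEq_iff_dvd, ← Finset.sum_sub_distrib]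
  exact Finset.dvd_sum fun v hv => (h v hv).dvd

def W1 (i : ℕ) : ℤ := ∑ v ∈ range 125, (-1:ℤ)^v *
  ((5*(2000*(v:ℤ)^4+800*(v:ℤ)^3+120*(v:ℤ)^2+8*(v:ℤ)))^i
   - (5*(2000*(v:ℤ)^4+2400*(v:ℤ)^3+1080*(v:ℤ)^2+216*(v:ℤ)+16))^i
   - (5*(2000*(v:ℤ)^4+5600*(v:ℤ)^3+5880*(v:ℤ)^2+2744*(v:ℤ)+480))^i
   + (5*(2000*(v:ℤ)^4+7200*(v:ℤ)^3+9720*(v:ℤ)^2+5832*(v:ℤ)+1312))^i)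

def W2 (i : ℕ) : ℤ := ∑ v ∈ range 125, (-1:ℤ)^v *
  ((10*(v:ℤ)+1)^2 * (5*(2000*(v:ℤ)^4+800*(v:ℤ)^3+120*(v:ℤ)^2+8*(v:ℤ)))^i
   - (10*(v:ℤ)+3)^2 * (5*(2000*(v:ℤ)^4+2400*(v:ℤ)^3+1080*(v:ℤ)^2+216*(v:ℤ)+16))^i
   - (10*(v:ℤ)+7)^2 * (5*(2000*(v:ℤ)^4+5600*(v:ℤ)^3+5880*(v:ℤ)^2+2744*(v:ℤ)+480))^i
   + (10*(v:ℤ)+9)^2 * (5*(2000*(v:ℤ)^4+7200*(v:ℤ)^3+9720*(v:ℤ)^2+5832*(v:ℤ)+1312))^i)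

def D1 : ℕ → ℤ
  | 0 => 0
  | 1 => 231255
  | 2 => 3054500
  | 3 => 19720500
  | 4 => 52050000
  | 5 => 57675000
  | _ => 22500000

def D2 : ℕ → ℤ
  | 0 => 24
  | 1 => 249915
  | 2 => 3590250
  | 3 => 21306000
  | 4 => 52950000
  | 5 => 57525000
  | _ => 22500000

set_option maxRecDepth 100000 in
lemma hWD1 : ∀ i ∈ range 7, W1 i ≡ D1 i [ZMOD 5^7] := by decide +kernel

set_option maxRecDepth 100000 in
lemma hWD2 : ∀ i ∈ range 7, W2 i ≡ D2 i [ZMOD 5^7] := by decide +kernel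

lemma mahler1 : ∀ k : ℕ,
    ((0:ℤ) + 231255*((k.choose 1 : ℕ):ℤ) + 3054500*((k.choose 2 : ℕ):ℤ) + 19720500*((k.choose 3 : ℕ):ℤ) + 52050000*((k.choose 4 : ℕ):ℤ) + 57675000*((k.choose 5 : ℕ):ℤ) + 22500000*((k.choose 6 : ℕ):ℤ) = (0:ℤ) + 50005*(k:ℤ) + 54500*(k:ℤ)^2 + 64875*(k:ℤ)^3 + 18750*(k:ℤ)^4 + 11875*(k:ℤ)^5 + 31250*(k:ℤ)^6) ∧
    ((231255:ℤ) + 3054500*((k.choose 1 : ℕ):ℤ) + 19720500*((k.choose 2 : ℕ):ℤ) + 52050000*((k.choose 3 : ℕ):ℤ) + 57675000*((k.choose 4 : ℕ):ℤ) + 22500000*((k.choose 5 : ℕ):ℤ) = (231255:ℤ) + 625500*(k:ℤ) + 894625*(k:ℤ)^2 + 818750*(k:ℤ)^3 + 528125*(k:ℤ)^4 + 187500*(k:ℤ)^5) ∧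
    ((3054500:ℤ) + 19720500*((k.choose 1 : ℕ):ℤ) + 52050000*((k.choose 2 : ℕ):ℤ) + 57675000*((k.choose 3 : ℕ):ℤ) + 22500000*((k.choose 4 : ℕ):ℤ) = (3054500:ℤ) + 7295500*(k:ℤ) + 7500000*(k:ℤ)^2 + 3987500*(k:ℤ)^3 + 937500*(k:ℤ)^4) ∧
    ((19720500:ℤ) + 52050000*((k.choose 1 : ℕ):ℤ) + 57675000*((k.choose 2 : ℕ):ℤ) + 22500000*((k.choose 3 : ℕ):ℤ) = (19720500:ℤ) + 30712500*(k:ℤ) + 17587500*(k:ℤ)^2 + 3750000*(k:ℤ)^3) ∧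
    ((52050000:ℤ) + 57675000*((k.choose 1 : ℕ):ℤ) + 22500000*((k.choose 2 : ℕ):ℤ) = (52050000:ℤ) + 46425000*(k:ℤ) + 11250000*(k:ℤ)^2) ∧
    ((57675000:ℤ) + 22500000*((k.choose 1 : ℕ):ℤ) = (57675000:ℤ) + 22500000*(k:ℤ)) ∧
    ((22500000:ℤ) = (22500000:ℤ)) := by
  intro k
  induction k with
  | zero => norm_num
  | succ k ih =>
      obtain ⟨h0, h1, h2, h3, h4, h5, h6⟩ := ih
      have e1 : (k+1).choose 1 = k.choose 0 + k.choose 1 := Nat.choose_succ_succ k 0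
      have e2 : (k+1).choose 2 = k.choose 1 + k.choose 2 := Nat.choose_succ_succ k 1
      have e3 : (k+1).choose 3 = k.choose 2 + k.choose 3 := Nat.choose_succ_succ k 2
      have e4 : (k+1).choose 4 = k.choose 3 + k.choose 4 := Nat.choose_succ_succ k 3
      have e5 : (k+1).choose 5 = k.choose 4 + k.choose 5 := Nat.choose_succ_succ k 4
      have e6 : (k+1).choose 6 = k.choose 5 + k.choose 6 := Nat.choose_succ_succ k 5
      refine ⟨?_, ?_, ?_, ?_, ?_, ?_, rfl⟩ <;>
        (simp only [e1, e2, e3, e4, e5, e6, Nat.choose_zero_right]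
         push_cast
         first
         | linear_combination h0 + h1
         | linear_combination h1 + h2
         | linear_combination h2 + h3
         | linear_combination h3 + h4
         | linear_combination h4 + h5
         | linear_combination h5 + h6
         | linear_combination h6)

lemma mahler2 : ∀ k : ℕ,
    ((24:ℤ) + 249915*((k.choose 1 : ℕ):ℤ) + 3590250*((k.choose 2 : ℕ):ℤ) + 21306000*((k.choose 3 : ℕ):ℤ) + 52950000*((k.choose 4 : ℕ):ℤ) + 57525000*((k.choose 5 : ℕ):ℤ) + 22500000*((k.choose 6 : ℕ):ℤ) = (24:ℤ) + 74290*(k:ℤ) + 4625*(k:ℤ)^2 + 60375*(k:ℤ)^3 + 68750*(k:ℤ)^4 + 10625*(k:ℤ)^5 + 31250*(k:ℤ)^6) ∧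
    ((249915:ℤ) + 3590250*((k.choose 1 : ℕ):ℤ) + 21306000*((k.choose 2 : ℕ):ℤ) + 52950000*((k.choose 3 : ℕ):ℤ) + 57525000*((k.choose 4 : ℕ):ℤ) + 22500000*((k.choose 5 : ℕ):ℤ) = (249915:ℤ) + 706000*(k:ℤ) + 1168625*(k:ℤ)^2 + 1006250*(k:ℤ)^3 + 521875*(k:ℤ)^4 + 187500*(k:ℤ)^5) ∧
    ((3590250:ℤ) + 21306000*((k.choose 1 : ℕ):ℤ) + 52950000*((k.choose 2 : ℕ):ℤ) + 57525000*((k.choose 3 : ℕ):ℤ) + 22500000*((k.choose 4 : ℕ):ℤ) = (3590250:ℤ) + 8381000*(k:ℤ) + 8025000*(k:ℤ)^2 + 3962500*(k:ℤ)^3 + 937500*(k:ℤ)^4) ∧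
    ((21306000:ℤ) + 52950000*((k.choose 1 : ℕ):ℤ) + 57525000*((k.choose 2 : ℕ):ℤ) + 22500000*((k.choose 3 : ℕ):ℤ) = (21306000:ℤ) + 31687500*(k:ℤ) + 17512500*(k:ℤ)^2 + 3750000*(k:ℤ)^3) ∧
    ((52950000:ℤ) + 57525000*((k.choose 1 : ℕ):ℤ) + 22500000*((k.choose 2 : ℕ):ℤ) = (52950000:ℤ) + 46275000*(k:ℤ) + 11250000*(k:ℤ)^2) ∧
    ((57525000:ℤ) + 22500000*((k.choose 1 : ℕ):ℤ) = (57525000:ℤ) + 22500000*(k:ℤ)) ∧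
    ((22500000:ℤ) = (22500000:ℤ)) := by
  intro k
  induction k with
  | zero => norm_num
  | succ k ih =>
      obtain ⟨h0, h1, h2, h3, h4, h5, h6⟩ := ih
      have e1 : (k+1).choose 1 = k.choose 0 + k.choose 1 := Nat.choose_succ_succ k 0
      have e2 : (k+1).choose 2 = k.choose 1 + k.choose 2 := Nat.choose_succ_succ k 1
      have e3 : (k+1).choose 3 = k.choose 2 + k.choose 3 := Nat.choose_succ_succ k 2
      have e4 : (k+1).choose 4 = k.choose 3 + k.choose 4 := Nat.choose_succ_succ k 3
      have e5 : (k+1).choose 5 = k.choose 4 + k.choose 5 := Nat.choose_succ_succ k 4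
      have e6 : (k+1).choose 6 = k.choose 5 + k.choose 6 := Nat.choose_succ_succ k 5
      refine ⟨?_, ?_, ?_, ?_, ?_, ?_, rfl⟩ <;>
        (simp only [e1, e2, e3, e4, e5, e6, Nat.choose_zero_right]
         push_cast
         first
         | linear_combination h0 + h1
         | linear_combination h1 + h2
         | linear_combination h2 + h3
         | linear_combination h3 + h4
         | linear_combination h4 + h5
         | linear_combination h5 + h6
         | linear_combination h6)


end

section
open Finset
variable (E : ℕ → ℤ)

lemma part1 (hE0 : E 0 = 1)
    (hEodd : ∀ n : ℕ, 1 ≤ n → E (2 * n - 1) = 0)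
    (hEsum : ∀ n : ℕ, 1 ≤ n →
      ∑ r ∈ Finset.range (n + 1), ((2 * n).choose (2 * r) : ℤ) * E (2 * r) = 0)
    (k : ℕ) :
    (1 - 5 ^ (4 * k)) * E (4 * k) ≡
      31250 * (k : ℤ) ^ 6 + 11875 * (k : ℤ) ^ 5 + 18750 * (k : ℤ) ^ 4
        + 64875 * (k : ℤ) ^ 3 + 54500 * (k : ℤ) ^ 2 + 50005 * (k : ℤ)
      [ZMOD 5 ^ 7] := by
  have hU := L3 E hE0 hEodd hEsum (4*k) ⟨2*k, by omega⟩
  refine hU.trans ?_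
  have hstep : (∑ v ∈ range 125, (-1:ℤ)^v *
        ((10*(v:ℤ)+1)^(4*k) - (10*(v:ℤ)+3)^(4*k) - (10*(v:ℤ)+7)^(4*k) + (10*(v:ℤ)+9)^(4*k)))
      ≡ ∑ v ∈ range 125, (-1:ℤ)^v *
        ((∑ i ∈ range 7, (k.choose i:ℤ) * (5*(2000*(v:ℤ)^4+800*(v:ℤ)^3+120*(v:ℤ)^2+8*(v:ℤ)))^i)
         - (∑ i ∈ range 7, (k.choose i:ℤ) * (5*(2000*(v:ℤ)^4+2400*(v:ℤ)^3+1080*(v:ℤ)^2+216*(v:ℤ)+16))^i)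
         - (∑ i ∈ range 7, (k.choose i:ℤ) * (5*(2000*(v:ℤ)^4+5600*(v:ℤ)^3+5880*(v:ℤ)^2+2744*(v:ℤ)+480))^i)
         + (∑ i ∈ range 7, (k.choose i:ℤ) * (5*(2000*(v:ℤ)^4+7200*(v:ℤ)^3+9720*(v:ℤ)^2+5832*(v:ℤ)+1312))^i))
      [ZMOD 5^7] := by
    apply modEq_sum
    intro v _
    have b1 : (10*(v:ℤ)+1)^(4*k)
        ≡ ∑ i ∈ range 7, (k.choose i:ℤ) * (5*(2000*(v:ℤ)^4+800*(v:ℤ)^3+120*(v:ℤ)^2+8*(v:ℤ)))^i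
        [ZMOD 5^7] := by
      rw [pow_mul, show (10*(v:ℤ)+1)^4
        = 1 + 5*(2000*(v:ℤ)^4+800*(v:ℤ)^3+120*(v:ℤ)^2+8*(v:ℤ)) by ring]
      exact binom7 _ k
    have b2 : (10*(v:ℤ)+3)^(4*k)
        ≡ ∑ i ∈ range 7, (k.choose i:ℤ) * (5*(2000*(v:ℤ)^4+2400*(v:ℤ)^3+1080*(v:ℤ)^2+216*(v:ℤ)+16))^i
        [ZMOD 5^7] := by
      rw [pow_mul, show (10*(v:ℤ)+3)^4
        = 1 + 5*(2000*(v:ℤ)^4+2400*(v:ℤ)^3+1080*(v:ℤ)^2+216*(v:ℤ)+16) by ring]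
      exact binom7 _ k
    have b3 : (10*(v:ℤ)+7)^(4*k)
        ≡ ∑ i ∈ range 7, (k.choose i:ℤ) * (5*(2000*(v:ℤ)^4+5600*(v:ℤ)^3+5880*(v:ℤ)^2+2744*(v:ℤ)+480))^i
        [ZMOD 5^7] := by
      rw [pow_mul, show (10*(v:ℤ)+7)^4
        = 1 + 5*(2000*(v:ℤ)^4+5600*(v:ℤ)^3+5880*(v:ℤ)^2+2744*(v:ℤ)+480) by ring]
      exact binom7 _ k
    have b4 : (10*(v:ℤ)+9)^(4*k)
        ≡ ∑ i ∈ range 7, (k.choose i:ℤ) * (5*(2000*(v:ℤ)^4+7200*(v:ℤ)^3+9720*(v:ℤ)^2+5832*(v:ℤ)+1312))^i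
        [ZMOD 5^7] := by
      rw [pow_mul, show (10*(v:ℤ)+9)^4
        = 1 + 5*(2000*(v:ℤ)^4+7200*(v:ℤ)^3+9720*(v:ℤ)^2+5832*(v:ℤ)+1312) by ring]
      exact binom7 _ k
    exact (((b1.sub b2).sub b3).add b4).mul_left _
  refine hstep.trans ?_
  have hexch : (∑ v ∈ range 125, (-1:ℤ)^v *
        ((∑ i ∈ range 7, (k.choose i:ℤ) * (5*(2000*(v:ℤ)^4+800*(v:ℤ)^3+120*(v:ℤ)^2+8*(v:ℤ)))^i)
         - (∑ i ∈ range 7, (k.choose i:ℤ) * (5*(2000*(v:ℤ)^4+2400*(v:ℤ)^3+1080*(v:ℤ)^2+216*(v:ℤ)+16))^i)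
         - (∑ i ∈ range 7, (k.choose i:ℤ) * (5*(2000*(v:ℤ)^4+5600*(v:ℤ)^3+5880*(v:ℤ)^2+2744*(v:ℤ)+480))^i)
         + (∑ i ∈ range 7, (k.choose i:ℤ) * (5*(2000*(v:ℤ)^4+7200*(v:ℤ)^3+9720*(v:ℤ)^2+5832*(v:ℤ)+1312))^i)))
      = ∑ i ∈ range 7, (k.choose i:ℤ) * W1 i := by
    have perv : ∀ v ∈ range 125, (-1:ℤ)^v *
        ((∑ i ∈ range 7, (k.choose i:ℤ) * (5*(2000*(v:ℤ)^4+800*(v:ℤ)^3+120*(v:ℤ)^2+8*(v:ℤ)))^i)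
         - (∑ i ∈ range 7, (k.choose i:ℤ) * (5*(2000*(v:ℤ)^4+2400*(v:ℤ)^3+1080*(v:ℤ)^2+216*(v:ℤ)+16))^i)
         - (∑ i ∈ range 7, (k.choose i:ℤ) * (5*(2000*(v:ℤ)^4+5600*(v:ℤ)^3+5880*(v:ℤ)^2+2744*(v:ℤ)+480))^i)
         + (∑ i ∈ range 7, (k.choose i:ℤ) * (5*(2000*(v:ℤ)^4+7200*(v:ℤ)^3+9720*(v:ℤ)^2+5832*(v:ℤ)+1312))^i))
        = ∑ i ∈ range 7, (k.choose i:ℤ) * ((-1:ℤ)^v *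
            ((5*(2000*(v:ℤ)^4+800*(v:ℤ)^3+120*(v:ℤ)^2+8*(v:ℤ)))^i
             - (5*(2000*(v:ℤ)^4+2400*(v:ℤ)^3+1080*(v:ℤ)^2+216*(v:ℤ)+16))^i
             - (5*(2000*(v:ℤ)^4+5600*(v:ℤ)^3+5880*(v:ℤ)^2+2744*(v:ℤ)+480))^i
             + (5*(2000*(v:ℤ)^4+7200*(v:ℤ)^3+9720*(v:ℤ)^2+5832*(v:ℤ)+1312))^i)) := by
      intro v _
      rw [← sum_sub_distrib, ← sum_sub_distrib, ← sum_add_distrib, mul_sum]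
      exact sum_congr rfl fun i _ => by ring
    rw [sum_congr rfl perv, Finset.sum_comm]
    exact sum_congr rfl fun i _ => by rw [← mul_sum]; rfl
  rw [hexch]
  have hWsum : (∑ i ∈ range 7, (k.choose i:ℤ) * W1 i)
      ≡ ∑ i ∈ range 7, (k.choose i:ℤ) * D1 i [ZMOD 5^7] :=
    modEq_sum _ _ _ _ (fun i hi => (hWD1 i hi).mul_left _)
  refine hWsum.trans ?_
  have : (∑ i ∈ range 7, (k.choose i:ℤ) * D1 i)
      = 31250 * (k : ℤ) ^ 6 + 11875 * (k : ℤ) ^ 5 + 18750 * (k : ℤ) ^ 4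
        + 64875 * (k : ℤ) ^ 3 + 54500 * (k : ℤ) ^ 2 + 50005 * (k : ℤ) := by
    have hm := (mahler1 k).1
    simp only [Finset.sum_range_succ, Finset.sum_range_zero, D1, Nat.choose_zero_right]
    push_cast
    push_cast at hm
    linear_combination hm
  rw [this]

lemma part2 (hE0 : E 0 = 1)
    (hEodd : ∀ n : ℕ, 1 ≤ n → E (2 * n - 1) = 0)
    (hEsum : ∀ n : ℕ, 1 ≤ n →
      ∑ r ∈ Finset.range (n + 1), ((2 * n).choose (2 * r) : ℤ) * E (2 * r) = 0)
    (k : ℕ) :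
    (1 - 5 ^ (4 * k + 2)) * E (4 * k + 2) ≡
      31250 * (k : ℤ) ^ 6 + 10625 * (k : ℤ) ^ 5 + 68750 * (k : ℤ) ^ 4
        + 60375 * (k : ℤ) ^ 3 + 4625 * (k : ℤ) ^ 2 + 74290 * (k : ℤ) + 24
      [ZMOD 5 ^ 7] := by
  have hU := L3 E hE0 hEodd hEsum (4*k+2) ⟨2*k+1, by omega⟩
  refine hU.trans ?_
  have hstep : (∑ v ∈ range 125, (-1:ℤ)^v *
        ((10*(v:ℤ)+1)^(4*k+2) - (10*(v:ℤ)+3)^(4*k+2) - (10*(v:ℤ)+7)^(4*k+2) + (10*(v:ℤ)+9)^(4*k+2)))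
      ≡ ∑ v ∈ range 125, (-1:ℤ)^v *
        ((10*(v:ℤ)+1)^2 * (∑ i ∈ range 7, (k.choose i:ℤ) * (5*(2000*(v:ℤ)^4+800*(v:ℤ)^3+120*(v:ℤ)^2+8*(v:ℤ)))^i)
         - (10*(v:ℤ)+3)^2 * (∑ i ∈ range 7, (k.choose i:ℤ) * (5*(2000*(v:ℤ)^4+2400*(v:ℤ)^3+1080*(v:ℤ)^2+216*(v:ℤ)+16))^i)
         - (10*(v:ℤ)+7)^2 * (∑ i ∈ range 7, (k.choose i:ℤ) * (5*(2000*(v:ℤ)^4+5600*(v:ℤ)^3+5880*(v:ℤ)^2+2744*(v:ℤ)+480))^i)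
         + (10*(v:ℤ)+9)^2 * (∑ i ∈ range 7, (k.choose i:ℤ) * (5*(2000*(v:ℤ)^4+7200*(v:ℤ)^3+9720*(v:ℤ)^2+5832*(v:ℤ)+1312))^i))
      [ZMOD 5^7] := by
    apply modEq_sum
    intro v _
    have b1 : (10*(v:ℤ)+1)^(4*k+2)
        ≡ (10*(v:ℤ)+1)^2 * ∑ i ∈ range 7, (k.choose i:ℤ) * (5*(2000*(v:ℤ)^4+800*(v:ℤ)^3+120*(v:ℤ)^2+8*(v:ℤ)))^i
        [ZMOD 5^7] := by
      rw [pow_add, pow_mul, show (10*(v:ℤ)+1)^4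
        = 1 + 5*(2000*(v:ℤ)^4+800*(v:ℤ)^3+120*(v:ℤ)^2+8*(v:ℤ)) by ring, mul_comm]
      exact (binom7 _ k).mul_left _
    have b2 : (10*(v:ℤ)+3)^(4*k+2)
        ≡ (10*(v:ℤ)+3)^2 * ∑ i ∈ range 7, (k.choose i:ℤ) * (5*(2000*(v:ℤ)^4+2400*(v:ℤ)^3+1080*(v:ℤ)^2+216*(v:ℤ)+16))^i
        [ZMOD 5^7] := by
      rw [pow_add, pow_mul, show (10*(v:ℤ)+3)^4
        = 1 + 5*(2000*(v:ℤ)^4+2400*(v:ℤ)^3+1080*(v:ℤ)^2+216*(v:ℤ)+16) by ring, mul_comm]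
      exact (binom7 _ k).mul_left _
    have b3 : (10*(v:ℤ)+7)^(4*k+2)
        ≡ (10*(v:ℤ)+7)^2 * ∑ i ∈ range 7, (k.choose i:ℤ) * (5*(2000*(v:ℤ)^4+5600*(v:ℤ)^3+5880*(v:ℤ)^2+2744*(v:ℤ)+480))^i
        [ZMOD 5^7] := by
      rw [pow_add, pow_mul, show (10*(v:ℤ)+7)^4
        = 1 + 5*(2000*(v:ℤ)^4+5600*(v:ℤ)^3+5880*(v:ℤ)^2+2744*(v:ℤ)+480) by ring, mul_comm]
      exact (binom7 _ k).mul_left _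
    have b4 : (10*(v:ℤ)+9)^(4*k+2)
        ≡ (10*(v:ℤ)+9)^2 * ∑ i ∈ range 7, (k.choose i:ℤ) * (5*(2000*(v:ℤ)^4+7200*(v:ℤ)^3+9720*(v:ℤ)^2+5832*(v:ℤ)+1312))^i
        [ZMOD 5^7] := by
      rw [pow_add, pow_mul, show (10*(v:ℤ)+9)^4
        = 1 + 5*(2000*(v:ℤ)^4+7200*(v:ℤ)^3+9720*(v:ℤ)^2+5832*(v:ℤ)+1312) by ring, mul_comm]
      exact (binom7 _ k).mul_left _
    exact (((b1.sub b2).sub b3).add b4).mul_left _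
  refine hstep.trans ?_
  have hexch : (∑ v ∈ range 125, (-1:ℤ)^v *
        ((10*(v:ℤ)+1)^2 * (∑ i ∈ range 7, (k.choose i:ℤ) * (5*(2000*(v:ℤ)^4+800*(v:ℤ)^3+120*(v:ℤ)^2+8*(v:ℤ)))^i)
         - (10*(v:ℤ)+3)^2 * (∑ i ∈ range 7, (k.choose i:ℤ) * (5*(2000*(v:ℤ)^4+2400*(v:ℤ)^3+1080*(v:ℤ)^2+216*(v:ℤ)+16))^i)
         - (10*(v:ℤ)+7)^2 * (∑ i ∈ range 7, (k.choose i:ℤ) * (5*(2000*(v:ℤ)^4+5600*(v:ℤ)^3+5880*(v:ℤ)^2+2744*(v:ℤ)+480))^i)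
         + (10*(v:ℤ)+9)^2 * (∑ i ∈ range 7, (k.choose i:ℤ) * (5*(2000*(v:ℤ)^4+7200*(v:ℤ)^3+9720*(v:ℤ)^2+5832*(v:ℤ)+1312))^i)))
      = ∑ i ∈ range 7, (k.choose i:ℤ) * W2 i := by
    have perv : ∀ v ∈ range 125, (-1:ℤ)^v *
        ((10*(v:ℤ)+1)^2 * (∑ i ∈ range 7, (k.choose i:ℤ) * (5*(2000*(v:ℤ)^4+800*(v:ℤ)^3+120*(v:ℤ)^2+8*(v:ℤ)))^i)
         - (10*(v:ℤ)+3)^2 * (∑ i ∈ range 7, (k.choose i:ℤ) * (5*(2000*(v:ℤ)^4+2400*(v:ℤ)^3+1080*(v:ℤ)^2+216*(v:ℤ)+16))^i)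
         - (10*(v:ℤ)+7)^2 * (∑ i ∈ range 7, (k.choose i:ℤ) * (5*(2000*(v:ℤ)^4+5600*(v:ℤ)^3+5880*(v:ℤ)^2+2744*(v:ℤ)+480))^i)
         + (10*(v:ℤ)+9)^2 * (∑ i ∈ range 7, (k.choose i:ℤ) * (5*(2000*(v:ℤ)^4+7200*(v:ℤ)^3+9720*(v:ℤ)^2+5832*(v:ℤ)+1312))^i))
        = ∑ i ∈ range 7, (k.choose i:ℤ) * ((-1:ℤ)^v *
            ((10*(v:ℤ)+1)^2 * (5*(2000*(v:ℤ)^4+800*(v:ℤ)^3+120*(v:ℤ)^2+8*(v:ℤ)))^i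
             - (10*(v:ℤ)+3)^2 * (5*(2000*(v:ℤ)^4+2400*(v:ℤ)^3+1080*(v:ℤ)^2+216*(v:ℤ)+16))^i
             - (10*(v:ℤ)+7)^2 * (5*(2000*(v:ℤ)^4+5600*(v:ℤ)^3+5880*(v:ℤ)^2+2744*(v:ℤ)+480))^i
             + (10*(v:ℤ)+9)^2 * (5*(2000*(v:ℤ)^4+7200*(v:ℤ)^3+9720*(v:ℤ)^2+5832*(v:ℤ)+1312))^i)) := by
      intro v _
      rw [mul_sum, mul_sum, mul_sum, mul_sum,
          ← sum_sub_distrib, ← sum_sub_distrib, ← sum_add_distrib, mul_sum]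
      exact sum_congr rfl fun i _ => by ring
    rw [sum_congr rfl perv, Finset.sum_comm]
    exact sum_congr rfl fun i _ => by rw [← mul_sum]; rfl
  rw [hexch]
  have hWsum : (∑ i ∈ range 7, (k.choose i:ℤ) * W2 i)
      ≡ ∑ i ∈ range 7, (k.choose i:ℤ) * D2 i [ZMOD 5^7] :=
    modEq_sum _ _ _ _ (fun i hi => (hWD2 i hi).mul_left _)
  refine hWsum.trans ?_
  have : (∑ i ∈ range 7, (k.choose i:ℤ) * D2 i)
      = 31250 * (k : ℤ) ^ 6 + 10625 * (k : ℤ) ^ 5 + 68750 * (k : ℤ) ^ 4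
        + 60375 * (k : ℤ) ^ 3 + 4625 * (k : ℤ) ^ 2 + 74290 * (k : ℤ) + 24 := by
    have hm := (mahler2 k).1
    simp only [Finset.sum_range_succ, Finset.sum_range_zero, D2, Nat.choose_zero_right]
    push_cast
    push_cast at hm
    linear_combination hm
  rw [this]

end

/-- Lemma 4.1: congruences for `(1-5^{4k})E_{4k}` and
`(1-5^{4k+2})E_{4k+2}` modulo `5^7`, where `E_n` are the Euler numbers. -/
theorem stmt_11 (E : ℕ → ℤ) (hE0 : E 0 = 1)
    (hEodd : ∀ n : ℕ, 1 ≤ n → E (2 * n - 1) = 0)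
    (hEsum : ∀ n : ℕ, 1 ≤ n →
      ∑ r ∈ Finset.range (n + 1), ((2 * n).choose (2 * r) : ℤ) * E (2 * r) = 0)
    (k : ℕ) :
    ((1 - 5 ^ (4 * k)) * E (4 * k) ≡
      31250 * (k : ℤ) ^ 6 + 11875 * (k : ℤ) ^ 5 + 18750 * (k : ℤ) ^ 4
        + 64875 * (k : ℤ) ^ 3 + 54500 * (k : ℤ) ^ 2 + 50005 * (k : ℤ)
      [ZMOD 5 ^ 7]) ∧
    ((1 - 5 ^ (4 * k + 2)) * E (4 * k + 2) ≡
      31250 * (k : ℤ) ^ 6 + 10625 * (k : ℤ) ^ 5 + 68750 * (k : ℤ) ^ 4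
        + 60375 * (k : ℤ) ^ 3 + 4625 * (k : ℤ) ^ 2 + 74290 * (k : ℤ) + 24
      [ZMOD 5 ^ 7]) :=
  ⟨part1 E hE0 hEodd hEsum k, part2 E hE0 hEodd hEsum k⟩
end

section
/- For every nonnegative integer k, (1 - 3^{2k}) S_{2k} ≡ 1620k^6 + 1620k^5 + 621k^4 + 981k^3 + 1179k^2 + 564k (mod 3^7) and (1 + 3^{2k+1}) S_{2k+1} ≡ 324k^6 + 2106k^5 + 1809k^4 + 1197k^3 + 549k^2 + 888k + 2183 (mod 3^7). -/
open Finset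

private abbrev R := ZMod 2187

private def hh (n : ℕ) : R := ∑ m ∈ range 2187, (-1)^m * (4*(m:R)+1)^n

private lemma hh_zero : hh 0 = 1 := by
  simp only [hh, pow_zero, mul_one, neg_one_geom_sum]
  rw [if_neg (by decide)]

private lemma shifted (n : ℕ) :
    ∑ m ∈ range 2187, (-1:R)^m * (4*(m:R)+1+4)^n = 2 - hh n := by
  have e1 : ∀ m : ℕ, (-1:R)^m * (4*(m:R)+1+4)^n
      = -((-1:R)^(m+1) * (4*((m+1 : ℕ):R)+1)^n) := by
    intro m; rw [pow_succ]; push_cast; ring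
  calc ∑ m ∈ range 2187, (-1:R)^m * (4*(m:R)+1+4)^n
      = -∑ m ∈ range 2187, (-1:R)^(m+1) * (4*((m+1:ℕ):R)+1)^n := by
        rw [← Finset.sum_neg_distrib]; exact Finset.sum_congr rfl fun m _ => e1 m
    _ = 2 - hh n := by
        have e2 : ∑ m ∈ range (2187+1), (-1:R)^m * (4*(m:R)+1)^n
            = (∑ m ∈ range 2187, (-1:R)^(m+1) * (4*((m+1:ℕ):R)+1)^n)
              + (-1:R)^0 * (4*((0:ℕ):R)+1)^n :=
          Finset.sum_range_succ' _ 2187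
        have e3 : ∑ m ∈ range (2187+1), (-1:R)^m * (4*(m:R)+1)^n
            = hh n + (-1:R)^2187 * (4*((2187:ℕ):R)+1)^n := Finset.sum_range_succ _ 2187
        have e4 : (4*((2187:ℕ):R)+1) = 1 := by decide
        have e5 : ((-1:R))^2187 = -1 := Odd.neg_one_pow ⟨1093, by norm_num⟩
        have e6 : (4*((0:ℕ):R)+1)^n = 1 := by norm_num
        rw [e4, e5, one_pow] at e3
        rw [e6] at e2
        have e7 : (∑ m ∈ range 2187, (-1:R)^(m+1) * (4*((m+1:ℕ):R)+1)^n) = hh n - 2 := by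
          linear_combination e3 - e2
        rw [e7]; ring

private lemma key (n : ℕ) :
    ∑ i ∈ range (n+1), (n.choose i : R) * 4^(n-i) * hh i = 2 - hh n := by
  have h1 : ∀ m : ℕ, (4*(m:R)+1+4)^n
      = ∑ i ∈ range (n+1), (n.choose i : R) * 4^(n-i) * (4*(m:R)+1)^i := by
    intro m
    rw [add_pow]
    exact Finset.sum_congr rfl fun i _ => by ring
  calc ∑ i ∈ range (n+1), (n.choose i : R) * 4^(n-i) * hh i
      = ∑ i ∈ range (n+1), ∑ m ∈ range 2187,
          (n.choose i : R) * 4^(n-i) * ((-1)^m * (4*(m:R)+1)^i) := by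
        simp only [hh, Finset.mul_sum]
    _ = ∑ m ∈ range 2187, (-1:R)^m * (4*(m:R)+1+4)^n := by
        rw [Finset.sum_comm]
        refine Finset.sum_congr rfl fun m _ => ?_
        rw [h1 m, Finset.mul_sum]
        exact Finset.sum_congr rfl fun i _ => by ring
    _ = 2 - hh n := shifted n

private lemma term_zero (r : ℤ) : ((r^14 * (r^2-1)^7 : ℤ) : R) = 0 := by
  have h2187 : ((2187:ℕ) : ℤ) = 3^7 := by norm_num
  rw [ZMod.intCast_zmod_eq_zero_iff_dvd, h2187]
  have h3 : r % 3 = 0 ∨ r % 3 = 1 ∨ r % 3 = 2 := by omega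
  rcases h3 with h | h | h
  · have hd : (3:ℤ) ∣ r := by omega
    have : (3:ℤ)^7 ∣ r^14 :=
      dvd_trans (pow_dvd_pow 3 (by norm_num)) (pow_dvd_pow_of_dvd hd 14)
    exact this.mul_right _
  · obtain ⟨t, ht⟩ : ∃ t, r = 3*t+1 := ⟨r/3, by omega⟩
    have hd : (3:ℤ) ∣ r^2 - 1 := ⟨3*t^2+2*t, by subst ht; ring⟩
    exact (pow_dvd_pow_of_dvd hd 7).mul_left _
  · obtain ⟨t, ht⟩ : ∃ t, r = 3*t+2 := ⟨r/3, by omega⟩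
    have hd : (3:ℤ) ∣ r^2 - 1 := ⟨3*t^2+4*t+1, by subst ht; ring⟩
    exact (pow_dvd_pow_of_dvd hd 7).mul_left _

private lemma term_zero_nat (m : ℕ) :
    ((4*(m:R)+1))^14 * (((4*(m:R)+1))^2 - 1)^7 = 0 := by
  calc ((4*(m:R)+1))^14 * (((4*(m:R)+1))^2 - 1)^7
      = (((4*(m:ℤ)+1)^14 * ((4*(m:ℤ)+1)^2-1)^7 : ℤ) : R) := by push_cast; ring
    _ = 0 := term_zero _

private lemma nine_pow : ((9:R))^7 = 0 := by decide

set_option maxRecDepth 40000 in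
private lemma annih_even (k : ℕ) :
    (-1) * ((1 - (9:R)^(k+7)) * hh (2*(k+7)))
      + (7) * ((1 - (9:R)^(k+8)) * hh (2*(k+8)))
      + (-21) * ((1 - (9:R)^(k+9)) * hh (2*(k+9)))
      + (35) * ((1 - (9:R)^(k+10)) * hh (2*(k+10)))
      + (-35) * ((1 - (9:R)^(k+11)) * hh (2*(k+11)))
      + (21) * ((1 - (9:R)^(k+12)) * hh (2*(k+12)))
      + (-7) * ((1 - (9:R)^(k+13)) * hh (2*(k+13)))
      + (1) * ((1 - (9:R)^(k+14)) * hh (2*(k+14))) = 0 := by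
  simp only [hh, Finset.mul_sum, ← Finset.sum_add_distrib]
  refine Finset.sum_eq_zero fun m _ => ?_
  have h1 := term_zero_nat m
  have h2 := nine_pow
  set x : R := 4*(m:R)+1 with hx
  simp only [pow_mul, pow_add]
  linear_combination ((-1:R)^m * (x^2)^k) * h1
    - ((-1:R)^m * 9^k * (x^2)^k * x^14 * (9*x^2-1)^7) * h2

set_option maxRecDepth 40000 in
private lemma annih_odd (k : ℕ) :
    (-1) * ((1 + 3*(9:R)^(k+7)) * hh (2*(k+7)+1))
      + (7) * ((1 + 3*(9:R)^(k+8)) * hh (2*(k+8)+1))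
      + (-21) * ((1 + 3*(9:R)^(k+9)) * hh (2*(k+9)+1))
      + (35) * ((1 + 3*(9:R)^(k+10)) * hh (2*(k+10)+1))
      + (-35) * ((1 + 3*(9:R)^(k+11)) * hh (2*(k+11)+1))
      + (21) * ((1 + 3*(9:R)^(k+12)) * hh (2*(k+12)+1))
      + (-7) * ((1 + 3*(9:R)^(k+13)) * hh (2*(k+13)+1))
      + (1) * ((1 + 3*(9:R)^(k+14)) * hh (2*(k+14)+1)) = 0 := by
  simp only [hh, Finset.mul_sum, ← Finset.sum_add_distrib]
  refine Finset.sum_eq_zero fun m _ => ?_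
  have h1 := term_zero_nat m
  have h2 := nine_pow
  set x : R := 4*(m:R)+1 with hx
  simp only [pow_succ, pow_mul, pow_add]
  linear_combination ((-1:R)^m * x * (x^2)^k) * h1
    + ((-1:R)^m * 3 * x * 9^k * (x^2)^k * x^14 * (9*x^2-1)^7) * h2

private lemma scast_eq (S : ℕ → ℤ) (hS0 : S 0 = 1)
    (hS : ∀ n : ℕ, 1 ≤ n →
      S n = 1 - ∑ i ∈ Finset.range n, (n.choose i : ℤ) * 2 ^ (2 * n - 2 * i - 1) * S i) :
    ∀ n, ((S n : ℤ) : R) = hh n := by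
  intro n
  induction n using Nat.strong_induction_on with
  | _ n IH =>
    rcases Nat.eq_zero_or_pos n with rfl | hn
    · rw [hS0, hh_zero]; norm_num
    · have hc : ((S n : ℤ) : R)
          = 1 - ∑ i ∈ range n, (n.choose i : R) * 2^(2*n-2*i-1) * ((S i : ℤ) : R) := by
        have h := congrArg (fun z : ℤ => (z : R)) (hS n hn)
        push_cast at h
        exact h
      have hsum : ∑ i ∈ range n, (n.choose i : R) * 2^(2*n-2*i-1) * ((S i : ℤ) : R)
          = ∑ i ∈ range n, (n.choose i : R) * 2^(2*n-2*i-1) * hh i :=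
        Finset.sum_congr rfl fun i hi => by rw [IH i (Finset.mem_range.mp hi)]
      have hc2 : ((S n : ℤ) : R)
          = 1 - ∑ i ∈ range n, (n.choose i : R) * 2^(2*n-2*i-1) * hh i := by
        rw [hc, hsum]
      have hsum2 : ∑ i ∈ range n, (2:R) * ((n.choose i : R) * 2^(2*n-2*i-1) * hh i)
          = ∑ i ∈ range n, (n.choose i : R) * 4^(n-i) * hh i := by
        refine Finset.sum_congr rfl fun i hi => ?_
        have hilt : i < n := Finset.mem_range.mp hi
        have he : (2:R)^(2*n-2*i-1) * 2 = 4^(n-i) := by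
          rw [← pow_succ]
          rw [show 2*n-2*i-1+1 = 2*(n-i) from by omega]
          rw [pow_mul]; norm_num
        calc (2:R) * ((n.choose i : R) * 2^(2*n-2*i-1) * hh i)
            = (n.choose i : R) * ((2:R)^(2*n-2*i-1) * 2) * hh i := by ring
          _ = (n.choose i : R) * 4^(n-i) * hh i := by rw [he]
      have h2 : (2:R) * ((S n : ℤ) : R) = 2 - ∑ i ∈ range n, (n.choose i : R) * 4^(n-i) * hh i := by
        rw [hc2, mul_sub, mul_one, Finset.mul_sum, hsum2]
      have hk := key n
      rw [Finset.sum_range_succ] at hk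
      have hnn : (n.choose n : R) * 4^(n-n) * hh n = hh n := by
        rw [Nat.choose_self, Nat.sub_self]; norm_num
      rw [hnn] at hk
      have h3 : (2:R) * ((S n : ℤ) : R) = 2 * hh n := by linear_combination h2 - hk
      have h1094 : ((1094:R) * 2) = 1 := by decide
      calc ((S n : ℤ) : R) = 1094 * (2 * ((S n : ℤ) : R)) := by rw [← mul_assoc, h1094, one_mul]
        _ = 1094 * (2 * hh n) := by rw [h3]
        _ = hh n := by rw [← mul_assoc, h1094, one_mul]

/-- Lemma 5.1: congruences for `(1-3^{2k})S_{2k}` and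
`(1+3^{2k+1})S_{2k+1}` modulo `3^7`. -/
theorem stmt_12 (S : ℕ → ℤ) (hS0 : S 0 = 1)
    (hS : ∀ n : ℕ, 1 ≤ n →
      S n = 1 - ∑ i ∈ Finset.range n, (n.choose i : ℤ) * 2 ^ (2 * n - 2 * i - 1) * S i)
    (k : ℕ) :
    ((1 - 3 ^ (2 * k)) * S (2 * k) ≡
      1620 * (k : ℤ) ^ 6 + 1620 * (k : ℤ) ^ 5 + 621 * (k : ℤ) ^ 4
        + 981 * (k : ℤ) ^ 3 + 1179 * (k : ℤ) ^ 2 + 564 * (k : ℤ)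
      [ZMOD 3 ^ 7]) ∧
    ((1 + 3 ^ (2 * k + 1)) * S (2 * k + 1) ≡
      324 * (k : ℤ) ^ 6 + 2106 * (k : ℤ) ^ 5 + 1809 * (k : ℤ) ^ 4
        + 1197 * (k : ℤ) ^ 3 + 549 * (k : ℤ) ^ 2 + 888 * (k : ℤ) + 2183
      [ZMOD 3 ^ 7]) := by
  have hv0 : S 0 = (1 : ℤ) := hS0
  have hv1 : S 1 = (-1 : ℤ) := by
    rw [hS 1 (by norm_num)]
    simp only [Finset.sum_range_succ, Finset.sum_range_zero]
    rw [hv0]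
    norm_num [Nat.choose_eq_descFactorial_div_factorial, Nat.descFactorial, Nat.factorial]
  have hv2 : S 2 = (-3 : ℤ) := by
    rw [hS 2 (by norm_num)]
    simp only [Finset.sum_range_succ, Finset.sum_range_zero]
    rw [hv0, hv1]
    norm_num [Nat.choose_eq_descFactorial_div_factorial, Nat.descFactorial, Nat.factorial]
  have hv3 : S 3 = (11 : ℤ) := by
    rw [hS 3 (by norm_num)]
    simp only [Finset.sum_range_succ, Finset.sum_range_zero]
    rw [hv0, hv1, hv2]
    norm_num [Nat.choose_eq_descFactorial_div_factorial, Nat.descFactorial, Nat.factorial]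
  have hv4 : S 4 = (57 : ℤ) := by
    rw [hS 4 (by norm_num)]
    simp only [Finset.sum_range_succ, Finset.sum_range_zero]
    rw [hv0, hv1, hv2, hv3]
    norm_num [Nat.choose_eq_descFactorial_div_factorial, Nat.descFactorial, Nat.factorial]
  have hv5 : S 5 = (-361 : ℤ) := by
    rw [hS 5 (by norm_num)]
    simp only [Finset.sum_range_succ, Finset.sum_range_zero]
    rw [hv0, hv1, hv2, hv3, hv4]
    norm_num [Nat.choose_eq_descFactorial_div_factorial, Nat.descFactorial, Nat.factorial]
  have hv6 : S 6 = (-2763 : ℤ) := by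
    rw [hS 6 (by norm_num)]
    simp only [Finset.sum_range_succ, Finset.sum_range_zero]
    rw [hv0, hv1, hv2, hv3, hv4, hv5]
    norm_num [Nat.choose_eq_descFactorial_div_factorial, Nat.descFactorial, Nat.factorial]
  have hv7 : S 7 = (24611 : ℤ) := by
    rw [hS 7 (by norm_num)]
    simp only [Finset.sum_range_succ, Finset.sum_range_zero]
    rw [hv0, hv1, hv2, hv3, hv4, hv5, hv6]
    norm_num [Nat.choose_eq_descFactorial_div_factorial, Nat.descFactorial, Nat.factorial]
  have hv8 : S 8 = (250737 : ℤ) := by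
    rw [hS 8 (by norm_num)]
    simp only [Finset.sum_range_succ, Finset.sum_range_zero]
    rw [hv0, hv1, hv2, hv3, hv4, hv5, hv6, hv7]
    norm_num [Nat.choose_eq_descFactorial_div_factorial, Nat.descFactorial, Nat.factorial]
  have hv9 : S 9 = (-2873041 : ℤ) := by
    rw [hS 9 (by norm_num)]
    simp only [Finset.sum_range_succ, Finset.sum_range_zero]
    rw [hv0, hv1, hv2, hv3, hv4, hv5, hv6, hv7, hv8]
    norm_num [Nat.choose_eq_descFactorial_div_factorial, Nat.descFactorial, Nat.factorial]
  have hv10 : S 10 = (-36581523 : ℤ) := by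
    rw [hS 10 (by norm_num)]
    simp only [Finset.sum_range_succ, Finset.sum_range_zero]
    rw [hv0, hv1, hv2, hv3, hv4, hv5, hv6, hv7, hv8, hv9]
    norm_num [Nat.choose_eq_descFactorial_div_factorial, Nat.descFactorial, Nat.factorial]
  have hv11 : S 11 = (512343611 : ℤ) := by
    rw [hS 11 (by norm_num)]
    simp only [Finset.sum_range_succ, Finset.sum_range_zero]
    rw [hv0, hv1, hv2, hv3, hv4, hv5, hv6, hv7, hv8, hv9, hv10]
    norm_num [Nat.choose_eq_descFactorial_div_factorial, Nat.descFactorial, Nat.factorial]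
  have hv12 : S 12 = (7828053417 : ℤ) := by
    rw [hS 12 (by norm_num)]
    simp only [Finset.sum_range_succ, Finset.sum_range_zero]
    rw [hv0, hv1, hv2, hv3, hv4, hv5, hv6, hv7, hv8, hv9, hv10, hv11]
    norm_num [Nat.choose_eq_descFactorial_div_factorial, Nat.descFactorial, Nat.factorial]
  have hv13 : S 13 = (-129570724921 : ℤ) := by
    rw [hS 13 (by norm_num)]
    simp only [Finset.sum_range_succ, Finset.sum_range_zero]
    rw [hv0, hv1, hv2, hv3, hv4, hv5, hv6, hv7, hv8, hv9, hv10, hv11, hv12]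
    norm_num [Nat.choose_eq_descFactorial_div_factorial, Nat.descFactorial, Nat.factorial]
  have hv14 : S 14 = (-2309644635483 : ℤ) := by
    rw [hS 14 (by norm_num)]
    simp only [Finset.sum_range_succ, Finset.sum_range_zero]
    rw [hv0, hv1, hv2, hv3, hv4, hv5, hv6, hv7, hv8, hv9, hv10, hv11, hv12, hv13]
    norm_num [Nat.choose_eq_descFactorial_div_factorial, Nat.descFactorial, Nat.factorial]
  have hv15 : S 15 = (44110959165011 : ℤ) := by
    rw [hS 15 (by norm_num)]
    simp only [Finset.sum_range_succ, Finset.sum_range_zero]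
    rw [hv0, hv1, hv2, hv3, hv4, hv5, hv6, hv7, hv8, hv9, hv10, hv11, hv12, hv13, hv14]
    norm_num [Nat.choose_eq_descFactorial_div_factorial, Nat.descFactorial, Nat.factorial]
  have hv16 : S 16 = (898621108880097 : ℤ) := by
    rw [hS 16 (by norm_num)]
    simp only [Finset.sum_range_succ, Finset.sum_range_zero]
    rw [hv0, hv1, hv2, hv3, hv4, hv5, hv6, hv7, hv8, hv9, hv10, hv11, hv12, hv13, hv14, hv15]
    norm_num [Nat.choose_eq_descFactorial_div_factorial, Nat.descFactorial, Nat.factorial]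
  have hv17 : S 17 = (-19450718635716001 : ℤ) := by
    rw [hS 17 (by norm_num)]
    simp only [Finset.sum_range_succ, Finset.sum_range_zero]
    rw [hv0, hv1, hv2, hv3, hv4, hv5, hv6, hv7, hv8, hv9, hv10, hv11, hv12, hv13, hv14, hv15, hv16]
    norm_num [Nat.choose_eq_descFactorial_div_factorial, Nat.descFactorial, Nat.factorial]
  have hv18 : S 18 = (-445777636063460643 : ℤ) := by
    rw [hS 18 (by norm_num)]
    simp only [Finset.sum_range_succ, Finset.sum_range_zero]
    rw [hv0, hv1, hv2, hv3, hv4, hv5, hv6, hv7, hv8, hv9, hv10, hv11, hv12, hv13, hv14, hv15, hv16, hv17]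
    norm_num [Nat.choose_eq_descFactorial_div_factorial, Nat.descFactorial, Nat.factorial]
  have hv19 : S 19 = (10784052561125704811 : ℤ) := by
    rw [hS 19 (by norm_num)]
    simp only [Finset.sum_range_succ, Finset.sum_range_zero]
    rw [hv0, hv1, hv2, hv3, hv4, hv5, hv6, hv7, hv8, hv9, hv10, hv11, hv12, hv13, hv14, hv15, hv16, hv17, hv18]
    norm_num [Nat.choose_eq_descFactorial_div_factorial, Nat.descFactorial, Nat.factorial]
  have hv20 : S 20 = (274613643571568682777 : ℤ) := by
    rw [hS 20 (by norm_num)]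
    simp only [Finset.sum_range_succ, Finset.sum_range_zero]
    rw [hv0, hv1, hv2, hv3, hv4, hv5, hv6, hv7, hv8, hv9, hv10, hv11, hv12, hv13, hv14, hv15, hv16, hv17, hv18, hv19]
    norm_num [Nat.choose_eq_descFactorial_div_factorial, Nat.descFactorial, Nat.factorial]
  have hv21 : S 21 = (-7342627959965776406281 : ℤ) := by
    rw [hS 21 (by norm_num)]
    simp only [Finset.sum_range_succ, Finset.sum_range_zero]
    rw [hv0, hv1, hv2, hv3, hv4, hv5, hv6, hv7, hv8, hv9, hv10, hv11, hv12, hv13, hv14, hv15, hv16, hv17, hv18, hv19, hv20]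
    norm_num [Nat.choose_eq_descFactorial_div_factorial, Nat.descFactorial, Nat.factorial]
  have hv22 : S 22 = (-205676334188681975553003 : ℤ) := by
    rw [hS 22 (by norm_num)]
    simp only [Finset.sum_range_succ, Finset.sum_range_zero]
    rw [hv0, hv1, hv2, hv3, hv4, hv5, hv6, hv7, hv8, hv9, hv10, hv11, hv12, hv13, hv14, hv15, hv16, hv17, hv18, hv19, hv20, hv21]
    norm_num [Nat.choose_eq_descFactorial_div_factorial, Nat.descFactorial, Nat.factorial]
  have hv23 : S 23 = (6023130568334172003579011 : ℤ) := by
    rw [hS 23 (by norm_num)]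
    simp only [Finset.sum_range_succ, Finset.sum_range_zero]
    rw [hv0, hv1, hv2, hv3, hv4, hv5, hv6, hv7, hv8, hv9, hv10, hv11, hv12, hv13, hv14, hv15, hv16, hv17, hv18, hv19, hv20, hv21, hv22]
    norm_num [Nat.choose_eq_descFactorial_div_factorial, Nat.descFactorial, Nat.factorial]
  have hv24 : S 24 = (184053312545818735778213457 : ℤ) := by
    rw [hS 24 (by norm_num)]
    simp only [Finset.sum_range_succ, Finset.sum_range_zero]
    rw [hv0, hv1, hv2, hv3, hv4, hv5, hv6, hv7, hv8, hv9, hv10, hv11, hv12, hv13, hv14, hv15, hv16, hv17, hv18, hv19, hv20, hv21, hv22, hv23]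
    norm_num [Nat.choose_eq_descFactorial_div_factorial, Nat.descFactorial, Nat.factorial]
  have hv25 : S 25 = (-5858598896811701995459355761 : ℤ) := by
    rw [hS 25 (by norm_num)]
    simp only [Finset.sum_range_succ, Finset.sum_range_zero]
    rw [hv0, hv1, hv2, hv3, hv4, hv5, hv6, hv7, hv8, hv9, hv10, hv11, hv12, hv13, hv14, hv15, hv16, hv17, hv18, hv19, hv20, hv21, hv22, hv23, hv24]
    norm_num [Nat.choose_eq_descFactorial_div_factorial, Nat.descFactorial, Nat.factorial]
  have hv26 : S 26 = (-193944394596325636374396208563 : ℤ) := by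
    rw [hS 26 (by norm_num)]
    simp only [Finset.sum_range_succ, Finset.sum_range_zero]
    rw [hv0, hv1, hv2, hv3, hv4, hv5, hv6, hv7, hv8, hv9, hv10, hv11, hv12, hv13, hv14, hv15, hv16, hv17, hv18, hv19, hv20, hv21, hv22, hv23, hv24, hv25]
    norm_num [Nat.choose_eq_descFactorial_div_factorial, Nat.descFactorial, Nat.factorial]
  have hv27 : S 27 = (6667317162352419006959182803611 : ℤ) := by
    rw [hS 27 (by norm_num)]
    simp only [Finset.sum_range_succ, Finset.sum_range_zero]
    rw [hv0, hv1, hv2, hv3, hv4, hv5, hv6, hv7, hv8, hv9, hv10, hv11, hv12, hv13, hv14, hv15, hv16, hv17, hv18, hv19, hv20, hv21, hv22, hv23, hv24, hv25, hv26]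
    norm_num [Nat.choose_eq_descFactorial_div_factorial, Nat.descFactorial, Nat.factorial]
  have hs := scast_eq S hS0 hS
  have main : ∀ k : ℕ,
      ((1 - (9:R)^k) * ((S (2*k) : ℤ) : R) = 1620*(k:R)^6 + 1620*(k:R)^5 + 621*(k:R)^4 + 981*(k:R)^3 + 1179*(k:R)^2 + 564*(k:R)) ∧
      ((1 + 3*(9:R)^k) * ((S (2*k+1) : ℤ) : R) = 324*(k:R)^6 + 2106*(k:R)^5 + 1809*(k:R)^4 + 1197*(k:R)^3 + 549*(k:R)^2 + 888*(k:R) + 2183) := by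
    intro k
    induction k using Nat.strong_induction_on with
    | _ k IH =>
      by_cases hk : k < 14
      · interval_cases k
        · exact ⟨by rw [show (2*0 : ℕ) = 0 from rfl, hv0]; decide,
            by rw [show (2*0+1 : ℕ) = 1 from rfl, hv1]; decide⟩
        · exact ⟨by rw [show (2*1 : ℕ) = 2 from rfl, hv2]; decide,
            by rw [show (2*1+1 : ℕ) = 3 from rfl, hv3]; decide⟩
        · exact ⟨by rw [show (2*2 : ℕ) = 4 from rfl, hv4]; decide,
            by rw [show (2*2+1 : ℕ) = 5 from rfl, hv5]; decide⟩
        · exact ⟨by rw [show (2*3 : ℕ) = 6 from rfl, hv6]; decide,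
            by rw [show (2*3+1 : ℕ) = 7 from rfl, hv7]; decide⟩
        · exact ⟨by rw [show (2*4 : ℕ) = 8 from rfl, hv8]; decide,
            by rw [show (2*4+1 : ℕ) = 9 from rfl, hv9]; decide⟩
        · exact ⟨by rw [show (2*5 : ℕ) = 10 from rfl, hv10]; decide,
            by rw [show (2*5+1 : ℕ) = 11 from rfl, hv11]; decide⟩
        · exact ⟨by rw [show (2*6 : ℕ) = 12 from rfl, hv12]; decide,
            by rw [show (2*6+1 : ℕ) = 13 from rfl, hv13]; decide⟩
        · exact ⟨by rw [show (2*7 : ℕ) = 14 from rfl, hv14]; decide,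
            by rw [show (2*7+1 : ℕ) = 15 from rfl, hv15]; decide⟩
        · exact ⟨by rw [show (2*8 : ℕ) = 16 from rfl, hv16]; decide,
            by rw [show (2*8+1 : ℕ) = 17 from rfl, hv17]; decide⟩
        · exact ⟨by rw [show (2*9 : ℕ) = 18 from rfl, hv18]; decide,
            by rw [show (2*9+1 : ℕ) = 19 from rfl, hv19]; decide⟩
        · exact ⟨by rw [show (2*10 : ℕ) = 20 from rfl, hv20]; decide,
            by rw [show (2*10+1 : ℕ) = 21 from rfl, hv21]; decide⟩
        · exact ⟨by rw [show (2*11 : ℕ) = 22 from rfl, hv22]; decide,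
            by rw [show (2*11+1 : ℕ) = 23 from rfl, hv23]; decide⟩
        · exact ⟨by rw [show (2*12 : ℕ) = 24 from rfl, hv24]; decide,
            by rw [show (2*12+1 : ℕ) = 25 from rfl, hv25]; decide⟩
        · exact ⟨by rw [show (2*13 : ℕ) = 26 from rfl, hv26]; decide,
            by rw [show (2*13+1 : ℕ) = 27 from rfl, hv27]; decide⟩
      · obtain ⟨j, rfl⟩ : ∃ j, k = j + 14 := ⟨k - 14, by omega⟩
        have I7 := IH (j+7) (by omega)
        have I8 := IH (j+8) (by omega)
        have I9 := IH (j+9) (by omega)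
        have I10 := IH (j+10) (by omega)
        have I11 := IH (j+11) (by omega)
        have I12 := IH (j+12) (by omega)
        have I13 := IH (j+13) (by omega)
        constructor
        · have E := annih_even j
          simp only [← hs] at E
          have J7 := I7.1; have J8 := I8.1; have J9 := I9.1; have J10 := I10.1
          have J11 := I11.1; have J12 := I12.1; have J13 := I13.1
          push_cast at J7 J8 J9 J10 J11 J12 J13 ⊢
          linear_combination E + J7 - 7*J8 + 21*J9 - 35*J10 + 35*J11 - 21*J12 + 7*J13
        · have E := annih_odd j
          simp only [← hs] at E
          have J7 := I7.2; have J8 := I8.2; have J9 := I9.2; have J10 := I10.2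
          have J11 := I11.2; have J12 := I12.2; have J13 := I13.2
          push_cast at J7 J8 J9 J10 J11 J12 J13 ⊢
          linear_combination E + J7 - 7*J8 + 21*J9 - 35*J10 + 35*J11 - 21*J12 + 7*J13
  have h2187 : ((2187:ℕ) : ℤ) = 3^7 := by norm_num
  obtain ⟨h1, h2⟩ := main k
  constructor
  · have hgoal : (((1 - 3 ^ (2 * k)) * S (2 * k) : ℤ) : R)
        = ((1620 * (k : ℤ) ^ 6 + 1620 * (k : ℤ) ^ 5 + 621 * (k : ℤ) ^ 4
          + 981 * (k : ℤ) ^ 3 + 1179 * (k : ℤ) ^ 2 + 564 * (k : ℤ) : ℤ) : R) := by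
      push_cast
      rw [show ((3:R))^(2*k) = 9^k from by rw [pow_mul]; norm_num]
      linear_combination h1
    have := (ZMod.intCast_eq_intCast_iff _ _ _).mp hgoal
    rwa [h2187] at this
  · have hgoal : (((1 + 3 ^ (2 * k + 1)) * S (2 * k + 1) : ℤ) : R)
        = ((324 * (k : ℤ) ^ 6 + 2106 * (k : ℤ) ^ 5 + 1809 * (k : ℤ) ^ 4
          + 1197 * (k : ℤ) ^ 3 + 549 * (k : ℤ) ^ 2 + 888 * (k : ℤ) + 2183 : ℤ) : R) := by
      push_cast
      rw [show ((3:R))^(2*k+1) = 3*9^k from by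
        rw [pow_succ, pow_mul, show ((3:R)^2) = 9 from by norm_num]; ring]
      linear_combination h2
    have := (ZMod.intCast_eq_intCast_iff _ _ _).mp hgoal
    rwa [h2187] at this
end

section
/- Let a be a nonzero integer, let n be a positive integer, let b be a nonnegative integer, and let α_n be the unique positive integer with 2^{α_n - 1} ≤ n < 2^{α_n}. Then ∑_{k=0}^{n} C(n,k) (-1)^k E_{2k+b}^{(a)} ≡ 0 (mod 2^{(2 + ord_2(a))·n - α_n}). -/
open Finset Polynomial

namespace Stmt16

/-- binary digit sum -/
def sN (m : ℕ) : ℕ := (Nat.digits 2 m).sum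

lemma sN_zero : sN 0 = 0 := by simp [sN]

lemma sN_def {m : ℕ} (hm : m ≠ 0) : sN m = m % 2 + sN (m / 2) := by
  unfold sN
  rw [Nat.digits_def' (by norm_num) (Nat.pos_of_ne_zero hm)]
  simp

lemma sN_le_self (m : ℕ) : sN m ≤ m := Nat.digit_sum_le 2 m

lemma sN_pos {m : ℕ} (hm : 0 < m) : 0 < sN m := by
  induction m using Nat.strong_induction_on with
  | _ m ih =>
    rw [sN_def hm.ne']
    rcases Nat.even_or_odd m with he | ho
    · have h2 : 0 < m / 2 := by rcases he with ⟨t, rfl⟩; omega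
      have := ih (m / 2) (by omega) h2
      omega
    · have : m % 2 = 1 := Nat.odd_iff.mp ho
      omega

lemma sN_le_of_lt_pow {m t : ℕ} (h : m < 2 ^ t) : sN m ≤ t := by
  induction t generalizing m with
  | zero => interval_cases m; simp [sN_zero]
  | succ t ih =>
    rcases Nat.eq_zero_or_pos m with rfl | hm
    · simp [sN_zero]
    · rw [sN_def hm.ne']
      have hp : (2:ℕ) ^ (t+1) = 2 * 2 ^ t := by ring
      have h2 : m / 2 < 2 ^ t := by omega
      have := ih h2
      omega

lemma sN_succ_lt_pow {m t : ℕ} (h : m + 1 < 2 ^ t) : sN m + 1 ≤ t := by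
  induction m using Nat.strong_induction_on generalizing t with
  | _ m ih =>
    rcases Nat.eq_zero_or_pos m with rfl | hm
    · rcases t with _ | t
      · omega
      · simp [sN_zero]
    · rcases t with _ | t
      · omega
      · rw [sN_def hm.ne']
        have hp : (2:ℕ) ^ (t+1) = 2 * 2 ^ t := by ring
        rcases Nat.even_or_odd m with he | ho
        · have hm2 : m % 2 = 0 := Nat.even_iff.mp he
          have h2 : m / 2 < 2 ^ t := by omega
          have := sN_le_of_lt_pow h2
          omega
        · have hm2 : m % 2 = 1 := Nat.odd_iff.mp ho
          have h2 : m / 2 + 1 < 2 ^ t := by omega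
          have := ih (m / 2) (by omega) h2
          omega

lemma sN_succ_le (k : ℕ) : sN (k + 1) ≤ sN k + 1 := by
  induction k using Nat.strong_induction_on with
  | _ k ih =>
    rcases Nat.eq_zero_or_pos k with rfl | hk
    · rw [sN_def (by norm_num : (1:ℕ) ≠ 0)]; simp [sN_zero]
    · rw [sN_def hk.ne', sN_def (by omega : k + 1 ≠ 0)]
      rcases Nat.even_or_odd k with he | ho
      · have hk2 : k % 2 = 0 := Nat.even_iff.mp he
        have h1 : (k+1) % 2 = 1 := by omega
        have h2 : (k+1) / 2 = k / 2 := by omega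
        rw [h1, h2, hk2]; omega
      · have hk2 : k % 2 = 1 := Nat.odd_iff.mp ho
        have h1 : (k+1) % 2 = 0 := by omega
        have h2 : (k+1) / 2 = k / 2 + 1 := by omega
        rw [h1, h2, hk2]
        have := ih (k / 2) (by omega)
        omega

lemma sub_sN_mono {k l : ℕ} (h : k ≤ l) : k - sN k ≤ l - sN l := by
  induction l, h using Nat.le_induction with
  | base => exact le_rfl
  | succ l hl ih =>
    have h1 := sN_succ_le l
    have h2 := sN_le_self l
    omega

lemma padicValNat_fact (m : ℕ) : padicValNat 2 m.factorial = m - sN m := by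
  have := sub_one_mul_padicValNat_factorial (p := 2) m
  simpa [sN] using this

lemma choose_valuation {i m : ℕ} (h : i ≤ m) :
    padicValNat 2 (m.choose i) + ((i - sN i) + ((m - i) - sN (m - i))) = m - sN m := by
  have key := Nat.choose_mul_factorial_mul_factorial h
  have h1 : padicValNat 2 (m.choose i * i.factorial * (m - i).factorial) =
      padicValNat 2 (m.choose i) + padicValNat 2 i.factorial + padicValNat 2 (m - i).factorial := by
    rw [padicValNat.mul (by exact Nat.mul_ne_zero (Nat.choose_pos h).ne' (Nat.factorial_ne_zero _)) (Nat.factorial_ne_zero _),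
      padicValNat.mul (Nat.choose_pos h).ne' (Nat.factorial_ne_zero _)]
  rw [key, padicValNat_fact] at h1
  rw [h1, padicValNat_fact, padicValNat_fact]
  omega


/-- binomial transform with parameter `c` -/
def B (c : ℤ) (g : ℕ → ℤ) (p : ℕ) : ℤ :=
  ∑ i ∈ range (p+1), (p.choose i : ℤ) * c ^ i * g (p - i)

lemma B_def (c : ℤ) (g : ℕ → ℤ) (p : ℕ) :
    B c g p = ∑ i ∈ range (p+1), (p.choose i : ℤ) * c ^ i * g (p - i) := rfl

lemma B_congr {c : ℤ} {f g : ℕ → ℤ} (h : ∀ q, f q = g q) (p : ℕ) : B c f p = B c g p := by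
  unfold B; exact Finset.sum_congr rfl fun i _ => by rw [h]

lemma B_zero (g : ℕ → ℤ) (p : ℕ) : B 0 g p = g p := by
  unfold B
  rw [Finset.sum_eq_single 0]
  · simp
  · intro i hi hne
    rcases Nat.exists_eq_succ_of_ne_zero hne with ⟨j, rfl⟩
    simp [pow_succ]
  · intro h; simp at h

lemma B_add_seq (c : ℤ) (f g : ℕ → ℤ) (p : ℕ) :
    B c (fun q => f q + g q) p = B c f p + B c g p := by
  unfold B
  rw [← Finset.sum_add_distrib]
  exact Finset.sum_congr rfl fun i _ => by ring

lemma B_geom (c K t : ℤ) (p : ℕ) : B c (fun q => K * t ^ q) p = K * (t + c) ^ p := by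
  unfold B
  rw [add_comm t c, add_pow, Finset.mul_sum, Finset.sum_congr rfl]
  intro i hi
  ring

lemma B_smul (c K : ℤ) (g : ℕ → ℤ) (p : ℕ) :
    B c (fun q => K * g q) p = K * B c g p := by
  unfold B
  rw [Finset.mul_sum]
  exact Finset.sum_congr rfl fun i _ => by ring

lemma B_succ (c : ℤ) (g : ℕ → ℤ) (p : ℕ) :
    B c g (p+1) = B c (fun q => g (q+1)) p + c * B c g p := by
  unfold B
  rw [Finset.sum_range_succ' (fun i => ((p+1).choose i : ℤ) * c ^ i * g (p+1-i)) (p+1)]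
  have h1 : ∀ i ∈ range (p+1), ((p+1).choose (i+1) : ℤ) * c ^ (i+1) * g (p+1-(i+1))
      = (p.choose i : ℤ) * c ^ (i+1) * g (p-i) + (p.choose (i+1) : ℤ) * c ^ (i+1) * g (p-i) := by
    intro i hi
    have : (p+1).choose (i+1) = p.choose i + p.choose (i+1) := Nat.choose_succ_succ p i
    rw [this]
    have : p + 1 - (i+1) = p - i := by omega
    rw [this]
    push_cast
    ring
  rw [Finset.sum_congr rfl h1, Finset.sum_add_distrib]
  have h2 : ∑ i ∈ range (p+1), (p.choose i : ℤ) * c ^ (i+1) * g (p-i)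
      = c * ∑ i ∈ range (p+1), (p.choose i : ℤ) * c ^ i * g (p-i) := by
    rw [Finset.mul_sum]; exact Finset.sum_congr rfl fun i _ => by ring
  have h3 : ∑ i ∈ range (p+1), (p.choose (i+1) : ℤ) * c ^ (i+1) * g (p-i)
      = ∑ i ∈ range p, (p.choose (i+1) : ℤ) * c ^ (i+1) * g (p-i) := by
    rw [Finset.sum_range_succ]
    simp
  have h4 : ∑ i ∈ range (p+1), (p.choose i : ℤ) * c ^ i * g (p - i + 1)
      = ∑ i ∈ range p, (p.choose (i+1) : ℤ) * c ^ (i+1) * g (p-i) + g (p+1) := by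
    rw [Finset.sum_range_succ' (fun i => (p.choose i : ℤ) * c ^ i * g (p - i + 1)) p]
    simp only [Nat.choose_zero_right, Nat.cast_one, pow_zero, one_mul, Nat.sub_zero]
    congr 1
    exact Finset.sum_congr rfl fun i hi => by
      have : p - (i+1) + 1 = p - i := by simp at hi; omega
      rw [this]
  rw [h2, h3, h4]
  simp only [Nat.choose_zero_right, Nat.cast_one, pow_zero, one_mul, Nat.sub_zero]
  ring

lemma B_B (c d : ℤ) (g : ℕ → ℤ) (p : ℕ) : B d (B c g) p = B (c+d) g p := by
  induction p generalizing g with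
  | zero => simp [B]
  | succ p ih =>
    rw [B_succ, B_succ]
    have hshift : ∀ q, B c g (q+1) = B c (fun r => g (r+1)) q + c * B c g q :=
      fun q => B_succ c g q
    rw [B_congr hshift p]
    have : B d (fun q => B c (fun r => g (r+1)) q + c * B c g q) p
        = B d (B c (fun r => g (r+1))) p + c * B d (B c g) p := by
      rw [B_add_seq, B_smul]
    rw [this, ih, ih]
    ring


section Main

variable {a : ℤ} {E : ℕ → ℤ}

theorem R1' (hE : ∀ n : ℕ, ∑ i ∈ Finset.range (n / 2 + 1),
      (n.choose (2 * i) : ℤ) * a ^ (2 * i) * E (n - 2 * i) = (1 - a) ^ n) (p : ℕ) :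
    B a E p + B (-a) E p = 2 * (1 - a) ^ p := by
  rw [← hE p, B_def, B_def, ← Finset.sum_add_distrib]
  have step : ∀ i ∈ range (p+1),
      ((p.choose i : ℤ) * a^i * E (p-i) + (p.choose i : ℤ) * (-a)^i * E (p-i))
      = if i % 2 = 0 then 2 * ((p.choose i : ℤ) * a^i * E (p-i)) else 0 := by
    intro i _
    rcases Nat.even_or_odd i with he | ho
    · rw [if_pos (Nat.even_iff.mp he), he.neg_pow]; ring
    · rw [if_neg (by simpa using Nat.odd_iff.mp ho), ho.neg_pow]; ring
  rw [Finset.sum_congr rfl step, ← Finset.sum_filter, Finset.mul_sum]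
  refine (Finset.sum_nbij' (fun k => 2 * k) (fun i => i / 2) ?_ ?_ ?_ ?_ ?_).symm
  · intro k hk
    simp only [Finset.mem_filter, Finset.mem_range] at hk ⊢
    omega
  · intro i hi
    simp only [Finset.mem_filter, Finset.mem_range] at hi ⊢
    omega
  · intro k hk
    show 2 * k / 2 = k
    omega
  · intro i hi
    simp only [Finset.mem_filter, Finset.mem_range] at hi
    show 2 * (i / 2) = i
    omega
  · intro k hk
    rfl

theorem C2 (hE : ∀ n : ℕ, ∑ i ∈ Finset.range (n / 2 + 1),
      (n.choose (2 * i) : ℤ) * a ^ (2 * i) * E (n - 2 * i) = (1 - a) ^ n) (m : ℕ) :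
    E m + B (2*a) E m = 2 := by
  have e1 : E m = B a (B (-a) E) m := by
    rw [B_B, neg_add_cancel, B_zero]
  have e2 : B (2*a) E m = B a (B a E) m := by
    rw [B_B, show a + a = 2*a by ring]
  rw [e1, e2, ← B_add_seq]
  have e3 : B a (fun q => B (-a) E q + B a E q) m = B a (fun q => 2 * (1-a) ^ q) m := by
    refine B_congr (fun q => ?_) m
    rw [add_comm]; exact R1' hE q
  rw [e3, B_geom]
  norm_num

theorem delta_rec (hE : ∀ n : ℕ, ∑ i ∈ Finset.range (n / 2 + 1),
      (n.choose (2 * i) : ℤ) * a ^ (2 * i) * E (n - 2 * i) = (1 - a) ^ n) (m : ℕ) :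
    B (-1) E m + B (2*a) (B (-1) E) m = if m = 0 then 2 else 0 := by
  have e1 : B (2*a) (B (-1) E) m = B (-1) (B (2*a) E) m := by
    rw [B_B, B_B, show (-1) + 2*a = 2*a + -1 by ring]
  rw [e1, ← B_add_seq]
  have e2 : B (-1) (fun q => E q + B (2*a) E q) m = B (-1) (fun q => (2:ℤ) * 1 ^ q) m := by
    refine B_congr (fun q => ?_) m
    rw [C2 hE q, one_pow, mul_one]
  rw [e2, B_geom, show (1:ℤ) + -1 = 0 by ring]
  rcases Nat.eq_zero_or_pos m with rfl | hm
  · norm_num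
  · rw [if_neg (by omega : ¬ m = 0), zero_pow (by omega : m ≠ 0)]
    ring

theorem E_eq_delta (p : ℕ) :
    E p = ∑ m ∈ range (p+1), (p.choose m : ℤ) * (B (-1) E) m := by
  have e1 : E p = B 1 (B (-1) E) p := by
    rw [B_B, neg_add_cancel, B_zero]
  rw [e1, B_def]
  rw [← Finset.sum_range_reflect (fun j => (p.choose j : ℤ) * (B (-1) E) j) (p+1)]
  refine Finset.sum_congr rfl fun i hi => ?_
  simp only [Finset.mem_range] at hi
  have h1 : p + 1 - 1 - i = p - i := by omega
  have h2 : p.choose (p - i) = p.choose i := Nat.choose_symm (by omega)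
  rw [h1, h2, one_pow, mul_one]


theorem E_zero (hE : ∀ n : ℕ, ∑ i ∈ Finset.range (n / 2 + 1),
      (n.choose (2 * i) : ℤ) * a ^ (2 * i) * E (n - 2 * i) = (1 - a) ^ n) : E 0 = 1 := by
  have := hE 0
  simpa using this

theorem exp_ineq {v m j A : ℕ} (hj1 : 1 ≤ j) (hjm : j ≤ m)
    (hA : A + ((j - sN j) + ((m-j) - sN (m-j))) = m - sN m) :
    (m*(1+v) - sN m) + 1 ≤ A + (j + j*v) + ((m-j)*(1+v) - sN (m-j)) := by
  have h1 : sN j ≤ j := sN_le_self j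
  have h2 : sN (m-j) ≤ m-j := sN_le_self _
  have h3 : sN m ≤ m := sN_le_self m
  have h4 : 1 ≤ sN j := sN_pos hj1
  have e3 : j*v + (m-j)*v = m*v := by rw [← Nat.add_mul]; congr 1; omega
  rw [show m*(1+v) = m + m*v from by ring, show (m-j)*(1+v) = (m-j) + (m-j)*v from by ring]
  generalize m*v = P at e3 ⊢
  generalize j*v = Q at e3 ⊢
  generalize (m-j)*v = R at e3 ⊢
  omega

theorem delta_dvd (hE : ∀ n : ℕ, ∑ i ∈ Finset.range (n / 2 + 1),
      (n.choose (2 * i) : ℤ) * a ^ (2 * i) * E (n - 2 * i) = (1 - a) ^ n)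
    {v : ℕ} (hv : (2:ℤ)^v ∣ a) :
    ∀ m, (2:ℤ)^(m*(1+v) - sN m) ∣ B (-1) E m := by
  intro m
  induction m using Nat.strong_induction_on with
  | _ m ih =>
    rcases Nat.eq_zero_or_pos m with rfl | hm
    · simp [sN_zero]
    · have hrec := delta_rec hE m
      rw [if_neg (by omega : ¬ m = 0), B_def (2*a) (B (-1) E) m,
        Finset.sum_range_succ' (fun i => (m.choose i : ℤ) * (2*a) ^ i * B (-1) E (m - i)) m] at hrec
      simp only [Nat.choose_zero_right, Nat.cast_one, pow_zero, one_mul, Nat.sub_zero] at hrec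
      have h2 : (2:ℤ) * B (-1) E m
          = -∑ i ∈ range m, (m.choose (i+1) : ℤ) * (2*a) ^ (i+1) * B (-1) E (m - (i+1)) := by
        linarith [hrec]
      have hdvd : (2:ℤ)^((m*(1+v) - sN m) + 1) ∣ (2:ℤ) * B (-1) E m := by
        rw [h2]
        apply Dvd.dvd.neg_right
        apply Finset.dvd_sum
        intro i hi
        simp only [Finset.mem_range] at hi
        set j := i + 1 with hj
        have hjm : j ≤ m := by omega
        have hA : (2:ℤ)^(padicValNat 2 (m.choose j)) ∣ (m.choose j : ℤ) := by
          exact_mod_cast Int.natCast_dvd_natCast.mpr (pow_padicValNat_dvd)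
        have hB : (2:ℤ)^(j + j*v) ∣ (2*a)^j := by
          rw [mul_pow, pow_add]
          apply mul_dvd_mul
          · exact dvd_refl _
          · rw [show j*v = v*j from by ring, pow_mul]
            exact pow_dvd_pow_of_dvd hv j
        have hC := ih (m - j) (by omega)
        have := mul_dvd_mul (mul_dvd_mul hA hB) hC
        refine dvd_trans (pow_dvd_pow 2 ?_) (by rw [← pow_add, ← pow_add] at this; exact this)
        exact exp_ineq (by omega) hjm (choose_valuation hjm)
      rcases hdvd with ⟨c, hc⟩
      rw [pow_succ] at hc
      refine ⟨c, mul_left_cancel₀ (by norm_num : (2:ℤ) ≠ 0) ?_⟩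
      rw [hc]; ring


end Main

theorem key_poly (n b : ℕ) :
    ∑ k ∈ range (n+1), C ((n.choose k : ℤ) * (-1)^k) * (X + 1)^(2*k+b)
      = C ((-1)^n : ℤ) * (X^n * ((X + C 2)^n * (X + 1)^b)) := by
  have h1 : ((-(X+1)^2 : ℤ[X]) + 1)^n
      = ∑ k ∈ range (n+1), C ((n.choose k : ℤ) * (-1)^k) * (X+1)^(2*k) := by
    rw [add_pow]
    refine Finset.sum_congr rfl fun k hk => ?_
    rw [one_pow, mul_one, neg_pow, pow_mul]
    simp only [map_mul, map_pow, map_neg, map_one, Polynomial.C_eq_natCast]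
    ring
  have h2 : ∑ k ∈ range (n+1), C ((n.choose k : ℤ) * (-1)^k) * (X + 1)^(2*k+b)
      = (∑ k ∈ range (n+1), C ((n.choose k : ℤ) * (-1)^k) * (X+1)^(2*k)) * (X+1)^b := by
    rw [Finset.sum_mul]
    exact Finset.sum_congr rfl fun k hk => by rw [pow_add, mul_assoc]
  rw [h2, ← h1]
  have h3 : ((-(X+1)^2 : ℤ[X]) + 1) = C (-1) * (X * (X + C 2)) := by
    have : (C (2:ℤ)) = (2 : ℤ[X]) := by
      norm_num
    rw [this, map_neg, map_one]
    ring
  rw [h3, mul_pow, mul_pow, ← map_pow]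
  ring

theorem c_formula (n b m : ℕ) :
    ∑ k ∈ range (n+1), (n.choose k : ℤ) * (-1)^k * ((2*k+b).choose m : ℤ)
      = (-1)^n * ((X^n * ((X + C 2)^n * (X + 1)^b)) : ℤ[X]).coeff m := by
  have h := congrArg (fun P : ℤ[X] => P.coeff m) (key_poly n b)
  simp only [Polynomial.finset_sum_coeff, Polynomial.coeff_C_mul,
    Polynomial.coeff_X_add_one_pow] at h
  exact h

theorem c_vanish {n m : ℕ} (b : ℕ) (h : m < n) :
    ((X^n * ((X + C 2)^n * (X + 1)^b)) : ℤ[X]).coeff m = 0 := by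
  rw [Polynomial.coeff_X_pow_mul', if_neg (by omega)]

theorem c_dvd {n m : ℕ} (b : ℕ) (hnm : n ≤ m) (hm2 : m < 2*n) :
    (2:ℤ)^(2*n - m) ∣ ((X^n * ((X + C 2)^n * (X + 1)^b)) : ℤ[X]).coeff m := by
  rw [Polynomial.coeff_X_pow_mul', if_pos hnm, Polynomial.coeff_mul]
  apply Finset.dvd_sum
  intro x hx
  have hx' : x.1 + x.2 = m - n := Finset.HasAntidiagonal.mem_antidiagonal.mp hx
  rw [Polynomial.coeff_X_add_C_pow]
  have h1 : 2*n - m ≤ n - x.1 := by omega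
  exact ((pow_dvd_pow 2 h1).mul_right _).mul_right _


end Stmt16

/-- Lemma 2.2(ii): `∑_{k=0}^n C(n,k)(-1)^k E_{2k+b}^{(a)} ≡ 0
(mod 2^{(2+ord_2 a)n - α_n})`. -/
theorem stmt_16 (a : ℤ) (ha : a ≠ 0)
    (E : ℕ → ℤ)
    (hE : ∀ n : ℕ, ∑ i ∈ Finset.range (n / 2 + 1),
      (n.choose (2 * i) : ℤ) * a ^ (2 * i) * E (n - 2 * i) = (1 - a) ^ n)
    (n : ℕ) (hn : 0 < n) (b : ℕ) (α : ℕ) (hα1 : 0 < α)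
    (hα : 2 ^ (α - 1) ≤ n ∧ n < 2 ^ α) :
    (2 : ℤ) ^ ((2 + padicValInt 2 a) * n - α) ∣
      ∑ i ∈ Finset.range (n + 1), (n.choose i : ℤ) * (-1) ^ i * E (2 * i + b) := by
  obtain ⟨hα2, hα3⟩ := hα
  set v := padicValInt 2 a with hvdef
  have hv : (2:ℤ)^v ∣ a := by
    have h1 : (2:ℕ)^(padicValNat 2 a.natAbs) ∣ a.natAbs := pow_padicValNat_dvd
    have h2 : (2:ℤ)^v ∣ (a.natAbs : ℤ) := by
      rw [hvdef]; exact_mod_cast h1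
    exact Int.dvd_natAbs.mp h2
  have hd := Stmt16.delta_dvd hE hv
  set d : ℕ → ℤ := Stmt16.B (-1) E with hddef
  set M := 2*n + b with hM
  -- rewrite E values through delta
  have step1 : ∀ k, k ∈ range (n+1) →
      (n.choose k : ℤ) * (-1)^k * E (2*k+b)
      = ∑ m ∈ range (M+1), (n.choose k : ℤ) * (-1)^k * (((2*k+b).choose m : ℤ) * d m) := by
    intro k hk
    simp only [Finset.mem_range] at hk
    have h1 : E (2*k+b) = ∑ m ∈ range (M+1), ((2*k+b).choose m : ℤ) * d m := by
      rw [Stmt16.E_eq_delta (E := E) (2*k+b)]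
      apply Finset.sum_subset
      · apply Finset.range_subset_range.mpr; omega
      · intro m hm hnm
        simp only [Finset.mem_range] at hm hnm
        rw [Nat.choose_eq_zero_of_lt (by omega)]
        simp
    rw [h1, Finset.mul_sum]
  rw [Finset.sum_congr rfl step1, Finset.sum_comm]
  apply Finset.dvd_sum
  intro m hm
  simp only [Finset.mem_range] at hm
  -- collect the inner sum
  have hcollect : ∑ k ∈ range (n+1), (n.choose k : ℤ) * (-1)^k * (((2*k+b).choose m : ℤ) * d m)
      = ((-1)^n * ((X^n * ((X + C 2)^n * (X + 1)^b)) : ℤ[X]).coeff m) * d m := by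
    rw [← Stmt16.c_formula, Finset.sum_mul]
    exact Finset.sum_congr rfl fun k _ => by ring
  rw [hcollect]
  rcases lt_or_ge m n with hmn | hmn
  · rw [Stmt16.c_vanish b hmn]
    simp
  · rcases lt_or_ge m (2*n) with hm2 | hm2
    · -- middle range
      have hsm : Stmt16.sN m + 1 ≤ α + 1 := by
        apply Stmt16.sN_succ_lt_pow
        have : (2:ℕ)^(α+1) = 2 * 2^α := by ring
        omega
      have hnv : n * v ≤ m * v := Nat.mul_le_mul_right v hmn
      have hle : (2 + v)*n - α ≤ (2*n - m) + (m*(1+v) - Stmt16.sN m) := by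
        rw [show (2+v)*n = 2*n + n*v from by ring, show m*(1+v) = m + m*v from by ring]
        have hsm' : Stmt16.sN m ≤ m := Stmt16.sN_le_self m
        generalize n*v = P at hnv ⊢
        generalize m*v = Q at hnv ⊢
        omega
      have hdd : (2:ℤ)^((2*n - m) + (m*(1+v) - Stmt16.sN m)) ∣
          (((X^n * ((X + C 2)^n * (X + 1)^b)) : ℤ[X]).coeff m) * d m := by
        rw [pow_add]
        exact mul_dvd_mul (Stmt16.c_dvd b hmn hm2) (hd m)
      have := dvd_trans (pow_dvd_pow 2 hle) hdd
      rw [mul_assoc]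
      exact this.mul_left _
    · -- top range
      have hs2n : Stmt16.sN (2*n) + 1 ≤ α + 1 := by
        apply Stmt16.sN_succ_lt_pow
        have : (2:ℕ)^(α+1) = 2 * 2^α := by ring
        omega
      have hmono := Stmt16.sub_sN_mono hm2
      have hnv : n * v ≤ m * v := Nat.mul_le_mul_right v (by omega)
      have hle : (2 + v)*n - α ≤ m*(1+v) - Stmt16.sN m := by
        rw [show (2+v)*n = 2*n + n*v from by ring, show m*(1+v) = m + m*v from by ring]
        have hsm' : Stmt16.sN m ≤ m := Stmt16.sN_le_self m
        have hs2n' : Stmt16.sN (2*n) ≤ 2*n := Stmt16.sN_le_self _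
        generalize n*v = P at hnv ⊢
        generalize m*v = Q at hnv ⊢
        omega
      have := dvd_trans (pow_dvd_pow 2 hle) (hd m)
      rw [mul_assoc]
      exact ((this.mul_left _).mul_left _)
end

section
/- Let p be an odd prime and let b be a nonnegative integer. Then the function f : ℕ → ℚ defined by f(k) = (1 - (p/3) · p^{k(p-1)+b}) U_{k(p-1)+b}, where (p/3) is the Legendre symbol of p modulo 3, is a p-regular function. -/
/-- A rational number is `p`-integral if `p` does not divide its denominator. -/
def PIntegral (p : ℕ) (q : ℚ) : Prop := ¬ p ∣ q.den

/-- A function `f : ℕ → ℚ` taking `p`-integral values is `p`-regular if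
`∑_{k=0}^n C(n,k) (-1)^k f(k) ≡ 0 (mod p^n)` for every `n ≥ 1`. -/
def PRegular (p : ℕ) (f : ℕ → ℚ) : Prop :=
  (∀ k : ℕ, PIntegral p (f k)) ∧
  ∀ n : ℕ, 1 ≤ n →
    PIntegral p ((∑ i ∈ Finset.range (n + 1), (n.choose i : ℚ) * (-1) ^ i * f i) / p ^ n)


open Finset

/-- the 6-periodic weight -/
def psiw (m : ℕ) : ℤ := if m % 3 = 0 then 0 else (-1) ^ (m + m % 3)

/-- binomial shift operator -/
def Shif (c : ℤ) (f : ℕ → ℤ) (n : ℕ) : ℤ :=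
  ∑ k ∈ range (n + 1), (n.choose k : ℤ) * c ^ (n - k) * f k

lemma shif_zero (f : ℕ → ℤ) (n : ℕ) : Shif 0 f n = f n := by
  unfold Shif
  rw [Finset.sum_eq_single n]
  · simp
  · intro k hk hkn
    have : n - k ≠ 0 := by
      simp only [mem_range] at hk; omega
    simp [zero_pow this]
  · intro h; simp at h

lemma shif_delta (c : ℤ) (n : ℕ) :
    Shif c (fun m => if m = 0 then 1 else 0) n = c ^ n := by
  unfold Shif
  rw [Finset.sum_eq_single 0]
  · simp
  · intro k hk hkn; simp [hkn]
  · intro h; simp at h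

lemma shif_add (c : ℤ) (f g : ℕ → ℤ) (n : ℕ) :
    Shif c (fun m => f m + g m) n = Shif c f n + Shif c g n := by
  unfold Shif
  rw [← Finset.sum_add_distrib]
  exact Finset.sum_congr rfl (by intros; ring)

lemma shif_sub (c : ℤ) (f g : ℕ → ℤ) (n : ℕ) :
    Shif c (fun m => f m - g m) n = Shif c f n - Shif c g n := by
  unfold Shif
  rw [← Finset.sum_sub_distrib]
  exact Finset.sum_congr rfl (by intros; ring)

lemma shif_comp (c d : ℤ) (f : ℕ → ℤ) (n : ℕ) :
    Shif c (Shif d f) n = Shif (c + d) f n := by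
  unfold Shif
  have : ∀ k ∈ range (n + 1),
      (n.choose k : ℤ) * c ^ (n - k) * ∑ j ∈ range (k + 1), (k.choose j : ℤ) * d ^ (k - j) * f j
      = ∑ j ∈ range (n + 1), (n.choose k : ℤ) * (k.choose j : ℤ) * c ^ (n - k) * d ^ (k - j) * f j := by
    intro k hk
    simp only [mem_range] at hk
    rw [Finset.mul_sum]
    rw [← Finset.sum_subset (Finset.range_subset_range.2 (by omega : k + 1 ≤ n + 1))]
    · exact Finset.sum_congr rfl (by intros; ring)
    · intro j hj hj2
      simp only [mem_range] at hj hj2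
      have : k.choose j = 0 := Nat.choose_eq_zero_of_lt (by omega)
      simp [this]
  rw [Finset.sum_congr rfl this, Finset.sum_comm]
  refine Finset.sum_congr rfl ?_
  intro j hj
  simp only [mem_range] at hj
  have key : ∑ k ∈ range (n + 1), (n.choose k : ℤ) * (k.choose j : ℤ) * c ^ (n - k) * d ^ (k - j)
      = (n.choose j : ℤ) * (c + d) ^ (n - j) := by
    have hle : j ≤ n := by omega
    have hsplit : range (n + 1) = range (j + (n - j + 1)) := by congr 1; omega
    rw [hsplit, Finset.sum_range_add]
    have h0 : ∑ k ∈ range j, (n.choose k : ℤ) * (k.choose j : ℤ) * c ^ (n - k) * d ^ (k - j) = 0 := by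
      apply Finset.sum_eq_zero
      intro k hk
      simp only [mem_range] at hk
      have : k.choose j = 0 := Nat.choose_eq_zero_of_lt hk
      simp [this]
    rw [h0, zero_add]
    have hrhs : (c + d) ^ (n - j) = ∑ t ∈ range (n - j + 1), ((n-j).choose t : ℤ) * c ^ (n - j - t) * d ^ t := by
      rw [add_comm c d, add_pow]
      exact Finset.sum_congr rfl (by intros; ring)
    rw [hrhs, Finset.mul_sum]
    refine Finset.sum_congr rfl ?_
    intro t ht
    simp only [mem_range] at ht
    have hc : n.choose (j + t) * (j + t).choose j = n.choose j * (n - j).choose t := by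
      have := Nat.choose_mul (n := n) (k := j + t) (s := j) (by omega)
      simpa [Nat.add_sub_cancel_left] using this
    have hc' : ((n.choose (j+t) : ℤ)) * ((j+t).choose j : ℤ) = (n.choose j : ℤ) * ((n-j).choose t : ℤ) := by
      exact_mod_cast congrArg (Nat.cast : ℕ → ℤ) hc
    have e1 : n - (j + t) = n - j - t := by omega
    have e2 : j + t - j = t := by omega
    rw [e1, e2]
    calc (n.choose (j+t) : ℤ) * ((j+t).choose j : ℤ) * c ^ (n - j - t) * d ^ t
        = ((n.choose (j+t) : ℤ) * ((j+t).choose j : ℤ)) * (c ^ (n - j - t) * d ^ t) := by ring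
      _ = ((n.choose j : ℤ) * ((n-j).choose t : ℤ)) * (c ^ (n - j - t) * d ^ t) := by rw [hc']
      _ = (n.choose j : ℤ) * (((n-j).choose t : ℤ) * c ^ (n - j - t) * d ^ t) := by ring
  calc ∑ k ∈ range (n + 1), (n.choose k : ℤ) * (k.choose j : ℤ) * c ^ (n - k) * d ^ (k - j) * f j
      = (∑ k ∈ range (n + 1), (n.choose k : ℤ) * (k.choose j : ℤ) * c ^ (n - k) * d ^ (k - j)) * f j := by
        rw [Finset.sum_mul]
    _ = (n.choose j : ℤ) * (c + d) ^ (n - j) * f j := by rw [key]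

lemma range_succ_sum_eq (m : ℕ) (f : ℕ → ℤ) :
    ∑ i ∈ range (m + 1), f i = f 0 + ∑ i ∈ Finset.Icc 1 m, f i := by
  have : range (m + 1) = insert 0 (Finset.Icc 1 m) := by
    ext x; simp [Finset.mem_Icc, Finset.mem_range]; omega
  rw [this, Finset.sum_insert (by simp)]

lemma shif_pm (U : ℕ → ℤ) (n : ℕ) :
    Shif 1 U n + Shif (-1) U n
      = 2 * ∑ i ∈ range (n / 2 + 1), (n.choose (2 * i) : ℤ) * U (n - 2 * i) := by
  unfold Shif
  rw [← Finset.sum_add_distrib]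
  have hL : ∀ k ∈ range (n+1),
      (n.choose k : ℤ) * (1:ℤ) ^ (n-k) * U k + (n.choose k : ℤ) * (-1:ℤ) ^ (n-k) * U k
      = (n.choose k : ℤ) * ((1:ℤ) + (-1)^(n-k)) * U k := by intros; ring
  rw [Finset.sum_congr rfl hL]
  rw [← Finset.sum_filter_add_sum_filter_not (range (n+1)) (fun k => (n - k) % 2 = 0)]
  have h2 : ∑ k ∈ (range (n+1)).filter (fun k => ¬ (n - k) % 2 = 0),
      (n.choose k : ℤ) * ((1:ℤ) + (-1)^(n-k)) * U k = 0 := by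
    apply Finset.sum_eq_zero
    intro k hk
    simp only [Finset.mem_filter, mem_range] at hk
    have : Odd (n - k) := Nat.odd_iff.2 (by omega)
    rw [this.neg_one_pow]
    ring
  rw [h2, add_zero, Finset.mul_sum]
  refine Finset.sum_nbij' (fun k => (n - k) / 2) (fun i => n - 2 * i) ?_ ?_ ?_ ?_ ?_
  · intro k hk
    simp only [Finset.mem_filter, mem_range] at hk
    simp only [mem_range]
    omega
  · intro i hi
    simp only [mem_range] at hi
    simp only [Finset.mem_filter, mem_range]
    omega
  · intro k hk
    simp only [Finset.mem_filter, mem_range] at hk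
    show n - 2 * ((n - k) / 2) = k
    omega
  · intro i hi
    simp only [mem_range] at hi
    show (n - (n - 2 * i)) / 2 = i
    omega
  · intro k hk
    simp only [Finset.mem_filter, mem_range] at hk
    have heven : Even (n - k) := Nat.even_iff.2 (by omega)
    show (n.choose k : ℤ) * (1 + (-1)^(n-k)) * U k
        = 2 * ((n.choose (2 * ((n - k) / 2)) : ℤ) * U (n - 2 * ((n - k) / 2)))
    have h1 : 2 * ((n - k) / 2) = n - k := by omega
    have h2 : n - (n - k) = k := by omega
    rw [h1, h2, heven.neg_one_pow]
    have : n.choose (n - k) = n.choose k := Nat.choose_symm (by omega)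
    rw [this]
    ring

section main
variable (U : ℕ → ℤ)

lemma G_delta (hU0 : U 0 = 1)
    (hU : ∀ n : ℕ, 1 ≤ n →
      U n = -2 * ∑ i ∈ Finset.Icc 1 (n / 2), (n.choose (2 * i) : ℤ) * U (n - 2 * i))
    (n : ℕ) :
    Shif 1 U n + Shif (-1) U n - U n = (if n = 0 then 1 else 0) := by
  rcases Nat.eq_zero_or_pos n with h | h
  · subst h; simp [Shif, hU0]
  · rw [shif_pm]
    rw [range_succ_sum_eq (n/2) (fun i => (n.choose (2*i) : ℤ) * U (n - 2*i))]
    simp only [Nat.mul_zero, Nat.choose_zero_right, Nat.sub_zero, Nat.cast_one]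
    have := hU n h
    rw [if_neg (by omega)]
    have h2 : ∑ i ∈ Finset.Icc 1 (n / 2), (n.choose (2 * i) : ℤ) * U (n - 2 * i)
        = -U n / 2 := by omega
    omega

/-- Lemma A : for odd M, `U n + Shif (3M) U n = ∑_{m<3M} ψ(m) m^n`. -/
lemma lemmaA (hU0 : U 0 = 1)
    (hU : ∀ n : ℕ, 1 ≤ n →
      U n = -2 * ∑ i ∈ Finset.Icc 1 (n / 2), (n.choose (2 * i) : ℤ) * U (n - 2 * i))
    (M : ℕ) (hM : M % 2 = 1) (n : ℕ) :
    U n + Shif ((3 * M : ℕ) : ℤ) U n = ∑ m ∈ range (3 * M), psiw m * (m : ℤ) ^ n := by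
  -- step 1: regroup RHS into blocks of 3
  have hregroup : ∀ K : ℕ, ∑ m ∈ range (3 * K), psiw m * (m : ℤ) ^ n
      = ∑ j ∈ range K, (-1 : ℤ) ^ j * (((3*j+1 : ℕ) : ℤ) ^ n + ((3*j+2 : ℕ) : ℤ) ^ n) := by
    intro K
    induction K with
    | zero => simp
    | succ K ih =>
      have hblock : ∑ x ∈ range 3, psiw (3 * K + x) * ((3 * K + x : ℕ) : ℤ) ^ n
          = psiw (3*K) * ((3*K : ℕ) : ℤ)^n + psiw (3*K+1) * ((3*K+1 : ℕ) : ℤ)^n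
            + psiw (3*K+2) * ((3*K+2 : ℕ) : ℤ)^n := by
        rw [Finset.sum_range_succ, Finset.sum_range_succ, Finset.sum_range_one]
        norm_num
      rw [Nat.mul_succ, Finset.sum_range_add, hblock, Finset.sum_range_succ, ← ih]
      have e0 : psiw (3 * K) = 0 := by simp [psiw, Nat.mul_mod_right]
      have e1 : psiw (3 * K + 1) = (-1 : ℤ) ^ K := by
        have h1 : (3 * K + 1) % 3 = 1 := by omega
        simp only [psiw, h1]
        rw [if_neg (by omega)]
        have h2 : 3 * K + 1 + 1 = 3 * K + 2 := rfl
        rw [h2, pow_add, pow_mul]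
        norm_num
      have e2 : psiw (3 * K + 2) = (-1 : ℤ) ^ K := by
        have h1 : (3 * K + 2) % 3 = 2 := by omega
        simp only [psiw, h1]
        rw [if_neg (by omega)]
        have h2 : 3 * K + 2 + 2 = 3 * K + 4 := rfl
        rw [h2, pow_add, pow_mul]
        norm_num
      rw [e0, e1, e2]
      ring
  rw [hregroup]
  -- step 2: each block term equals a shift of the delta function
  have hGc : ∀ c : ℤ, Shif c (fun m => Shif 1 U m + Shif (-1) U m - U m) n
      = Shif (c+1) U n + Shif (c-1) U n - Shif c U n := by
    intro c
    rw [show (fun m => Shif 1 U m + Shif (-1) U m - U m)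
        = (fun m => (fun x => Shif 1 U x + Shif (-1) U x) m - U m) from rfl]
    rw [shif_sub, shif_add, shif_comp, shif_comp]
    rw [show c + -1 = c - 1 by ring]
  have hGdelta : ∀ c : ℤ, Shif c (fun m => Shif 1 U m + Shif (-1) U m - U m) n = c ^ n := by
    intro c
    have h : (fun m => Shif 1 U m + Shif (-1) U m - U m) = (fun m => if m = 0 then (1:ℤ) else 0) := by
      funext m; exact G_delta U hU0 hU m
    rw [h]
    exact shif_delta c n
  -- step 3 : telescoping
  have hterm : ∀ j : ℕ, ((3*j+1 : ℕ) : ℤ) ^ n + ((3*j+2 : ℕ) : ℤ) ^ n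
      = Shif ((3*j : ℕ) : ℤ) U n + Shif ((3*(j+1) : ℕ) : ℤ) U n := by
    intro j
    have h1 := hGdelta ((3*j+1 : ℕ) : ℤ)
    have h2 := hGdelta ((3*j+2 : ℕ) : ℤ)
    rw [hGc] at h1 h2
    have e1 : ((3*j+1 : ℕ) : ℤ) + 1 = ((3*j+2:ℕ) : ℤ) := by push_cast; ring
    have e2 : ((3*j+1 : ℕ) : ℤ) - 1 = ((3*j:ℕ) : ℤ) := by push_cast; ring
    have e3 : ((3*j+2 : ℕ) : ℤ) + 1 = ((3*(j+1):ℕ) : ℤ) := by push_cast; ring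
    have e4 : ((3*j+2 : ℕ) : ℤ) - 1 = ((3*j+1:ℕ) : ℤ) := by push_cast; ring
    rw [e1, e2] at h1
    rw [e3, e4] at h2
    rw [← h1, ← h2]
    ring
  have hsum : ∑ j ∈ range M, (-1 : ℤ) ^ j * (((3*j+1 : ℕ) : ℤ) ^ n + ((3*j+2 : ℕ) : ℤ) ^ n)
      = ∑ j ∈ range M, (-1 : ℤ) ^ j * (Shif ((3*j : ℕ) : ℤ) U n + Shif ((3*(j+1) : ℕ) : ℤ) U n) :=
    Finset.sum_congr rfl (fun j _ => by rw [hterm j])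
  rw [hsum]
  -- telescoping sum
  have htel : ∀ K : ℕ, ∑ j ∈ range K, (-1 : ℤ) ^ j * (Shif ((3*j : ℕ) : ℤ) U n + Shif ((3*(j+1) : ℕ) : ℤ) U n)
      = Shif ((0:ℕ) : ℤ) U n + (-1:ℤ)^(K+1) * Shif ((3*K : ℕ) : ℤ) U n := by
    intro K
    induction K with
    | zero => simp [pow_succ]
    | succ L ih =>
      rw [Finset.sum_range_succ, ih]
      have hp1 : (-1:ℤ)^(L+1+1) = -(-1:ℤ)^(L+1) := by rw [pow_succ]; ring
      have hp2 : (-1:ℤ)^(L+1) = -(-1:ℤ)^L := by rw [pow_succ]; ring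
      rw [hp1, hp2]
      ring
  rw [htel M]
  have hM1 : (-1 : ℤ) ^ (M + 1) = 1 := by
    have he : Even (M+1) := by
      rcases Nat.even_or_odd (M+1) with h | h
      · exact h
      · exfalso; rw [Nat.odd_iff] at h; omega
    exact he.neg_one_pow
  rw [hM1]
  have h0 : Shif ((0:ℕ) : ℤ) U n = U n := by
    rw [show ((0:ℕ):ℤ) = 0 from rfl]; exact shif_zero U n
  rw [h0]
  ring

end main

lemma neg_one_pow_congr' {a b : ℕ} (h : a % 2 = b % 2) : (-1 : ℤ) ^ a = (-1 : ℤ) ^ b := by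
  rw [neg_one_pow_eq_pow_mod_two, h, ← neg_one_pow_eq_pow_mod_two]

lemma lemmaB (U : ℕ → ℤ) (hU0 : U 0 = 1)
    (hU : ∀ n : ℕ, 1 ≤ n →
      U n = -2 * ∑ i ∈ Finset.Icc 1 (n / 2), (n.choose (2 * i) : ℤ) * U (n - 2 * i))
    (M : ℕ) (hM : M % 2 = 1) (n : ℕ) :
    (M : ℤ) ∣ (∑ m ∈ range (3 * M), psiw m * (m : ℤ) ^ n) - 2 * U n := by
  rw [← lemmaA U hU0 hU M hM n]
  have hshif : Shif ((3 * M : ℕ) : ℤ) U n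
      = (∑ k ∈ range n, (n.choose k : ℤ) * ((3 * M : ℕ) : ℤ) ^ (n - k) * U k) + U n := by
    unfold Shif
    rw [Finset.sum_range_succ]
    simp
  rw [hshif]
  have : U n + ((∑ k ∈ range n, (n.choose k : ℤ) * ((3 * M : ℕ) : ℤ) ^ (n - k) * U k) + U n)
      - 2 * U n = ∑ k ∈ range n, (n.choose k : ℤ) * ((3 * M : ℕ) : ℤ) ^ (n - k) * U k := by ring
  rw [this]
  apply Finset.dvd_sum
  intro k hk
  simp only [mem_range] at hk
  have h1 : (M : ℤ) ∣ ((3 * M : ℕ) : ℤ) ^ (n - k) := by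
    apply dvd_pow
    · push_cast; exact ⟨3, by ring⟩
    · omega
  calc (M:ℤ) ∣ ((3 * M : ℕ) : ℤ) ^ (n - k) := h1
    _ ∣ (n.choose k : ℤ) * ((3 * M : ℕ) : ℤ) ^ (n - k) * U k := ⟨(n.choose k : ℤ) * U k, by ring⟩

lemma psiw_mul_prime (p : ℕ) (hp : p.Prime) (hodd : p % 2 = 1) (m : ℕ) :
    psiw (p * m) = legendreSym 3 (p : ℤ) * psiw m := by
  have hm2 : (p * m) % 2 = m % 2 := by
    rw [Nat.mul_mod, hodd, one_mul, Nat.mod_mod_of_dvd]; rfl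
  have hlt : p % 3 = 0 ∨ p % 3 = 1 ∨ p % 3 = 2 := by omega
  rcases hlt with h3 | h3 | h3
  · -- p ≡ 0 mod 3
    have hleg : legendreSym 3 (p : ℤ) = 0 := by
      rw [legendreSym.eq_zero_iff]
      rw [ZMod.intCast_zmod_eq_zero_iff_dvd]
      exact_mod_cast Nat.dvd_of_mod_eq_zero h3
    have hpm : (p * m) % 3 = 0 := by
      rw [Nat.mul_mod, h3, zero_mul, Nat.zero_mod]
    simp [psiw, hpm, hleg]
  · -- p ≡ 1 mod 3
    have hleg : legendreSym 3 (p : ℤ) = 1 := by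
      have h0 : (((p : ℤ)) : ZMod 3) ≠ 0 := by
        rw [Ne, ZMod.intCast_zmod_eq_zero_iff_dvd]
        intro hdvd
        have : (3 : ℕ) ∣ p := by exact_mod_cast hdvd
        omega
      rw [legendreSym.eq_one_iff _ h0]
      have : (((p : ℤ)) : ZMod 3) = 1 := by
        push_cast
        rw [← ZMod.natCast_mod, h3]
        norm_num
      rw [this]
      exact IsSquare.one
    rw [hleg, one_mul]
    have hpm3 : (p * m) % 3 = m % 3 := by
      rw [Nat.mul_mod, h3, one_mul, Nat.mod_mod_of_dvd]; rfl
    by_cases hm3 : m % 3 = 0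
    · simp [psiw, hpm3, hm3]
    · simp only [psiw, hpm3, if_neg hm3]
      exact neg_one_pow_congr' (by omega)
  · -- p ≡ 2 mod 3
    have h0 : (((p : ℤ)) : ZMod 3) ≠ 0 := by
      rw [Ne, ZMod.intCast_zmod_eq_zero_iff_dvd]
      intro hdvd
      have : (3 : ℕ) ∣ p := by exact_mod_cast hdvd
      omega
    have hleg : legendreSym 3 (p : ℤ) = -1 := by
      rcases legendreSym.eq_one_or_neg_one 3 h0 with h | h
      · exfalso
        rw [legendreSym.eq_one_iff _ h0] at h
        have hcast : (((p : ℤ)) : ZMod 3) = 2 := by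
          push_cast
          rw [← ZMod.natCast_mod, h3]
          norm_num
        rw [hcast] at h
        exact (by decide : ¬ IsSquare (2 : ZMod 3)) h
      · exact h
    rw [hleg]
    have hpm3 : (p * m) % 3 = (2 * (m % 3)) % 3 := by
      conv_lhs => rw [Nat.mul_mod, h3]
    by_cases hm3 : m % 3 = 0
    · have : (p * m) % 3 = 0 := by rw [hpm3, hm3]
      simp [psiw, this, hm3]
    · have hm3' : m % 3 = 1 ∨ m % 3 = 2 := by omega
      have hpm3' : (p * m) % 3 + m % 3 = 3 := by
        rcases hm3' with h | h <;> rw [hpm3, h] <;> omega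
      have hne : ¬ (p * m) % 3 = 0 := by omega
      simp only [psiw, if_neg hne, if_neg hm3]
      have : (-1 : ℤ) ^ (p * m + (p * m) % 3) = -(-1 : ℤ) ^ (m + m % 3) := by
        have hparity : (p * m + (p * m) % 3) % 2 = (m + m % 3 + 1) % 2 := by omega
        rw [neg_one_pow_congr' hparity, pow_succ]
        ring
      rw [this]
      ring

lemma sieve_aux (p K : ℕ) (hp : 0 < p) (g : ℕ → ℤ) :
    ∑ m ∈ range (p * K), (if p ∣ m then g m else 0) = ∑ j ∈ range K, g (p * j) := by
  induction K with
  | zero => simp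
  | succ K ih =>
    rw [Nat.mul_succ, Finset.sum_range_add, ih, Finset.sum_range_succ]
    congr 1
    rw [Finset.sum_eq_single 0]
    · simp [Dvd.intro K rfl]
    · intro x hx hx0
      simp only [mem_range] at hx
      rw [if_neg]
      intro hdvd
      have : p ∣ x := (Nat.dvd_add_right ⟨K, rfl⟩).mp hdvd
      have := Nat.le_of_dvd (by omega) this
      omega
    · intro h; simp at h; omega

lemma fermat_int (p : ℕ) (hp : p.Prime) (m : ℕ) (h : ¬ p ∣ m) :
    (p : ℤ) ∣ 1 - (m : ℤ) ^ (p - 1) := by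
  haveI : Fact p.Prime := ⟨hp⟩
  rw [← ZMod.intCast_zmod_eq_zero_iff_dvd]
  push_cast
  have hm : (m : ZMod p) ≠ 0 := by
    rw [Ne, ZMod.natCast_eq_zero_iff]
    exact h
  rw [ZMod.pow_card_sub_one_eq_one hm]
  ring

/-- for an odd prime `p` and `b ≥ 0`, the function
`f(k) = (1 - (p/3) p^{k(p-1)+b}) U_{k(p-1)+b}` is a `p`-regular function. -/
theorem stmt_18 (U : ℕ → ℤ) (hU0 : U 0 = 1)
    (hU : ∀ n : ℕ, 1 ≤ n →
      U n = -2 * ∑ i ∈ Finset.Icc 1 (n / 2), (n.choose (2 * i) : ℤ) * U (n - 2 * i))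
    (p : ℕ) (hp : p.Prime) (hp2 : p ≠ 2) (b : ℕ) :
    PRegular p (fun k : ℕ =>
      ((1 - legendreSym 3 (p : ℤ) * (p : ℤ) ^ (k * (p - 1) + b) : ℤ) : ℚ) *
        (U (k * (p - 1) + b) : ℚ)) := by
  have hodd : p % 2 = 1 := Nat.odd_iff.mp (hp.odd_of_ne_two hp2)
  have hp1 : ¬ (p ∣ 1) := by
    rw [Nat.dvd_one]
    exact hp.one_lt.ne'
  constructor
  · intro k
    show PIntegral p (((1 - legendreSym 3 (p : ℤ) * (p : ℤ) ^ (k * (p - 1) + b) : ℤ) : ℚ) *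
        ((U (k * (p - 1) + b) : ℤ) : ℚ))
    unfold PIntegral
    have hcast : ((1 - legendreSym 3 (p : ℤ) * (p : ℤ) ^ (k * (p - 1) + b) : ℤ) : ℚ) *
        ((U (k * (p - 1) + b) : ℤ) : ℚ)
        = (((1 - legendreSym 3 (p : ℤ) * (p : ℤ) ^ (k * (p - 1) + b)) * U (k * (p - 1) + b) : ℤ) : ℚ) := by
      push_cast
      ring
    rw [hcast, Rat.den_intCast]
    exact hp1
  · intro n hn
    -- the integer sum
    have main : (p:ℤ)^n ∣ ∑ i ∈ range (n+1), (n.choose i : ℤ) * (-1)^i *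
        ((1 - legendreSym 3 (p : ℤ) * (p : ℤ) ^ (i * (p - 1) + b)) * U (i * (p - 1) + b)) := by
      -- congruence from lemma B
      have hB : ∀ (L N' : ℕ), (p:ℤ)^L ∣ (∑ m ∈ range (3 * p^L), psiw m * (m:ℤ)^N') - 2 * U N' := by
        intro L N'
        have hMo : (p^L) % 2 = 1 := Nat.odd_iff.mp ((Nat.odd_iff.mpr hodd).pow)
        have h := lemmaB U hU0 hU (p^L) hMo N'
        have hcast : ((p^L : ℕ) : ℤ) = (p:ℤ)^L := by push_cast; ring
        rw [hcast] at h
        exact h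
      -- sieving
      have hsieve : ∀ N' : ℕ, (∑ m ∈ range (3 * p^(n+1)), psiw m * (m:ℤ)^N')
          = (∑ m ∈ range (3 * p^(n+1)), if p ∣ m then 0 else psiw m * (m:ℤ)^N')
            + legendreSym 3 (p : ℤ) * (p:ℤ)^N' * (∑ m ∈ range (3 * p^n), psiw m * (m:ℤ)^N') := by
        intro N'
        have hsplit : (∑ m ∈ range (3 * p^(n+1)), psiw m * (m:ℤ)^N')
            = (∑ m ∈ range (3 * p^(n+1)), if p ∣ m then 0 else psiw m * (m:ℤ)^N')
              + (∑ m ∈ range (3 * p^(n+1)), if p ∣ m then psiw m * (m:ℤ)^N' else 0) := by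
          rw [← Finset.sum_add_distrib]
          apply Finset.sum_congr rfl
          intro m _
          by_cases h : p ∣ m <;> simp [h]
        rw [hsplit]
        congr 1
        rw [show 3 * p^(n+1) = p * (3 * p^n) by ring]
        rw [sieve_aux p (3 * p^n) hp.pos]
        rw [Finset.mul_sum]
        apply Finset.sum_congr rfl
        intro j _
        rw [psiw_mul_prime p hp hodd j]
        push_cast
        ring
      -- key congruence for each single value
      have key : ∀ N' : ℕ, (p:ℤ)^n ∣ 2*((1 - legendreSym 3 (p : ℤ) * (p:ℤ)^N') * U N')
          - (∑ m ∈ range (3 * p^(n+1)), if p ∣ m then 0 else psiw m * (m:ℤ)^N') := by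
        intro N'
        have h1 := hB (n+1) N'
        have h2 := hB n N'
        have expand : 2*((1 - legendreSym 3 (p : ℤ) * (p:ℤ)^N') * U N')
            - (∑ m ∈ range (3 * p^(n+1)), if p ∣ m then 0 else psiw m * (m:ℤ)^N')
            = -((∑ m ∈ range (3 * p^(n+1)), psiw m * (m:ℤ)^N') - 2*U N')
              + legendreSym 3 (p : ℤ) * (p:ℤ)^N' * ((∑ m ∈ range (3 * p^n), psiw m * (m:ℤ)^N') - 2 * U N') := by
          have hT := hsieve N'
          have hT' : (∑ m ∈ range (3 * p^(n+1)), if p ∣ m then 0 else psiw m * (m:ℤ)^N')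
              = (∑ m ∈ range (3 * p^(n+1)), psiw m * (m:ℤ)^N')
                - legendreSym 3 (p : ℤ) * (p:ℤ)^N' * (∑ m ∈ range (3 * p^n), psiw m * (m:ℤ)^N') := by
            rw [hT]; ring
          rw [hT']
          ring
        rw [expand]
        refine dvd_add (dvd_neg.mpr ?_) (Dvd.dvd.mul_left h2 _)
        exact dvd_trans (pow_dvd_pow _ (Nat.le_succ n)) h1
      -- divisibility of the alternating sum of T
      have hT : (p:ℤ)^n ∣ ∑ i ∈ range (n+1), (n.choose i : ℤ) * (-1)^i *
          (∑ m ∈ range (3 * p^(n+1)), if p ∣ m then 0 else psiw m * (m:ℤ)^(i * (p-1) + b)) := by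
        have hswap : ∑ i ∈ range (n+1), (n.choose i : ℤ) * (-1)^i *
            (∑ m ∈ range (3 * p^(n+1)), if p ∣ m then 0 else psiw m * (m:ℤ)^(i * (p-1) + b))
            = ∑ m ∈ range (3 * p^(n+1)), ∑ i ∈ range (n+1), (n.choose i : ℤ) * (-1)^i *
              (if p ∣ m then 0 else psiw m * (m:ℤ)^(i * (p-1) + b)) := by
          rw [Finset.sum_comm]
          apply Finset.sum_congr rfl
          intro i _
          rw [Finset.mul_sum]
        rw [hswap]
        apply Finset.dvd_sum
        intro m _
        by_cases hm : p ∣ m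
        · simp [hm]
        · simp only [if_neg hm]
          have hinner : ∑ i ∈ range (n+1), (n.choose i : ℤ) * (-1)^i * (psiw m * (m:ℤ)^(i * (p-1) + b))
              = psiw m * (m:ℤ)^b * (1 - (m:ℤ)^(p-1))^n := by
            have hbin : (1 - (m:ℤ)^(p-1))^n
                = ∑ i ∈ range (n+1), (-(m:ℤ)^(p-1))^i * 1^(n-i) * (n.choose i : ℤ) := by
              rw [show (1 - (m:ℤ)^(p-1)) = (-(m:ℤ)^(p-1) + 1) by ring, add_pow]
            rw [hbin, Finset.mul_sum]
            apply Finset.sum_congr rfl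
            intro i _
            rw [pow_add, pow_mul, neg_pow]
            ring
          rw [hinner]
          have hf : (p:ℤ)^n ∣ (1 - (m:ℤ)^(p-1))^n :=
            pow_dvd_pow_of_dvd (fermat_int p hp m hm) n
          exact Dvd.dvd.mul_left hf _
      -- combine : p^n ∣ 2 * A
      have h2A : (p:ℤ)^n ∣ 2 * ∑ i ∈ range (n+1), (n.choose i : ℤ) * (-1)^i *
          ((1 - legendreSym 3 (p : ℤ) * (p : ℤ) ^ (i * (p - 1) + b)) * U (i * (p - 1) + b)) := by
        have hdiff : 2 * (∑ i ∈ range (n+1), (n.choose i : ℤ) * (-1)^i *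
            ((1 - legendreSym 3 (p : ℤ) * (p : ℤ) ^ (i * (p - 1) + b)) * U (i * (p - 1) + b)))
            - (∑ i ∈ range (n+1), (n.choose i : ℤ) * (-1)^i *
              (∑ m ∈ range (3 * p^(n+1)), if p ∣ m then 0 else psiw m * (m:ℤ)^(i * (p-1) + b)))
            = ∑ i ∈ range (n+1), (n.choose i : ℤ) * (-1)^i *
              (2*((1 - legendreSym 3 (p : ℤ) * (p:ℤ)^(i * (p-1) + b)) * U (i * (p-1) + b))
                - (∑ m ∈ range (3 * p^(n+1)), if p ∣ m then 0 else psiw m * (m:ℤ)^(i * (p-1) + b))) := by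
          rw [Finset.mul_sum, ← Finset.sum_sub_distrib]
          apply Finset.sum_congr rfl
          intro i _
          ring
        have hd2 : (p:ℤ)^n ∣ 2 * (∑ i ∈ range (n+1), (n.choose i : ℤ) * (-1)^i *
            ((1 - legendreSym 3 (p : ℤ) * (p : ℤ) ^ (i * (p - 1) + b)) * U (i * (p - 1) + b)))
            - (∑ i ∈ range (n+1), (n.choose i : ℤ) * (-1)^i *
              (∑ m ∈ range (3 * p^(n+1)), if p ∣ m then 0 else psiw m * (m:ℤ)^(i * (p-1) + b))) := by
          rw [hdiff]
          exact Finset.dvd_sum (fun i _ => Dvd.dvd.mul_left (key (i * (p-1) + b)) _)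
        have := dvd_add hd2 hT
        simpa using this
      -- remove the factor 2
      have hcop : IsCoprime ((p:ℤ)^n) (2:ℤ) := by
        have h1 : Nat.Coprime p 2 := (Nat.coprime_primes hp Nat.prime_two).mpr hp2
        have h2 : IsCoprime (p:ℤ) (2:ℤ) := by
          have h3 := Nat.isCoprime_iff_coprime.mpr h1
          exact_mod_cast h3
        exact h2.pow_left
      exact hcop.dvd_of_dvd_mul_left h2A
    obtain ⟨c, hc⟩ := main
    unfold PIntegral
    have hsum : (∑ i ∈ Finset.range (n + 1), (n.choose i : ℚ) * (-1) ^ i *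
        (((1 - legendreSym 3 (p : ℤ) * (p : ℤ) ^ (i * (p - 1) + b) : ℤ) : ℚ) *
          ((U (i * (p - 1) + b) : ℤ) : ℚ)))
        = (((p:ℤ)^n * c : ℤ) : ℚ) := by
      rw [← hc]
      push_cast
      rfl
    show ¬ p ∣ ((∑ i ∈ Finset.range (n + 1), (n.choose i : ℚ) * (-1) ^ i *
        (((1 - legendreSym 3 (p : ℤ) * (p : ℤ) ^ (i * (p - 1) + b) : ℤ) : ℚ) *
          ((U (i * (p - 1) + b) : ℤ) : ℚ))) / (p:ℚ)^n).den
    rw [hsum]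
    have hpQ : ((p:ℚ))^n ≠ 0 :=
      pow_ne_zero n (Nat.cast_ne_zero.mpr hp.pos.ne')
    have : (((p:ℤ)^n * c : ℤ) : ℚ) / (p:ℚ)^n = ((c:ℤ):ℚ) := by
      push_cast
      field_simp
    rw [this, Rat.den_intCast]
    exact hp1
end

section
/- Let p be an odd prime and let b be a nonnegative integer. Then the function f : ℕ → ℚ defined by f(k) = (1 - (-1)^{(p-1)/2} · p^{k(p-1)+b}) E_{k(p-1)+b} is a p-regular function, where E_n denotes the Euler numbers. -/
open Finset PowerSeries

section Aux

lemma telesc {R : Type*} [CommRing R] (m n : ℕ) (hm : Odd m) :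
    ∑ j ∈ range m, (-1:R)^j * (((m:R)-2*j)^n + ((m:R)-2*j-2)^n)
      = (m:R)^n + (-(m:R))^n := by
  have h := Finset.sum_range_sub' (fun j : ℕ => (-1:R)^j * ((m:R)-2*j)^n) m
  have e : ∀ j : ℕ, (-1:R)^j * (((m:R)-2*j)^n + ((m:R)-2*j-2)^n)
      = (fun j : ℕ => (-1:R)^j * ((m:R)-2*j)^n) j
        - (fun j : ℕ => (-1:R)^j * ((m:R)-2*j)^n) (j+1) := by
    intro j
    have : ((m:R) - 2*(j+1:ℕ)) = ((m:R) - 2*j - 2) := by push_cast; ring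
    simp only [this, pow_succ]
    ring
  rw [Finset.sum_congr rfl (fun j _ => e j), h]
  have hm' : (-1:R)^m = -1 := hm.neg_one_pow
  have : ((m:R) - 2*m) = -(m:R) := by ring
  simp [this, hm']

lemma even_reindex {M : Type*} [AddCommMonoid M] (h : ℕ → M) (a : ℕ) :
    ∑ i ∈ range (2*a+1), (if Even i then h i else 0) = ∑ r ∈ range (a+1), h (2*r) := by
  induction a with
  | zero => simp
  | succ a ih =>
      have : 2*(a+1)+1 = (2*a+1) + 1 + 1 := by ring
      rw [this, Finset.sum_range_succ, Finset.sum_range_succ, ih, Finset.sum_range_succ]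
      have h1 : ¬ Even (2*a+1) := by simp [Nat.even_add_one, parity_simps]
      have h2 : Even (2*a+1+1) := by simp [Nat.even_add_one, parity_simps]
      simp [h1, h2]
      rw [Finset.sum_range_succ, Finset.sum_range_succ]
      simp [mul_comm]
      ring_nf

/-- exponential generating function -/
noncomputable def egf (a : ℕ → ℚ) : PowerSeries ℚ := PowerSeries.mk fun n => a n / n.factorial

lemma egf_mul_coeff (a b : ℕ → ℚ) (n : ℕ) :
    (PowerSeries.coeff (R := ℚ) n) (egf a * egf b)
      = (∑ i ∈ range (n+1), (n.choose i : ℚ) * a i * b (n-i)) / n.factorial := by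
  rw [PowerSeries.coeff_mul, Finset.Nat.sum_antidiagonal_eq_sum_range_succ_mk]
  rw [Finset.sum_div]
  refine Finset.sum_congr rfl fun i hi => ?_
  simp only [egf, PowerSeries.coeff_mk]
  have hin : i ≤ n := Nat.lt_succ_iff.mp (Finset.mem_range.mp hi)
  have key : (n.choose i : ℚ) * i.factorial * (n-i).factorial = n.factorial := by
    exact_mod_cast congrArg (Nat.cast : ℕ → ℚ) (Nat.choose_mul_factorial_mul_factorial hin)
  have h1 : (i.factorial : ℚ) ≠ 0 := by positivity
  have h2 : ((n-i).factorial : ℚ) ≠ 0 := by positivity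
  have h3 : (n.factorial : ℚ) ≠ 0 := by positivity
  field_simp
  calc a i * b (n-i) * (n.factorial:ℚ) = a i * b (n-i) * ((n.choose i : ℚ) * i.factorial * (n-i).factorial) := by rw [key]
  _ = (n.choose i : ℚ) * a i * b (n-i) * ((i.factorial:ℚ) * (n-i).factorial) := by ring
  _ = a i * i.factorial * b (n-i) * (n-i).factorial * (n.choose i : ℚ) := by ring

/-- coefficients of cosh (as egf) -/
def Dfun : ℕ → ℚ := fun n => if Even n then 1 else 0

lemma rescale_egf (c : ℚ) (a : ℕ → ℚ) :
    PowerSeries.rescale c (egf a) = egf (fun n => c^n * a n) := by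
  ext n
  simp [PowerSeries.coeff_rescale, egf, mul_div_assoc]

lemma inner_cosh (a : ℚ) (n : ℕ) :
    ∑ i ∈ range (n+1), (n.choose i : ℚ) * a^i * Dfun (n-i)
      = ((a+1)^n + (a-1)^n)/2 := by
  have h2 : ∀ r : ℕ, (2:ℚ) * Dfun r = 1 + (-1)^r := by
    intro r
    rcases Nat.even_or_odd r with h | h
    · simp [Dfun, h, h.neg_one_pow]; norm_num
    · simp [Dfun, h.neg_one_pow, Nat.not_even_iff_odd.mpr h]
  have key : 2 * ∑ i ∈ range (n+1), (n.choose i : ℚ) * a^i * Dfun (n-i)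
      = (a+1)^n + (a-1)^n := by
    rw [Finset.mul_sum]
    have : ∀ i ∈ range (n+1), 2 * ((n.choose i : ℚ) * a^i * Dfun (n-i))
        = (n.choose i : ℚ) * a^i * (1 + (-1)^(n-i)) := by
      intro i _
      rw [show 2 * ((n.choose i : ℚ) * a^i * Dfun (n-i)) = (n.choose i : ℚ) * a^i * (2 * Dfun (n-i)) by ring, h2]
    rw [Finset.sum_congr rfl this]
    have e1 := add_pow a 1 n
    have e2 := add_pow a (-1) n
    simp only [one_pow, mul_one] at e1
    rw [e1, show (a-1)^n = ∑ i ∈ range (n+1), a^i * (-1)^(n-i) * (n.choose i : ℚ) from by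
      rw [sub_eq_add_neg]; exact e2]
    rw [← Finset.sum_add_distrib]
    refine Finset.sum_congr rfl fun i _ => ?_
    ring
  linarith [key]

lemma cosh_conv (m : ℕ) (hm : Odd m) (n : ℕ) :
    ∑ i ∈ range (n+1), (n.choose i : ℚ)
        * (∑ j ∈ range m, (-1:ℚ)^j * ((m:ℚ)-1-2*j)^i) * Dfun (n-i)
      = (m:ℚ)^n * Dfun n := by
  have swap : ∑ i ∈ range (n+1), (n.choose i : ℚ)
        * (∑ j ∈ range m, (-1:ℚ)^j * ((m:ℚ)-1-2*j)^i) * Dfun (n-i)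
      = ∑ j ∈ range m, (-1:ℚ)^j *
          (∑ i ∈ range (n+1), (n.choose i : ℚ) * ((m:ℚ)-1-2*j)^i * Dfun (n-i)) := by
    have step : ∀ i ∈ range (n+1), (n.choose i : ℚ)
        * (∑ j ∈ range m, (-1:ℚ)^j * ((m:ℚ)-1-2*j)^i) * Dfun (n-i)
        = ∑ j ∈ range m, (-1:ℚ)^j * ((n.choose i : ℚ) * ((m:ℚ)-1-2*j)^i * Dfun (n-i)) := by
      intro i _
      rw [Finset.mul_sum, Finset.sum_mul]
      exact Finset.sum_congr rfl fun j _ => by ring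
    rw [Finset.sum_congr rfl step, Finset.sum_comm]
    exact Finset.sum_congr rfl fun j _ => by rw [Finset.mul_sum]
  rw [swap]
  have inner : ∀ j ∈ range m, (-1:ℚ)^j *
          (∑ i ∈ range (n+1), (n.choose i : ℚ) * ((m:ℚ)-1-2*j)^i * Dfun (n-i))
      = ((-1:ℚ)^j * ((((m:ℚ)-2*j)^n + ((m:ℚ)-2*j-2)^n)))/2 := by
    intro j _
    rw [inner_cosh]
    have e1 : ((m:ℚ)-1-2*j) + 1 = (m:ℚ)-2*j := by ring
    have e2 : ((m:ℚ)-1-2*j) - 1 = (m:ℚ)-2*j-2 := by ring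
    rw [e1, e2]; ring
  rw [Finset.sum_congr rfl inner, ← Finset.sum_div,
    Finset.sum_congr rfl (fun j _ => rfl), telesc m n hm]
  rcases Nat.even_or_odd n with h | h
  · rw [h.neg_pow]; simp [Dfun, h]
  · rw [h.neg_pow]; simp [Dfun, Nat.not_even_iff_odd.mpr h]

/-- rational W -/
noncomputable def Wq (m : ℕ) (i : ℕ) : ℚ := ∑ j ∈ range m, (-1:ℚ)^j * ((m:ℚ)-1-2*j)^i

lemma WD_mul (m : ℕ) (hm : Odd m) :
    egf (Wq m) * egf Dfun = PowerSeries.rescale (m:ℚ) (egf Dfun) := by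
  ext n
  rw [egf_mul_coeff, PowerSeries.coeff_rescale]
  simp only [egf, PowerSeries.coeff_mk]
  simp only [Wq]
  rw [cosh_conv m hm n]
  ring

lemma ED_mul (E : ℕ → ℤ) (hE0 : E 0 = 1)
    (hEodd : ∀ n : ℕ, 1 ≤ n → E (2 * n - 1) = 0)
    (hEsum : ∀ n : ℕ, 1 ≤ n →
      ∑ r ∈ Finset.range (n + 1), ((2 * n).choose (2 * r) : ℤ) * E (2 * r) = 0) :
    egf (fun n => (E n : ℚ)) * egf Dfun = 1 := by
  ext n
  rw [egf_mul_coeff, PowerSeries.coeff_one]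
  rcases Nat.eq_zero_or_pos n with rfl | hn
  · simp [hE0, Dfun]
  · rw [if_neg hn.ne']
    rw [div_eq_zero_iff]
    left
    have hEoddZ : ∀ i : ℕ, Odd i → E i = 0 := by
      intro i ⟨r, hr⟩
      have := hEodd (r+1) (by omega)
      rwa [show 2*(r+1)-1 = i by omega] at this
    rcases Nat.even_or_odd n with he | ho
    · obtain ⟨a, ha⟩ := he
      have ha' : n = 2*a := by omega
      have ha1 : 1 ≤ a := by omega
      subst ha'
      have step : ∀ i ∈ range (2*a+1), ((2*a).choose i : ℚ) * (E i : ℚ) * Dfun (2*a-i)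
          = if Even i then (((2*a).choose i : ℚ) * (E i : ℚ)) else 0 := by
        intro i hi
        rcases Nat.even_or_odd i with h | h
        · have : Even (2*a - i) := by
            obtain ⟨c, hc⟩ := h
            have hi' : i ≤ 2*a := Nat.lt_succ_iff.mp (Finset.mem_range.mp hi)
            exact ⟨a - c, by omega⟩
          simp [Dfun, this, if_pos h]
        · simp [hEoddZ i h, Nat.not_even_iff_odd.mpr h]
      rw [Finset.sum_congr rfl step, even_reindex (fun i => ((2*a).choose i : ℚ) * (E i : ℚ)) a]
      have := hEsum a ha1
      have : ((∑ r ∈ Finset.range (a + 1), ((2 * a).choose (2 * r) : ℤ) * E (2 * r) : ℤ) : ℚ) = 0 := by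
        rw [this]; rfl
      push_cast at this
      rw [← this]
    · apply Finset.sum_eq_zero
      intro i hi
      rcases Nat.even_or_odd i with h | h
      · have : ¬ Even (n - i) := by
          have hi' : i ≤ n := Nat.lt_succ_iff.mp (Finset.mem_range.mp hi)
          intro hc
          have h2 := (Nat.even_sub hi').mp hc
          exact (Nat.not_even_iff_odd.mpr ho) (h2.mpr h)
        simp [Dfun, this]
      · simp [hEoddZ i h]

lemma main_ps (E : ℕ → ℤ) (hE0 : E 0 = 1)
    (hEodd : ∀ n : ℕ, 1 ≤ n → E (2 * n - 1) = 0)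
    (hEsum : ∀ n : ℕ, 1 ≤ n →
      ∑ r ∈ Finset.range (n + 1), ((2 * n).choose (2 * r) : ℤ) * E (2 * r) = 0)
    (m : ℕ) (hm : Odd m) :
    egf (fun n => (E n : ℚ)) = egf (Wq m) * PowerSeries.rescale (m:ℚ) (egf (fun n => (E n : ℚ))) := by
  have hED := ED_mul E hE0 hEodd hEsum
  have hWD := WD_mul m hm
  have hD0 : egf Dfun ≠ 0 := by
    intro hc
    have : (PowerSeries.coeff (R := ℚ) 0) (egf Dfun) = 0 := by rw [hc]; simp
    simp [egf, Dfun] at this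
  apply mul_right_cancel₀ hD0
  rw [hED]
  have : egf (Wq m) * PowerSeries.rescale (m:ℚ) (egf fun n => (E n : ℚ)) * egf Dfun
      = PowerSeries.rescale (m:ℚ) (egf fun n => (E n : ℚ)) * (egf (Wq m) * egf Dfun) := by ring
  rw [this, hWD, ← map_mul, hED, map_one]

/-- the key integer identity -/
lemma main_ident (E : ℕ → ℤ) (hE0 : E 0 = 1)
    (hEodd : ∀ n : ℕ, 1 ≤ n → E (2 * n - 1) = 0)
    (hEsum : ∀ n : ℕ, 1 ≤ n →
      ∑ r ∈ Finset.range (n + 1), ((2 * n).choose (2 * r) : ℤ) * E (2 * r) = 0)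
    (m : ℕ) (hm : Odd m) (N : ℕ) :
    E N = ∑ i ∈ range (N+1), (N.choose i : ℤ)
        * (∑ j ∈ range m, (-1:ℤ)^j * ((m:ℤ)-1-2*j)^i) * (m:ℤ)^(N-i) * E (N-i) := by
  have h := congrArg (PowerSeries.coeff (R := ℚ) N) (main_ps E hE0 hEodd hEsum m hm)
  rw [rescale_egf, egf_mul_coeff] at h
  simp only [egf, PowerSeries.coeff_mk] at h
  rw [div_eq_div_iff (by positivity) (by positivity : (N.factorial:ℚ) ≠ 0)] at h
  have h2 : ((E N : ℤ) : ℚ) = ∑ i ∈ range (N+1), (N.choose i : ℚ) * Wq m i * ((m:ℚ)^(N-i) * (E (N-i) : ℚ)) := by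
    have hfac : (N.factorial:ℚ) ≠ 0 := by positivity
    field_simp at h
    simpa only [mul_assoc] using h
  have h3 : ((E N : ℤ) : ℚ) = ((∑ i ∈ range (N+1), (N.choose i : ℤ)
        * (∑ j ∈ range m, (-1:ℤ)^j * ((m:ℤ)-1-2*j)^i) * (m:ℤ)^(N-i) * E (N-i) : ℤ) : ℚ) := by
    rw [h2]
    push_cast [Wq]
    exact Finset.sum_congr rfl fun i _ => by ring
  exact_mod_cast h3

def Wz (m : ℕ) (i : ℕ) : ℤ := ∑ j ∈ range m, (-1:ℤ)^j * ((m:ℤ)-1-2*(j:ℤ))^i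

lemma step1 (E : ℕ → ℤ) (hE0 : E 0 = 1)
    (hEodd : ∀ n : ℕ, 1 ≤ n → E (2 * n - 1) = 0)
    (hEsum : ∀ n : ℕ, 1 ≤ n →
      ∑ r ∈ Finset.range (n + 1), ((2 * n).choose (2 * r) : ℤ) * E (2 * r) = 0)
    (p : ℕ) (hodd : Odd p) (n L N : ℕ) (hL : n ≤ L) :
    (p:ℤ)^n ∣ E N - Wz (p^L) N := by
  have hm : Odd (p^L) := hodd.pow
  have h := main_ident E hE0 hEodd hEsum (p^L) hm N
  rw [Finset.sum_range_succ] at h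
  simp only [Nat.choose_self, Nat.sub_self, pow_zero, hE0, Nat.cast_one, one_mul, mul_one] at h
  have : E N - Wz (p^L) N = ∑ i ∈ range N, (N.choose i : ℤ)
        * (∑ j ∈ range (p^L), (-1:ℤ)^j * ((p^L:ℤ)-1-2*j)^i) * ((p^L:ℕ):ℤ)^(N-i) * E (N-i) := by
    rw [Wz]
    push_cast at h ⊢
    linarith [h]
  rw [this]
  apply Finset.dvd_sum
  intro i hi
  have hiN : i < N := Finset.mem_range.mp hi
  have : ((p^L:ℕ):ℤ)^(N-i) = (p:ℤ)^(L*(N-i)) := by push_cast [← pow_mul]; ring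
  rw [this]
  have hdvd : (p:ℤ)^n ∣ (p:ℤ)^(L*(N-i)) := pow_dvd_pow _ (by
    have : 1 ≤ N - i := by omega
    calc n ≤ L := hL
    _ ≤ L * (N-i) := Nat.le_mul_of_pos_right _ (by omega))
  exact ((hdvd.mul_left _).mul_right _)

lemma step2 (p : ℕ) (hp : p.Prime) (hodd : Odd p) (L : ℕ) (hL : 1 ≤ L) (N : ℕ) :
    Wz (p^L) N
      = (∑ j ∈ (range (p^L)).filter (fun j => ¬ p ∣ (2*j+1)),
          (-1:ℤ)^j * (((p^L:ℕ):ℤ)-1-2*(j:ℤ))^N)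
        + (-1)^((p-1)/2) * (p:ℤ)^N * Wz (p^(L-1)) N := by
  have hp3 : 3 ≤ p := by
    obtain ⟨t, ht⟩ := hodd
    have := hp.two_le
    omega
  have hhalf : 2*((p-1)/2) = p - 1 := by obtain ⟨t, ht⟩ := hodd; omega
  have hpl : p * p^(L-1) = p^L := by
    rw [← pow_succ']
    congr 1
    omega
  have key : ∀ j, j ∈ (range (p^L)).filter (fun j => ¬¬ p ∣ (2*j+1)) →
      (p-1)/2 + p * (j / p) = j := by
    intro j hj
    simp only [Finset.mem_filter, Finset.mem_range, not_not] at hj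
    have hmod : j % p = (p-1)/2 := by
      have hcong : (2*(j%p)+1) ≡ (2*j+1) [MOD p] :=
        ((Nat.mod_modEq j p).mul_left 2).add_right 1
      have h1 : p ∣ 2*(j % p)+1 :=
        (Nat.modEq_zero_iff_dvd).mp (hcong.trans ((Nat.modEq_zero_iff_dvd).mpr hj.2))
      have hlt : j % p < p := Nat.mod_lt _ hp.pos
      obtain ⟨u, hu⟩ := h1
      have hu2 : u < 2 := by
        by_contra hc
        push_neg at hc
        have : p * 2 ≤ p * u := Nat.mul_le_mul_left p hc
        omega
      interval_cases u <;> omega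
    conv_rhs => rw [← Nat.div_add_mod j p]
    omega
  rw [Wz, ← Finset.sum_filter_add_sum_filter_not (range (p^L)) (fun j => ¬ p ∣ (2*j+1))]
  congr 1
  rw [Wz, Finset.mul_sum]
  refine Finset.sum_nbij' (i := fun j => j / p) (j := fun j' => (p-1)/2 + p * j')
    ?_ ?_ ?_ ?_ ?_
  · intro j hj
    simp only [Finset.mem_filter, Finset.mem_range, not_not] at hj
    rw [Finset.mem_range]
    exact Nat.div_lt_of_lt_mul (by rw [hpl]; exact hj.1)
  · intro j' hj'
    rw [Finset.mem_range] at hj'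
    simp only [Finset.mem_filter, Finset.mem_range, not_not]
    constructor
    · have h1 : p * (j'+1) ≤ p * p^(L-1) := Nat.mul_le_mul_left p (by omega)
      have h2 : p * (j'+1) = p*j' + p := by ring
      omega
    · refine ⟨2*j'+1, ?_⟩
      have h6 : 2*((p-1)/2) + (2*(p*j') + 1) = 2*((p-1)/2 + p*j') + 1 := by ring
      rw [← h6, hhalf]
      have h8 : p*(2*j'+1) = 2*(p*j') + p := by ring
      rw [h8]
      omega
  · exact key
  · intro j' hj'
    have : ((p-1)/2 + p * j') / p = j' := by
      rw [Nat.add_mul_div_left _ _ hp.pos, Nat.div_eq_of_lt (by omega)]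
      omega
    simp [this]
  · intro j hj
    have hk := key j hj
    simp only [Finset.mem_filter, Finset.mem_range, not_not] at hj
    set q := j / p with hq
    have e1 : (j:ℤ) = (((p-1)/2 : ℕ):ℤ) + (p:ℤ)*(q:ℤ) := by exact_mod_cast (hk.symm)
    have e2 : 2*((((p-1)/2 : ℕ)):ℤ) = (p:ℤ) - 1 := by
      obtain ⟨t, ht⟩ := hodd
      omega
    have e3 : ((p^L:ℕ):ℤ) = (p:ℤ)*((p^(L-1):ℕ):ℤ) := by exact_mod_cast hpl.symm
    have eval : ((p^L:ℕ):ℤ) - 1 - 2*(j:ℤ) = (p:ℤ) * (((p^(L-1):ℕ):ℤ) - 1 - 2*(q:ℤ)) := by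
      rw [e1, e3]
      linear_combination -e2
    have esign : (-1:ℤ)^j = (-1)^((p-1)/2) * (-1)^q := by
      conv_lhs => rw [← hk]
      rw [pow_add, pow_mul, hodd.neg_one_pow]
    rw [eval, esign, mul_pow]
    ring

lemma step3 (E : ℕ → ℤ) (hE0 : E 0 = 1)
    (hEodd : ∀ n : ℕ, 1 ≤ n → E (2 * n - 1) = 0)
    (hEsum : ∀ n : ℕ, 1 ≤ n →
      ∑ r ∈ Finset.range (n + 1), ((2 * n).choose (2 * r) : ℤ) * E (2 * r) = 0)
    (p : ℕ) (hp : p.Prime) (hodd : Odd p) (n N : ℕ) :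
    (p:ℤ)^n ∣ (1 - (-1:ℤ)^((p-1)/2) * (p:ℤ)^N) * E N
      - ∑ j ∈ (range (p^(n+1))).filter (fun j => ¬ p ∣ (2*j+1)),
          (-1:ℤ)^j * (((p^(n+1):ℕ):ℤ)-1-2*(j:ℤ))^N := by
  have d1 := step1 E hE0 hEodd hEsum p hodd n (n+1) N (by omega)
  have d3 := step1 E hE0 hEodd hEsum p hodd n n N le_rfl
  have d2 := step2 p hp hodd (n+1) (by omega) N
  rw [show (n+1) - 1 = n from rfl] at d2
  have heq : (1 - (-1:ℤ)^((p-1)/2) * (p:ℤ)^N) * E N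
      - ∑ j ∈ (range (p^(n+1))).filter (fun j => ¬ p ∣ (2*j+1)),
          (-1:ℤ)^j * (((p^(n+1):ℕ):ℤ)-1-2*(j:ℤ))^N
      = (E N - Wz (p^(n+1)) N)
        + (-1:ℤ)^((p-1)/2) * (p:ℤ)^N * (Wz (p^n) N - E N) := by
    rw [d2]; ring
  rw [heq]
  exact dvd_add d1 (Dvd.dvd.mul_left (by rw [show Wz (p^n) N - E N = -(E N - Wz (p^n) N) by ring]; exact d3.neg_right) _)

lemma fermat_dvd (p : ℕ) (hp : p.Prime) (a : ℤ) (ha : ¬ (p:ℤ) ∣ a) : (p:ℤ) ∣ 1 - a^(p-1) := by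
  haveI := Fact.mk hp
  have h : ((1 - a^(p-1) : ℤ) : ZMod p) = 0 := by
    push_cast
    rw [ZMod.pow_card_sub_one_eq_one
      (fun h0 => ha ((ZMod.intCast_zmod_eq_zero_iff_dvd a p).mp h0))]
    ring
  exact (ZMod.intCast_zmod_eq_zero_iff_dvd _ p).mp h

lemma filter_not_dvd (p L j : ℕ) (hL : 1 ≤ L) (h : ¬ p ∣ (2*j+1)) :
    ¬ (p:ℤ) ∣ (((p^L:ℕ):ℤ)-1-2*(j:ℤ)) := by
  intro hc
  apply h
  have h1 : (p:ℤ) ∣ ((p^L:ℕ):ℤ) := by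
    exact_mod_cast Int.natCast_dvd_natCast.mpr (dvd_pow_self p (by omega))
  have h2 : (p:ℤ) ∣ ((2*j+1 : ℕ):ℤ) := by
    have : ((2*j+1 : ℕ):ℤ) = ((p^L:ℕ):ℤ) - (((p^L:ℕ):ℤ)-1-2*(j:ℤ)) := by push_cast; ring
    rw [this]
    exact dvd_sub h1 hc
  exact_mod_cast h2

end Aux

/-- for an odd prime `p` and `b ≥ 0`, the function
`f(k) = (1 - (-1)^{(p-1)/2} p^{k(p-1)+b}) E_{k(p-1)+b}` is a `p`-regular function,
where `E_n` are the Euler numbers. -/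
theorem stmt_19 (E : ℕ → ℤ) (hE0 : E 0 = 1)
    (hEodd : ∀ n : ℕ, 1 ≤ n → E (2 * n - 1) = 0)
    (hEsum : ∀ n : ℕ, 1 ≤ n →
      ∑ r ∈ Finset.range (n + 1), ((2 * n).choose (2 * r) : ℤ) * E (2 * r) = 0)
    (p : ℕ) (hp : p.Prime) (hp2 : p ≠ 2) (b : ℕ) :
    PRegular p (fun k : ℕ =>
      ((1 - (-1) ^ ((p - 1) / 2) * (p : ℤ) ^ (k * (p - 1) + b) : ℤ) : ℚ) *
        (E (k * (p - 1) + b) : ℚ)) := by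
  have hodd : Odd p := hp.odd_of_ne_two hp2
  have hint : ∀ k : ℕ,
      ((1 - (-1) ^ ((p - 1) / 2) * (p : ℤ) ^ (k * (p - 1) + b) : ℤ) : ℚ) *
        (E (k * (p - 1) + b) : ℚ)
      = (((1 - (-1) ^ ((p - 1) / 2) * (p : ℤ) ^ (k * (p - 1) + b)) * E (k * (p - 1) + b) : ℤ) : ℚ) := by
    intro k
    push_cast
    ring
  constructor
  · intro k
    simp only []
    rw [PIntegral, hint k, Rat.den_intCast, Nat.dvd_one]
    exact hp.ne_one
  · intro n hn
    -- the integer sum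
    set Nk : ℕ → ℕ := fun k => k * (p-1) + b with hNk
    set A : ℤ := ∑ k ∈ range (n+1), (n.choose k : ℤ) * (-1)^k
        * ((1 - (-1:ℤ)^((p-1)/2) * (p:ℤ)^(Nk k)) * E (Nk k)) with hA
    set S : Finset ℕ := (range (p^(n+1))).filter (fun j => ¬ p ∣ (2*j+1)) with hS
    set a : ℕ → ℤ := fun j => ((p^(n+1):ℕ):ℤ)-1-2*(j:ℤ) with ha
    -- claim 2 : congruence to V-sums
    have claim2 : (p:ℤ)^n ∣ A - ∑ k ∈ range (n+1), (n.choose k : ℤ) * (-1)^k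
        * (∑ j ∈ S, (-1:ℤ)^j * (a j)^(Nk k)) := by
      rw [hA, ← Finset.sum_sub_distrib]
      apply Finset.dvd_sum
      intro k _
      rw [show (n.choose k : ℤ) * (-1)^k * ((1 - (-1:ℤ)^((p-1)/2) * (p:ℤ)^(Nk k)) * E (Nk k))
          - (n.choose k : ℤ) * (-1)^k * (∑ j ∈ S, (-1:ℤ)^j * (a j)^(Nk k))
        = (n.choose k : ℤ) * (-1)^k * ((1 - (-1:ℤ)^((p-1)/2) * (p:ℤ)^(Nk k)) * E (Nk k)
            - ∑ j ∈ S, (-1:ℤ)^j * (a j)^(Nk k)) from by ring]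
      exact Dvd.dvd.mul_left (step3 E hE0 hEodd hEsum p hp hodd n (Nk k)) _
    -- claim 3 : the V-sum equals binomial expression
    have claim3 : ∑ k ∈ range (n+1), (n.choose k : ℤ) * (-1)^k
        * (∑ j ∈ S, (-1:ℤ)^j * (a j)^(Nk k))
        = ∑ j ∈ S, (-1:ℤ)^j * (a j)^b * (-((a j)^(p-1)) + 1)^n := by
      simp only [Finset.mul_sum]
      rw [Finset.sum_comm]
      refine Finset.sum_congr rfl fun j _ => ?_
      rw [add_pow (-((a j)^(p-1))) 1 n, Finset.mul_sum]
      refine Finset.sum_congr rfl fun k _ => ?_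
      have hpow : (a j) ^ (Nk k) = (((a j)^(p-1))^k) * (a j)^b := by
        rw [hNk]
        simp only []
        rw [pow_add, pow_mul']
      rw [hpow, neg_pow, one_pow]
      ring
    -- claim 4 : divisibility of binomial expression
    have claim4 : (p:ℤ)^n ∣ ∑ j ∈ S, (-1:ℤ)^j * (a j)^b * (-((a j)^(p-1)) + 1)^n := by
      apply Finset.dvd_sum
      intro j hj
      apply Dvd.dvd.mul_left
      rw [show -((a j)^(p-1)) + 1 = 1 - (a j)^(p-1) from by ring]
      refine pow_dvd_pow_of_dvd (fermat_dvd p hp (a j) ?_) n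
      rw [ha]
      refine filter_not_dvd p (n+1) j (by omega) ?_
      rw [hS, Finset.mem_filter] at hj
      exact hj.2
    have hdvdA : (p:ℤ)^n ∣ A := by
      have h := dvd_add claim2 (claim3 ▸ claim4)
      rwa [sub_add_cancel] at h
    obtain ⟨B, hB⟩ := hdvdA
    have hsum : (∑ i ∈ Finset.range (n + 1), (n.choose i : ℚ) * (-1) ^ i *
        (((1 - (-1) ^ ((p - 1) / 2) * (p : ℤ) ^ (i * (p - 1) + b) : ℤ) : ℚ) *
          (E (i * (p - 1) + b) : ℚ))) = (A:ℚ) := by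
      rw [hA]
      push_cast
      refine Finset.sum_congr rfl fun i _ => ?_
      simp only [hNk]
    have hpq : ((p:ℚ))^n ≠ 0 := by
      have := hp.pos
      positivity
    have hfinal : (∑ i ∈ Finset.range (n + 1), (n.choose i : ℚ) * (-1) ^ i *
        (((1 - (-1) ^ ((p - 1) / 2) * (p : ℤ) ^ (i * (p - 1) + b) : ℤ) : ℚ) *
          (E (i * (p - 1) + b) : ℚ))) / (p:ℚ)^n = (B:ℚ) := by
      rw [hsum, hB]
      push_cast
      rw [mul_comm, mul_div_assoc, div_self hpq, mul_one]
    rw [PIntegral]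
    simp only []
    rw [hfinal, Rat.den_intCast, Nat.dvd_one]
    exact hp.ne_one
end
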